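/- arXiv:2503.01589 — 10 statements merged into one kernel-verified Lean document; each statement's English description precedes it below -/
import Mathlib

section
/- Let Ω : [0,1] → [−1,1] be continuous. For each n ≥ 1 define the random step function Ω_n by Ω_n(x) = Ω(U_{(j)}^n) for x ∈ I_j^n, j = 1,…,n. Then almost surely sup_{x ∈ [0,1)} |Ω_n(x) − Ω(x)| → 0 as n → ∞. -/
open MeasureTheory ProbabilityTheory

/-- The `j`-th order statistic (`j = 0, …, n−1`, zero-based) of the sample `U 0 ω, …, U (n−1) ω`:
the `j`-th entry of the nondecreasing rearrangement. -/
noncomputable def orderStat {α : Type*} (U : ℕ → α → ℝ) (n : ℕ) (j : Fin n) (ω : α) : ℝ :=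
  (((Multiset.range n).map (fun i => U i ω)).sort (· ≤ ·)).get
    ⟨j, by simp⟩

section aux

open Filter Finset Topology

lemma os_empirical {α : Type*} [MeasureSpace α] [IsProbabilityMeasure (ℙ : Measure α)]
    (U : ℕ → α → ℝ) (h_meas : ∀ i, Measurable (U i))
    (h_indep : iIndepFun U ℙ)
    (h_unif : ∀ i, Measure.map (U i) ℙ = volume.restrict (Set.Icc (0:ℝ) 1))
    (q : ℝ) (hq0 : 0 ≤ q) (hq1 : q ≤ 1) :
    ∀ᵐ ω ∂(ℙ : Measure α), Tendsto
      (fun n => (((Finset.range n).filter (fun i => U i ω ≤ q)).card : ℝ) / n) atTop (𝓝 q) := by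
  classical
  set f : ℝ → ℝ := Set.indicator (Set.Iic q) (fun _ => 1) with hf_def
  have hf : Measurable f := (measurable_const.indicator measurableSet_Iic)
  set X : ℕ → α → ℝ := fun i ω => f (U i ω) with hX_def
  have hint : Integrable (X 0) ℙ := by
    have : X 0 = Set.indicator (U 0 ⁻¹' Set.Iic q) (fun _ => 1) := by
      ext ω
      simp [hX_def, hf_def, Set.indicator, Set.mem_preimage]
    rw [this]
    exact (integrable_const 1).indicator ((h_meas 0) measurableSet_Iic)
  have hindep : Pairwise (Function.onFun (IndepFun · · (ℙ : Measure α)) X) := by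
    intro i j hij
    exact (h_indep.indepFun hij).comp hf hf
  have hident : ∀ i, IdentDistrib (X i) (X 0) ℙ ℙ := by
    intro i
    have h1 : IdentDistrib (U i) (U 0) ℙ ℙ :=
      ⟨(h_meas i).aemeasurable, (h_meas 0).aemeasurable, by rw [h_unif, h_unif]⟩
    exact h1.comp hf
  have hexp : (ℙ : Measure α)[X 0] = q := by
    have : X 0 = Set.indicator (U 0 ⁻¹' Set.Iic q) (fun _ => (1:ℝ)) := by
      ext ω
      simp [hX_def, hf_def, Set.indicator, Set.mem_preimage]
    rw [this, integral_indicator_const _ ((h_meas 0) measurableSet_Iic)]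
    have hm : (ℙ : Measure α) (U 0 ⁻¹' Set.Iic q) = ENNReal.ofReal q := by
      rw [← Measure.map_apply (h_meas 0) measurableSet_Iic, h_unif,
        Measure.restrict_apply measurableSet_Iic]
      have : Set.Iic q ∩ Set.Icc 0 1 = Set.Icc 0 q := by
        ext x
        constructor
        · rintro ⟨h1, h2, h3⟩; exact ⟨h2, h1⟩
        · rintro ⟨h1, h2⟩; exact ⟨h2, h1, h2.trans hq1⟩
      rw [this, Real.volume_Icc]
      simp
    rw [measureReal_def, hm]
    simp [ENNReal.toReal_ofReal hq0]
  have := strong_law_ae_real X hint hindep hident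
  rw [hexp] at this
  filter_upwards [this] with ω hω
  convert hω using 2 with n
  congr 1
  have h1 : ∀ i ∈ Finset.range n, X i ω = if U i ω ≤ q then (1:ℝ) else 0 := by
    intro i _
    simp [hX_def, hf_def, Set.indicator]
  rw [Finset.sum_congr rfl h1, Finset.sum_boole]

lemma os_listA (l : List ℝ) (hs : l.Pairwise (· ≤ ·)) (j : ℕ) (hj : j < l.length) :
    j + 1 ≤ l.countP (fun x => decide (x ≤ l.get ⟨j, hj⟩)) := by
  set t := l.get ⟨j, hj⟩ with ht
  have h1 : (l.take (j+1)).countP (fun x => decide (x ≤ t)) = (l.take (j+1)).length := by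
    rw [List.countP_eq_length]
    intro a ha
    rw [List.mem_take_iff_getElem] at ha
    obtain ⟨i, hi, rfl⟩ := ha
    have hi' : i < l.length := lt_of_lt_of_le (lt_min_iff.mp hi).2 le_rfl
    have : l.get ⟨i, hi'⟩ ≤ l.get ⟨j, hj⟩ := by
      apply hs.rel_get_of_le
      simp only [Fin.mk_le_mk]
      omega
    simpa [ht] using this
  have h2 : (l.take (j+1)).length = j + 1 := by
    rw [List.length_take]; omega
  calc j + 1 = (l.take (j+1)).countP (fun x => decide (x ≤ t)) := by rw [h1, h2]
    _ ≤ l.countP (fun x => decide (x ≤ t)) := (l.take_sublist (j+1)).countP_le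

lemma os_listB (l : List ℝ) (hs : l.Pairwise (· ≤ ·)) (j : ℕ) (hj : j < l.length) :
    l.countP (fun x => decide (x < l.get ⟨j, hj⟩)) ≤ j := by
  set t := l.get ⟨j, hj⟩ with ht
  have hsplit : l.countP (fun x => decide (x < t)) =
      (l.take j).countP (fun x => decide (x < t)) +
      (l.drop j).countP (fun x => decide (x < t)) := by
    rw [← List.countP_append, List.take_append_drop]
  have h0 : (l.drop j).countP (fun x => decide (x < t)) = 0 := by
    rw [List.countP_eq_zero]
    intro a ha
    rw [List.mem_drop_iff_getElem] at ha
    obtain ⟨i, hi, rfl⟩ := ha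
    have hi' : j + i < l.length := by omega
    have : l.get ⟨j, hj⟩ ≤ l.get ⟨j + i, hi'⟩ := by
      apply hs.rel_get_of_le
      simp only [Fin.mk_le_mk]
      omega
    simp only [decide_eq_true_eq, List.get_eq_getElem] at this ⊢
    exact not_lt.mpr this
  rw [hsplit, h0, add_zero]
  calc (l.take j).countP (fun x => decide (x < t)) ≤ (l.take j).length :=
        List.countP_le_length
    _ ≤ j := by rw [List.length_take]; omega

lemma os_bridge (v : ℕ → ℝ) (n : ℕ) (p : ℝ → Prop) [DecidablePred p] :
    (((Multiset.range n).map v).sort (· ≤ ·)).countP (fun x => decide (p x)) =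
      ((Finset.range n).filter (fun i => p (v i))).card := by
  rw [← Multiset.coe_countP, Multiset.sort_eq, Multiset.countP_map]
  rfl

lemma os_mem {α : Type*} (U : ℕ → α → ℝ) (n : ℕ) (j : Fin n) (ω : α)
    (hv : ∀ i, U i ω ∈ Set.Icc (0:ℝ) 1) :
    orderStat U n j ω ∈ Set.Icc (0:ℝ) 1 := by
  have hmem : orderStat U n j ω ∈
      ((Multiset.range n).map (fun i => U i ω)).sort (· ≤ ·) := List.get_mem _ _
  rw [Multiset.mem_sort, Multiset.mem_map] at hmem
  obtain ⟨i, _, hvi⟩ := hmem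
  rw [← hvi]; exact hv i

lemma os_order_close {α : Type*} (U : ℕ → α → ℝ) (n : ℕ) (j : Fin n) (ω : α)
    (m : ℕ) (hm : 1 ≤ m)
    (η : ℝ)
    (hv : ∀ i, U i ω ∈ Set.Icc (0:ℝ) 1)
    (hgrid : ∀ k ≤ m, |(((Finset.range n).filter
        (fun i => U i ω ≤ (k:ℝ)/m)).card : ℝ)/n - (k:ℝ)/m| < η) :
    |orderStat U n j ω - (j:ℝ)/n| ≤ η + 2/m := by
  classical
  set v : ℕ → ℝ := fun i => U i ω with hv_def
  set l : List ℝ := ((Multiset.range n).map v).sort (· ≤ ·) with hl_def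
  have hlen : l.length = n := by simp [hl_def]
  have hn : 0 < n := j.pos
  have hnR : (0:ℝ) < n := by exact_mod_cast hn
  have hmR : (0:ℝ) < m := by exact_mod_cast hm
  have hj : (j : ℕ) < l.length := by rw [hlen]; exact j.isLt
  set t : ℝ := orderStat U n j ω with ht_def
  have htl : t = l.get ⟨j, hj⟩ := rfl
  have hsorted : l.Pairwise (· ≤ ·) := Multiset.pairwise_sort _ _
  have ht01 : t ∈ Set.Icc (0:ℝ) 1 := os_mem U n j ω hv
  have hη0 : 0 ≤ η := le_trans (abs_nonneg _) (hgrid m le_rfl).le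
  set C : ℝ → ℕ := fun s => ((Finset.range n).filter (fun i => v i ≤ s)).card with hC_def
  have hCmono : ∀ a b : ℝ, a ≤ b → C a ≤ C b := by
    intro a b hab
    apply Finset.card_le_card
    intro i hi
    rw [Finset.mem_filter] at hi ⊢
    exact ⟨hi.1, le_trans hi.2 hab⟩
  have hCt : (j : ℕ) + 1 ≤ C t := by
    have := os_listA l hsorted j hj
    rwa [← htl, os_bridge v n (fun x => x ≤ t)] at this
  have hCj : ∀ s : ℝ, s < t → C s ≤ j := by
    intro s hs
    have h1 : C s ≤ ((Finset.range n).filter (fun i => v i < t)).card := by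
      apply Finset.card_le_card
      intro i hi
      rw [Finset.mem_filter] at hi ⊢
      exact ⟨hi.1, lt_of_le_of_lt hi.2 hs⟩
    have h2 := os_listB l hsorted j hj
    rw [← htl, os_bridge v n (fun x => x < t)] at h2
    exact le_trans h1 h2
  have hmul : t * (m:ℝ) ≤ m := by nlinarith [mul_le_mul_of_nonneg_right ht01.2 hmR.le]
  rw [abs_sub_le_iff]
  constructor
  · by_cases h2m : t ≤ 2/m
    · have : (0:ℝ) ≤ (j:ℝ)/n := by positivity
      linarith
    · push_neg at h2m
      set k : ℕ := ⌈(t - 2/m) * m⌉₊ with hk_def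
      have key : (t - 2/(m:ℝ)) * m = t * m - 2 := by field_simp
      have hpos : (0:ℝ) ≤ (t - 2/m) * m := by nlinarith
      have hkm : k ≤ m := by
        rw [hk_def]
        apply Nat.ceil_le.mpr
        nlinarith
      have hlow : t - 2/m ≤ (k:ℝ)/m := by
        rw [le_div_iff₀ hmR]
        exact Nat.le_ceil _
      have hup : (k:ℝ)/m < t := by
        have h1 : (k:ℝ) < (t - 2/m) * m + 1 := Nat.ceil_lt_add_one hpos
        rw [div_lt_iff₀ hmR]
        nlinarith
      have hCk : C ((k:ℝ)/m) ≤ j := hCj _ hup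
      have hg := hgrid k hkm
      rw [abs_sub_lt_iff] at hg
      have hdiv : (C ((k:ℝ)/m) : ℝ)/n ≤ (j:ℝ)/n := by
        first
          | (gcongr; exact_mod_cast hCk)
          | gcongr
      linarith [hg.2]
  · set k : ℕ := ⌈t * m⌉₊ with hk_def
    have hkm : k ≤ m := by
      rw [hk_def]
      exact Nat.ceil_le.mpr hmul
    have hlow : t ≤ (k:ℝ)/m := by
      rw [le_div_iff₀ hmR]
      exact Nat.le_ceil _
    have hup : (k:ℝ)/m < t + 1/m := by
      have h1 : (k:ℝ) < t * m + 1 := Nat.ceil_lt_add_one (by nlinarith [ht01.1])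
      rw [div_lt_iff₀ hmR]
      have : (t + 1/(m:ℝ)) * m = t * m + 1 := by field_simp
      linarith
    have hCk : (j:ℕ) + 1 ≤ C ((k:ℝ)/m) := le_trans hCt (hCmono _ _ hlow)
    have hg := hgrid k hkm
    rw [abs_sub_lt_iff] at hg
    have hdiv : ((j:ℝ) + 1)/n ≤ (C ((k:ℝ)/m) : ℝ)/n := by
      first
        | (gcongr; exact_mod_cast hCk)
        | gcongr
    have hsplit : ((j:ℝ) + 1)/n = (j:ℝ)/n + 1/n := by ring
    have h1n : (0:ℝ) < 1/n := by positivity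
    have h1m : (1:ℝ)/m ≤ 2/m := by
      gcongr
      norm_num
    linarith [hg.1]

end aux

/-- Let `Ω : [0,1] → [−1,1]` be continuous and let `(U_i)` be i.i.d. uniform
on `[0,1]`. For each `n` define the random step function `Ω_n(x) = Ω(U_{(j)}^n)` for
`x ∈ I_j^n = [(j−1)/n, j/n)`. Then almost surely `sup_{x ∈ [0,1)} |Ω_n(x) − Ω(x)| → 0` as
`n → ∞` (stated as uniform convergence: for every `ε > 0` there is `N` such that for all
`n ≥ N`, all `j` and all `x ∈ I_j^n`, `|Ω(U_{(j)}^n) − Ω(x)| < ε`). -/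
theorem stmt_2 (Ω : ℝ → ℝ)
    (hΩ_cont : ContinuousOn Ω (Set.Icc (0:ℝ) 1))
    (hΩ_range : ∀ x ∈ Set.Icc (0:ℝ) 1, Ω x ∈ Set.Icc (-1:ℝ) 1)
    {α : Type*} [MeasureSpace α] [IsProbabilityMeasure (ℙ : Measure α)]
    (U : ℕ → α → ℝ) (h_meas : ∀ i, Measurable (U i))
    (h_indep : iIndepFun U ℙ)
    (h_unif : ∀ i, Measure.map (U i) ℙ = volume.restrict (Set.Icc (0:ℝ) 1)) :
    ∀ᵐ ω ∂(ℙ : Measure α), ∀ ε > (0:ℝ), ∃ N : ℕ, ∀ n ≥ N, ∀ j : Fin n,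
      ∀ x ∈ Set.Ico ((j : ℝ) / n) (((j : ℕ) + 1 : ℝ) / n),
        |Ω (orderStat U n j ω) - Ω x| < ε := by
  classical
  open Filter Topology in
  -- a.s. all U i in [0,1]
  have hU01 : ∀ᵐ ω ∂(ℙ : Measure α), ∀ i, U i ω ∈ Set.Icc (0:ℝ) 1 := by
    rw [ae_all_iff]
    intro i
    rw [ae_iff]
    have : {ω | ¬ U i ω ∈ Set.Icc (0:ℝ) 1} = U i ⁻¹' (Set.Icc (0:ℝ) 1)ᶜ := rfl
    rw [this, ← Measure.map_apply (h_meas i) measurableSet_Icc.compl, h_unif,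
      Measure.restrict_apply measurableSet_Icc.compl]
    simp
  -- a.s. empirical convergence at all grid points
  have hgrid : ∀ᵐ ω ∂(ℙ : Measure α), ∀ m : ℕ, ∀ k : ℕ, k ≤ m → 1 ≤ m →
      Filter.Tendsto (fun n => (((Finset.range n).filter
        (fun i => U i ω ≤ (k:ℝ)/m)).card : ℝ) / n) Filter.atTop (𝓝 ((k:ℝ)/m)) := by
    rw [ae_all_iff]
    intro m
    rw [ae_all_iff]
    intro k
    by_cases hkm : k ≤ m ∧ 1 ≤ m
    · have hmR : (0:ℝ) < m := by exact_mod_cast hkm.2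
      have hq0 : (0:ℝ) ≤ (k:ℝ)/m := by positivity
      have hq1 : (k:ℝ)/m ≤ 1 := by
        rw [div_le_one hmR]
        exact_mod_cast hkm.1
      filter_upwards [os_empirical U h_meas h_indep h_unif ((k:ℝ)/m) hq0 hq1] with ω hω
      intro _ _
      exact hω
    · filter_upwards with ω h1 h2
      exact absurd ⟨h1, h2⟩ hkm
  filter_upwards [hU01, hgrid] with ω hω1 hω2
  intro ε hε
  -- uniform continuity
  have huc : UniformContinuousOn Ω (Set.Icc (0:ℝ) 1) :=
    isCompact_Icc.uniformContinuousOn_of_continuous hΩ_cont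
  obtain ⟨δ, hδ, hδ'⟩ := Metric.uniformContinuousOn_iff.mp huc ε hε
  -- choose grid size
  set m : ℕ := ⌈(6:ℝ)/δ⌉₊ + 1 with hm_def
  have hm1 : 1 ≤ m := by omega
  have hmR : (0:ℝ) < m := by exact_mod_cast hm1
  have hm6 : (6:ℝ)/δ < m := by
    calc (6:ℝ)/δ ≤ ⌈(6:ℝ)/δ⌉₊ := Nat.le_ceil _
    _ < m := by exact_mod_cast Nat.lt_succ_self _
  have h2m : (2:ℝ)/m < δ/3 := by
    rw [div_lt_iff₀ hmR]
    rw [div_lt_iff₀ hδ] at hm6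
    nlinarith
  -- eventually all grid points are close
  have hev : ∀ᶠ n in Filter.atTop, ∀ k ∈ Finset.range (m+1),
      |(((Finset.range n).filter (fun i => U i ω ≤ (k:ℝ)/m)).card : ℝ)/n - (k:ℝ)/m| < δ/6 := by
    rw [Filter.eventually_all_finset]
    intro k hk
    have hk' : k ≤ m := by
      rw [Finset.mem_range] at hk; omega
    have := hω2 m k hk' hm1
    have := Metric.tendsto_atTop.mp this (δ/6) (by positivity)
    obtain ⟨N, hN⟩ := this
    rw [Filter.eventually_atTop]
    exact ⟨N, fun n hn => by rw [← Real.dist_eq]; exact hN n hn⟩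
  have hev2 : ∀ᶠ n : ℕ in Filter.atTop, (2:ℝ)/δ < n :=
    tendsto_natCast_atTop_atTop.eventually_gt_atTop _
  obtain ⟨N, hN⟩ := Filter.eventually_atTop.mp (hev.and hev2)
  refine ⟨N, ?_⟩
  intro n hn j x hx
  have hnposR : (0:ℝ) < n := lt_of_le_of_lt (by positivity) ((hN n hn).2)
  have hkey := os_order_close U n j ω m hm1 (δ/6) hω1
    (fun k hk => (hN n hn).1 k (Finset.mem_range.mpr (by omega)))
  -- x is in [0,1]
  have hj1 : ((j:ℕ) : ℝ) + 1 ≤ n := by exact_mod_cast j.isLt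
  have hx0 : 0 ≤ x := le_trans (by positivity) hx.1
  have hx1 : x ≤ 1 := by
    have := hx.2
    have h2 : (((j:ℕ) : ℝ) + 1)/n ≤ 1 := by
      rw [div_le_one hnposR]
      exact hj1
    linarith
  -- |x - j/n| < 1/n
  have hxj : |x - (j:ℝ)/n| < 1/n := by
    rw [abs_sub_lt_iff]
    constructor
    · have := hx.2
      have : x < ((j:ℝ) + 1)/n := by exact_mod_cast this
      have hsplit : ((j:ℝ) + 1)/n = (j:ℝ)/n + 1/n := by ring
      linarith
    · have := hx.1
      have h1n : (0:ℝ) < 1/n := by positivity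
      linarith
  -- 1/n < δ/2
  have h1n : (1:ℝ)/n < δ/2 := by
    have h2d := (hN n hn).2
    rw [div_lt_div_iff₀ hnposR (by norm_num : (0:ℝ) < 2)]
    rw [div_lt_iff₀ hδ] at h2d
    nlinarith
  -- |t - x| < δ
  have ht01 : orderStat U n j ω ∈ Set.Icc (0:ℝ) 1 := os_mem U n j ω hω1
  have hdist : dist (orderStat U n j ω) x < δ := by
    rw [Real.dist_eq]
    have h1 := abs_sub_abs_le_abs_sub (orderStat U n j ω - (j:ℝ)/n) (x - (j:ℝ)/n)
    have h2 : |orderStat U n j ω - x| ≤ |orderStat U n j ω - (j:ℝ)/n| + |x - (j:ℝ)/n| := by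
      have := abs_sub (orderStat U n j ω - (j:ℝ)/n) (x - (j:ℝ)/n)
      calc |orderStat U n j ω - x|
          = |(orderStat U n j ω - (j:ℝ)/n) - (x - (j:ℝ)/n)| := by ring_nf
        _ ≤ |orderStat U n j ω - (j:ℝ)/n| + |x - (j:ℝ)/n| := abs_sub _ _
      
    calc |orderStat U n j ω - x| ≤ |orderStat U n j ω - (j:ℝ)/n| + |x - (j:ℝ)/n| := h2
      _ < (δ/6 + 2/m) + 1/n := by
          apply add_lt_add_of_le_of_lt hkey hxj
      _ < (δ/6 + δ/3) + δ/2 := by linarith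
      _ = δ := by ring
  have := hδ' _ ht01 _ ⟨hx0, hx1⟩ hdist
  rw [Real.dist_eq] at this
  exact this
end

section
/- Let Ω : [0,1] → [−1,1] be continuous and nonconstant, set Ω̄ = ∫₀¹ Ω(x) dx, let K > 0 and p ∈ (0,1], let γ = sup_{x∈[0,1]} |Ω(x) − Ω̄| / (Kp), and let q ≥ 1. Set κ = Kpqγ and u(x) = arcsin((Ω(x) − Ω̄)/κ) (well-defined since |Ω(x) − Ω̄| ≤ κ). If qγ = ∫₀¹ √(1 − ((Ω(y) − Ω̄)/κ)²) dy (the change-of-variables form of Ermentrout's condition γ = q^{-2} ∫_{−1}^{1} √(q² − s²) f(s) ds, where f is the density of the frequency distribution whose quantile function is Ω), then the function θ(x,t) = Ω̄ t + u(x) satisfies ∂θ/∂t (x,t) = Ω(x) + Kp ∫₀¹ sin(θ(y,t) − θ(x,t)) dy for all x ∈ [0,1] and all t ∈ ℝ. -/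
open MeasureTheory intervalIntegral

/-- (Ermentrout's synchronous solution on the Erdős–Rényi graphon.)
Let `Ω : [0,1] → [−1,1]` be continuous and nonconstant, `Ω̄ = ∫₀¹ Ω`, `K > 0`, `p ∈ (0,1]`,
`γ = sup_{x} |Ω(x) − Ω̄| / (Kp)`, `q ≥ 1`, `κ = Kpqγ` and `u(x) = arcsin((Ω(x) − Ω̄)/κ)`.
If `qγ = ∫₀¹ √(1 − ((Ω(y) − Ω̄)/κ)²) dy`, then `θ(x,t) = Ω̄ t + u(x)` satisfies
`∂θ/∂t(x,t) = Ω(x) + Kp ∫₀¹ sin(θ(y,t) − θ(x,t)) dy` for all `x ∈ [0,1]`, `t ∈ ℝ`. -/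
theorem stmt_3 (Ω : ℝ → ℝ)
    (hΩ_cont : ContinuousOn Ω (Set.Icc (0:ℝ) 1))
    (hΩ_range : ∀ x ∈ Set.Icc (0:ℝ) 1, Ω x ∈ Set.Icc (-1:ℝ) 1)
    (hΩ_noncst : ∃ x ∈ Set.Icc (0:ℝ) 1, ∃ y ∈ Set.Icc (0:ℝ) 1, Ω x ≠ Ω y)
    (Ωbar : ℝ) (hΩbar : Ωbar = ∫ x in (0:ℝ)..1, Ω x)
    (K p : ℝ) (hK : 0 < K) (hp : p ∈ Set.Ioc (0:ℝ) 1)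
    (γ : ℝ) (hγ : γ = sSup ((fun x => |Ω x - Ωbar|) '' Set.Icc (0:ℝ) 1) / (K * p))
    (q : ℝ) (hq : 1 ≤ q)
    (κ : ℝ) (hκ : κ = K * p * q * γ)
    (u : ℝ → ℝ) (hu : ∀ x, u x = Real.arcsin ((Ω x - Ωbar) / κ))
    (hErm : q * γ = ∫ y in (0:ℝ)..1, Real.sqrt (1 - ((Ω y - Ωbar) / κ)^2)) :
    ∀ x ∈ Set.Icc (0:ℝ) 1, ∀ t : ℝ,
      HasDerivAt (fun s : ℝ => Ωbar * s + u x)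
        (Ω x + K * p * ∫ y in (0:ℝ)..1,
          Real.sin ((Ωbar * t + u y) - (Ωbar * t + u x))) t := by
  intro x hx t
  set M := sSup ((fun x => |Ω x - Ωbar|) '' Set.Icc (0:ℝ) 1) with hM
  have hcont_abs : ContinuousOn (fun x => |Ω x - Ωbar|) (Set.Icc (0:ℝ) 1) :=
    (hΩ_cont.sub continuousOn_const).abs
  have hbdd : BddAbove ((fun x => |Ω x - Ωbar|) '' Set.Icc (0:ℝ) 1) :=
    (isCompact_Icc.image_of_continuousOn hcont_abs).bddAbove
  have hle : ∀ y ∈ Set.Icc (0:ℝ) 1, |Ω y - Ωbar| ≤ M := fun y hy =>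
    le_csSup hbdd ⟨y, hy, rfl⟩
  have hMpos : 0 < M := by
    obtain ⟨a, ha, b, hb, hab⟩ := hΩ_noncst
    rcases eq_or_ne (Ω a) Ωbar with h | h
    · have hb' : Ω b ≠ Ωbar := fun hb2 => hab (h.trans hb2.symm)
      exact lt_of_lt_of_le (abs_pos.mpr (sub_ne_zero.mpr hb')) (hle b hb)
    · exact lt_of_lt_of_le (abs_pos.mpr (sub_ne_zero.mpr h)) (hle a ha)
  have hKp : 0 < K * p := mul_pos hK hp.1
  have hγpos : 0 < γ := by rw [hγ]; exact div_pos hMpos hKp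
  have hκpos : 0 < κ := by
    rw [hκ]; exact mul_pos (mul_pos hKp (lt_of_lt_of_le zero_lt_one hq)) hγpos
  have hMeq : M = K * p * 1 * γ := by rw [hγ]; field_simp [hp.1.ne']
  have hg : ∀ y ∈ Set.Icc (0:ℝ) 1, (Ω y - Ωbar) / κ ∈ Set.Icc (-1:ℝ) 1 := by
    intro y hy
    have h1 : |Ω y - Ωbar| ≤ κ := by
      calc |Ω y - Ωbar| ≤ M := hle y hy
        _ ≤ K * p * q * γ := by
            rw [hMeq]
            apply mul_le_mul_of_nonneg_right _ hγpos.le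
            nlinarith
        _ = κ := hκ.symm
    have h2 : |(Ω y - Ωbar) / κ| ≤ 1 := by
      rw [abs_div, abs_of_pos hκpos, div_le_one hκpos]; exact h1
    exact Set.mem_Icc.mpr (abs_le.mp h2)
  -- integrability facts
  have hΩ_int : IntervalIntegrable Ω volume 0 1 := by
    apply ContinuousOn.intervalIntegrable
    rwa [Set.uIcc_of_le (by norm_num : (0:ℝ) ≤ 1)]
  have hg_cont : ContinuousOn (fun y => (Ω y - Ωbar) / κ) (Set.Icc (0:ℝ) 1) :=
    (hΩ_cont.sub continuousOn_const).div_const κ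
  have hg_int : IntervalIntegrable (fun y => (Ω y - Ωbar) / κ) volume 0 1 := by
    apply ContinuousOn.intervalIntegrable
    rwa [Set.uIcc_of_le (by norm_num : (0:ℝ) ≤ 1)]
  have hs_cont : ContinuousOn (fun y => Real.sqrt (1 - ((Ω y - Ωbar) / κ)^2))
      (Set.Icc (0:ℝ) 1) :=
    Real.continuous_sqrt.comp_continuousOn (continuousOn_const.sub (hg_cont.pow 2))
  have hs_int : IntervalIntegrable (fun y => Real.sqrt (1 - ((Ω y - Ωbar) / κ)^2))
      volume 0 1 := by
    apply ContinuousOn.intervalIntegrable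
    rwa [Set.uIcc_of_le (by norm_num : (0:ℝ) ≤ 1)]
  -- rewrite the integrand
  have hcongr : (∫ y in (0:ℝ)..1, Real.sin ((Ωbar * t + u y) - (Ωbar * t + u x)))
      = ∫ y in (0:ℝ)..1, ((Ω y - Ωbar) / κ * Real.sqrt (1 - ((Ω x - Ωbar) / κ)^2)
          - Real.sqrt (1 - ((Ω y - Ωbar) / κ)^2) * ((Ω x - Ωbar) / κ)) := by
    apply intervalIntegral.integral_congr
    intro y hy
    rw [Set.uIcc_of_le (by norm_num : (0:ℝ) ≤ 1)] at hy
    show Real.sin ((Ωbar * t + u y) - (Ωbar * t + u x))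
        = (Ω y - Ωbar) / κ * Real.sqrt (1 - ((Ω x - Ωbar) / κ)^2)
          - Real.sqrt (1 - ((Ω y - Ωbar) / κ)^2) * ((Ω x - Ωbar) / κ)
    have harg : (Ωbar * t + u y) - (Ωbar * t + u x) = u y - u x := by ring
    rw [harg, Real.sin_sub, hu y, hu x,
      Real.sin_arcsin (hg y hy).1 (hg y hy).2,
      Real.sin_arcsin (hg x hx).1 (hg x hx).2,
      Real.cos_arcsin, Real.cos_arcsin]
  -- compute the pieces
  have hint_g : (∫ y in (0:ℝ)..1, (Ω y - Ωbar) / κ) = 0 := by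
    rw [intervalIntegral.integral_div, intervalIntegral.integral_sub hΩ_int
      intervalIntegrable_const, intervalIntegral.integral_const]
    simp [← hΩbar]
  have hkey : (∫ y in (0:ℝ)..1, Real.sin ((Ωbar * t + u y) - (Ωbar * t + u x)))
      = -(q * γ) * ((Ω x - Ωbar) / κ) := by
    rw [hcongr, intervalIntegral.integral_sub (hg_int.mul_const _) (hs_int.mul_const _),
      intervalIntegral.integral_mul_const, intervalIntegral.integral_mul_const,
      hint_g, ← hErm]
    ring
  have hval : Ω x + K * p * ∫ y in (0:ℝ)..1,
      Real.sin ((Ωbar * t + u y) - (Ωbar * t + u x)) = Ωbar := by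
    rw [hkey]
    have : K * p * (-(q * γ) * ((Ω x - Ωbar) / κ)) = -(Ω x - Ωbar) := by
      rw [hκ] at hκpos ⊢
      field_simp [hp.1.ne']
    rw [this]; ring
  rw [hval]
  have : HasDerivAt (fun s : ℝ => Ωbar * s + u x) (Ωbar * 1) t :=
    ((hasDerivAt_id t).const_mul Ωbar).add_const (u x)
  simpa using this
end

section
/- Suppose in addition that κ ≥ 1 and max_{x∈[0,1]} |Ω(x)| = 1. Then every λ in the closed interval [−KpC, −Kp√(1 − 1/κ²)·C] belongs to the spectrum of the bounded operator L on X_ℂ. -/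
open MeasureTheory intervalIntegral

/-- Membership in `X_ℂ`: continuous complex-valued functions on `[0,1]` with zero mean. -/
def memXC (v : ℝ → ℂ) : Prop :=
  ContinuousOn v (Set.Icc (0:ℝ) 1) ∧ (∫ x in (0:ℝ)..1, v x) = 0

/-- The linearization `L` at the synchronous state `u*` of the Kuramoto mean-field model on
the Erdős–Rényi graphon `W ≡ p`, acting on complex-valued functions:
`(Lv)(x) = Kp ∫₀¹ cos(u*(y) − u*(x)) (v(y) − v(x)) dy`. -/
noncomputable def LER (K p : ℝ) (ustar : ℝ → ℝ) (v : ℝ → ℂ) (x : ℝ) : ℂ :=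
  ((K * p : ℝ) : ℂ) * ∫ y in (0:ℝ)..1, ((Real.cos (ustar y - ustar x) : ℝ) : ℂ) * (v y - v x)

/-- `z` lies in the resolvent set of `L` on `X_ℂ`, expressed (equivalently, by the bounded
inverse theorem, since `L` is a bounded operator on the Banach space `X_ℂ`) as bijectivity
of `L − z` on `X_ℂ`. -/
def IsInResolventER (K p : ℝ) (ustar : ℝ → ℝ) (z : ℂ) : Prop :=
  (∀ v : ℝ → ℂ, memXC v → (∀ x ∈ Set.Icc (0:ℝ) 1, LER K p ustar v x - z * v x = 0) →
    ∀ x ∈ Set.Icc (0:ℝ) 1, v x = 0) ∧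
  (∀ g : ℝ → ℂ, memXC g → ∃ v : ℝ → ℂ, memXC v ∧
    ∀ x ∈ Set.Icc (0:ℝ) 1, LER K p ustar v x - z * v x = g x)

lemma split3 {E : Type*} [NormedAddCommGroup E] [NormedSpace ℝ E]
    (f : ℝ → E) (hf : ContinuousOn f (Set.Icc (0:ℝ) 1)) {a b : ℝ}
    (h0a : 0 ≤ a) (hab : a ≤ b) (hb1 : b ≤ 1) :
    ∫ y in (0:ℝ)..1, f y = (∫ y in (0:ℝ)..a, f y) + (∫ y in a..b, f y) + ∫ y in b..(1:ℝ), f y := by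
  have hI : ∀ c d : ℝ, 0 ≤ c → c ≤ d → d ≤ 1 → IntervalIntegrable f volume c d := by
    intro c d hc hcd hd1
    apply ContinuousOn.intervalIntegrable
    apply hf.mono
    rw [Set.uIcc_of_le hcd]
    exact Set.Icc_subset_Icc hc hd1
  rw [← intervalIntegral.integral_add_adjacent_intervals (hI 0 b (le_refl 0) (h0a.trans hab) hb1)
      (hI b 1 (h0a.trans hab) hb1 (le_refl 1)),
    ← intervalIntegral.integral_add_adjacent_intervals (hI 0 a (le_refl 0) h0a (hab.trans hb1))
      (hI a b h0a hab hb1)]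


lemma integral_pos_of_one_at_half (f : ℝ → ℝ) (hf : ContinuousOn f (Set.Icc (0:ℝ) 1))
    (h0 : ∀ y ∈ Set.Icc (0:ℝ) 1, 0 ≤ f y) (hpt : f (1/2 : ℝ) = 1) :
    0 < ∫ y in (0:ℝ)..1, f y := by
  have hhalf : (1/2 : ℝ) ∈ Set.Icc (0:ℝ) 1 := by norm_num
  have hcw : ContinuousWithinAt f (Set.Icc (0:ℝ) 1) (1/2) := hf _ hhalf
  rw [Metric.continuousWithinAt_iff] at hcw
  obtain ⟨δ, hδ, hδ'⟩ := hcw (1/2) (by norm_num)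
  set d : ℝ := min (δ/2) (1/2) with hd
  have hd0 : 0 < d := lt_min (by linarith) (by norm_num)
  have hd2 : d ≤ 1/2 := min_le_right _ _
  set a : ℝ := 1/2 - d with ha
  set b : ℝ := 1/2 + d with hb
  have h0a : 0 ≤ a := by simp only [ha]; linarith
  have hab : a ≤ b := by simp only [ha, hb]; linarith
  have hb1 : b ≤ 1 := by simp only [hb]; linarith
  have hmem : ∀ x ∈ Set.Icc a b, x ∈ Set.Icc (0:ℝ) 1 :=
    fun x hx => ⟨le_trans h0a hx.1, le_trans hx.2 hb1⟩
  have hlow : ∀ x ∈ Set.Icc a b, (1/2 : ℝ) ≤ f x := by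
    intro x hx
    have hdist : dist x (1/2 : ℝ) < δ := by
      rw [Real.dist_eq, abs_lt]
      have h1 := hx.1; have h2 := hx.2
      have : d < δ := lt_of_le_of_lt (min_le_left _ _) (by linarith)
      constructor <;> simp only [ha, hb] at h1 h2 <;> linarith
    have := hδ' (hmem x hx) hdist
    rw [Real.dist_eq, hpt, abs_lt] at this
    linarith [this.1]
  have hint : ∀ c e : ℝ, 0 ≤ c → c ≤ e → e ≤ 1 → IntervalIntegrable f volume c e := by
    intro c e hc hce he1
    apply ContinuousOn.intervalIntegrable
    apply hf.mono
    rw [Set.uIcc_of_le hce]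
    exact Set.Icc_subset_Icc hc he1
  rw [split3 f hf h0a hab hb1]
  have h1 : 0 ≤ ∫ y in (0:ℝ)..a, f y :=
    intervalIntegral.integral_nonneg h0a (fun u hu => h0 u ⟨hu.1, hu.2.trans (hab.trans hb1)⟩)
  have h3 : 0 ≤ ∫ y in b..(1:ℝ), f y :=
    intervalIntegral.integral_nonneg hb1 (fun u hu => h0 u ⟨(h0a.trans (hab.trans hu.1)), hu.2⟩)
  have h2 : (b - a) * (1/2 : ℝ) ≤ ∫ y in a..b, f y := by
    have := intervalIntegral.integral_mono_on (f := fun _ => (1/2:ℝ)) (g := f) hab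
      (intervalIntegrable_const) (hint a b h0a hab hb1) hlow
    rwa [intervalIntegral.integral_const, smul_eq_mul] at this
  have hba : b - a = 2 * d := by simp only [ha, hb]; ring
  rw [hba] at h2
  linarith

lemma LER_expand (K p : ℝ) (ustar : ℝ → ℝ) (hu : ContinuousOn ustar (Set.Icc (0:ℝ) 1))
    (v : ℝ → ℂ) (hv : ContinuousOn v (Set.Icc (0:ℝ) 1)) (x : ℝ) :
    LER K p ustar v x =
      ((K * p : ℝ) : ℂ) *
        (((Real.cos (ustar x) : ℝ) : ℂ) *
            ((∫ y in (0:ℝ)..1, ((Real.cos (ustar y) : ℝ) : ℂ) * v y)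
              - ((∫ y in (0:ℝ)..1, Real.cos (ustar y) : ℝ) : ℂ) * v x)
          + ((Real.sin (ustar x) : ℝ) : ℂ) *
            ((∫ y in (0:ℝ)..1, ((Real.sin (ustar y) : ℝ) : ℂ) * v y)
              - ((∫ y in (0:ℝ)..1, Real.sin (ustar y) : ℝ) : ℂ) * v x)) := by
  have huIcc : Set.uIcc (0:ℝ) 1 = Set.Icc 0 1 := Set.uIcc_of_le zero_le_one
  have hφc : ContinuousOn (fun y => ((Real.cos (ustar y) : ℝ) : ℂ)) (Set.Icc (0:ℝ) 1) :=
    Complex.continuous_ofReal.comp_continuousOn (Real.continuous_cos.comp_continuousOn hu)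
  have hψc : ContinuousOn (fun y => ((Real.sin (ustar y) : ℝ) : ℂ)) (Set.Icc (0:ℝ) 1) :=
    Complex.continuous_ofReal.comp_continuousOn (Real.continuous_sin.comp_continuousOn hu)
  have hφI : IntervalIntegrable (fun y => ((Real.cos (ustar y) : ℝ) : ℂ)) volume 0 1 := by
    apply ContinuousOn.intervalIntegrable; rw [huIcc]; exact hφc
  have hψI : IntervalIntegrable (fun y => ((Real.sin (ustar y) : ℝ) : ℂ)) volume 0 1 := by
    apply ContinuousOn.intervalIntegrable; rw [huIcc]; exact hψc
  have hφvI : IntervalIntegrable (fun y => ((Real.cos (ustar y) : ℝ) : ℂ) * v y) volume 0 1 := by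
    apply ContinuousOn.intervalIntegrable; rw [huIcc]; exact hφc.mul hv
  have hψvI : IntervalIntegrable (fun y => ((Real.sin (ustar y) : ℝ) : ℂ) * v y) volume 0 1 := by
    apply ContinuousOn.intervalIntegrable; rw [huIcc]; exact hψc.mul hv
  have expand : (fun y => ((Real.cos (ustar y - ustar x) : ℝ) : ℂ) * (v y - v x)) = fun y =>
      (((Real.cos (ustar x) : ℝ) : ℂ) * (((Real.cos (ustar y) : ℝ) : ℂ) * v y)
        - ((Real.cos (ustar x) : ℝ) : ℂ) * (((Real.cos (ustar y) : ℝ) : ℂ) * v x))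
      + ((((Real.sin (ustar x) : ℝ) : ℂ) * (((Real.sin (ustar y) : ℝ) : ℂ) * v y))
        - ((Real.sin (ustar x) : ℝ) : ℂ) * (((Real.sin (ustar y) : ℝ) : ℂ) * v x)) := by
    funext y; rw [Real.cos_sub]; push_cast; ring
  rw [LER, expand]
  rw [intervalIntegral.integral_add
      ((hφvI.const_mul _).sub ((hφI.mul_const (v x)).const_mul _))
      ((hψvI.const_mul _).sub ((hψI.mul_const (v x)).const_mul _))]
  rw [intervalIntegral.integral_sub (hφvI.const_mul _) ((hφI.mul_const (v x)).const_mul _)]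
  rw [intervalIntegral.integral_sub (hψvI.const_mul _) ((hψI.mul_const (v x)).const_mul _)]
  rw [intervalIntegral.integral_const_mul, intervalIntegral.integral_const_mul,
      intervalIntegral.integral_const_mul, intervalIntegral.integral_const_mul,
      intervalIntegral.integral_mul_const, intervalIntegral.integral_mul_const,
      intervalIntegral.integral_ofReal, intervalIntegral.integral_ofReal]
  ring

set_option maxHeartbeats 2000000 in
/-- In the Erdős–Rényi Kuramoto setting (`Ω : [0,1] → [−1,1]` continuous and
odd about `x = 1/2`, `K > 0`, `p ∈ (0,1]`, `κ ≥ 1`, `u*(x) = arcsin(Ω(x)/κ)`,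
`C = ∫₀¹ cos(u*(y)) dy`), if moreover `max_{x∈[0,1]} |Ω(x)| = 1`, then every
`λ ∈ [−KpC, −Kp√(1 − 1/κ²)·C]` belongs to the spectrum of `L` on `X_ℂ`, i.e. `L − λ` is
not bijective on `X_ℂ`. -/
theorem stmt_4 (K p : ℝ) (hK : 0 < K) (hp : p ∈ Set.Ioc (0:ℝ) 1)
    (Ω : ℝ → ℝ)
    (hΩ_cont : ContinuousOn Ω (Set.Icc (0:ℝ) 1))
    (hΩ_range : ∀ x ∈ Set.Icc (0:ℝ) 1, Ω x ∈ Set.Icc (-1:ℝ) 1)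
    (hΩ_odd : ∀ x ∈ Set.Icc (0:ℝ) 1, Ω (1 - x) = -Ω x)
    (κ : ℝ) (hκ : 1 ≤ κ)
    (hΩ_max : ∃ x₀ ∈ Set.Icc (0:ℝ) 1, |Ω x₀| = 1)
    (ustar : ℝ → ℝ) (hustar : ∀ x, ustar x = Real.arcsin (Ω x / κ))
    (C : ℝ) (hC : C = ∫ y in (0:ℝ)..1, Real.cos (ustar y)) :
    ∀ lam : ℝ,
      lam ∈ Set.Icc (-(K * p * C)) (-(K * p * Real.sqrt (1 - 1/κ^2) * C)) →
      ¬ IsInResolventER K p ustar (lam : ℂ) := by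
  intro lam hlam hres
  obtain ⟨hinj, hsurj⟩ := hres
  obtain ⟨hp0, hp1⟩ := hp
  have hκ0 : (0:ℝ) < κ := lt_of_lt_of_le one_pos hκ
  have hKp : 0 < K * p := mul_pos hK hp0
  have hΩκ : ∀ x ∈ Set.Icc (0:ℝ) 1, -1 ≤ Ω x / κ ∧ Ω x / κ ≤ 1 := by
    intro x hx
    obtain ⟨h1, h2⟩ := hΩ_range x hx
    constructor
    · rw [le_div_iff₀ hκ0]
      have : -1 * κ ≤ -1 * 1 := by linarith
      linarith
    · rw [div_le_one hκ0]; linarith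
  have hu_eq : ustar = fun x => Real.arcsin (Ω x / κ) := funext hustar
  have hu_cont : ContinuousOn ustar (Set.Icc (0:ℝ) 1) := by
    rw [hu_eq]; exact Real.continuous_arcsin.comp_continuousOn (hΩ_cont.div_const κ)
  have hψ_eq : ∀ x ∈ Set.Icc (0:ℝ) 1, Real.sin (ustar x) = Ω x / κ := by
    intro x hx; rw [hustar]; exact Real.sin_arcsin (hΩκ x hx).1 (hΩκ x hx).2
  have hφ_nonneg : ∀ x, 0 ≤ Real.cos (ustar x) := by
    intro x; rw [hustar, Real.cos_arcsin]; exact Real.sqrt_nonneg _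
  have hφ_cont : ContinuousOn (fun y => Real.cos (ustar y)) (Set.Icc (0:ℝ) 1) :=
    Real.continuous_cos.comp_continuousOn hu_cont
  have hψ_cont : ContinuousOn (fun y => Real.sin (ustar y)) (Set.Icc (0:ℝ) 1) :=
    Real.continuous_sin.comp_continuousOn hu_cont
  have hΩhalf : Ω (1/2 : ℝ) = 0 := by
    have := hΩ_odd (1/2) (by norm_num)
    norm_num at this
    linarith
  have hφhalf : Real.cos (ustar (1/2 : ℝ)) = 1 := by
    rw [hustar, hΩhalf]; norm_num
  have hC_pos : 0 < C := by
    rw [hC]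
    exact integral_pos_of_one_at_half _ hφ_cont (fun y _ => hφ_nonneg y) hφhalf
  have hKpC : 0 < K * p * C := mul_pos hKp hC_pos
  -- S = 0
  have hΩ_int : (∫ y in (0:ℝ)..1, Ω y) = 0 := by
    have h1 : (∫ y in (0:ℝ)..1, Ω (1 - y)) = ∫ y in (0:ℝ)..1, Ω y := by
      rw [intervalIntegral.integral_comp_sub_left Ω 1]
      norm_num
    have h2 : (∫ y in (0:ℝ)..1, Ω (1 - y)) = ∫ y in (0:ℝ)..1, (-Ω y) := by
      apply intervalIntegral.integral_congr
      intro y hy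
      rw [Set.uIcc_of_le (zero_le_one)] at hy
      exact hΩ_odd y hy
    rw [intervalIntegral.integral_neg] at h2
    linarith [h1.symm.trans h2]
  have hS : (∫ y in (0:ℝ)..1, Real.sin (ustar y)) = 0 := by
    have h1 : (∫ y in (0:ℝ)..1, Real.sin (ustar y)) = ∫ y in (0:ℝ)..1, Ω y / κ := by
      apply intervalIntegral.integral_congr
      intro y hy
      rw [Set.uIcc_of_le (zero_le_one)] at hy
      exact hψ_eq y hy
    rw [h1, intervalIntegral.integral_div, hΩ_int, zero_div]
  -- t and σ
  set t : ℝ := -lam / (K * p * C) with ht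
  have hlam_eq : lam = -(K * p * C * t) := by
    rw [ht]; field_simp
  have ht1 : t ≤ 1 := by
    rw [ht, div_le_one hKpC]
    have := hlam.1
    linarith
  have hκ2 : (1:ℝ) ≤ κ^2 := by
    have h := mul_le_mul hκ hκ zero_le_one (by linarith : (0:ℝ) ≤ κ)
    calc (1:ℝ) = 1*1 := by ring
      _ ≤ κ*κ := h
      _ = κ^2 := by ring
  have hinv : (0:ℝ) ≤ 1 - 1/κ^2 := by
    have h1 : 1/κ^2 ≤ 1 := by
      rw [div_le_one (by positivity)]
      exact hκ2
    linarith
  have hs0sq : Real.sqrt (1 - 1/κ^2) ^ 2 = 1 - 1/κ^2 := Real.sq_sqrt hinv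
  have hs0t : Real.sqrt (1 - 1/κ^2) ≤ t := by
    rw [ht, le_div_iff₀ hKpC]
    have h := hlam.2
    have h2 : K * p * Real.sqrt (1 - 1/κ^2) * C = Real.sqrt (1 - 1/κ^2) * (K*p*C) := by ring
    linarith [h2 ▸ h]
  have ht0 : 0 ≤ t := le_trans (Real.sqrt_nonneg _) hs0t
  set σ : ℝ := Real.sqrt (1 - t^2) with hσ
  have hσ0 : 0 ≤ σ := Real.sqrt_nonneg _
  have ht2le : t^2 ≤ 1 := by
    have h := mul_le_mul ht1 ht1 ht0 zero_le_one
    calc t^2 = t*t := by ring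
      _ ≤ 1*1 := h
      _ = 1 := by ring
  have hσsq : σ^2 = 1 - t^2 := Real.sq_sqrt (by linarith)
  have hσ1 : σ ≤ 1 := by
    have h := Real.sqrt_le_sqrt (show 1 - t^2 ≤ 1 by linarith [sq_nonneg t])
    rw [Real.sqrt_one] at h
    exact h
  have hκσ : κ * σ ≤ 1 := by
    have h1 : 1 - 1/κ^2 ≤ t^2 := by
      rw [← hs0sq]
      exact pow_le_pow_left₀ (Real.sqrt_nonneg _) hs0t 2
    have e1 : (κ*σ)^2 = κ^2*(1-t^2) := by rw [mul_pow, hσsq]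
    have e2 : κ^2*(1-t^2) ≤ κ^2*(1/κ^2) :=
      mul_le_mul_of_nonneg_left (by linarith) (by positivity)
    have e3 : κ^2*(1/κ^2) = 1 := by field_simp
    have f1 : (κ*σ-1)^2 = (κ*σ)^2 - 2*(κ*σ) + 1 := by ring
    have f2 := sq_nonneg (κ*σ-1)
    linarith
  -- xP with Ω xP = 1
  obtain ⟨x₀, hx₀, hΩx₀⟩ := hΩ_max
  have hxP : ∃ xP ∈ Set.Icc (0:ℝ) 1, Ω xP = 1 := by
    rcases abs_eq (by norm_num : (0:ℝ) ≤ 1) |>.mp hΩx₀ with h | h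
    · exact ⟨x₀, hx₀, h⟩
    · refine ⟨1 - x₀, ?_, ?_⟩
      · constructor <;> [linarith [hx₀.2]; linarith [hx₀.1]]
      · rw [hΩ_odd x₀ hx₀, h]; ring
  obtain ⟨xP, hxP_mem, hΩxP⟩ := hxP
  -- z
  have hz : ∃ z ∈ Set.Icc (0:ℝ) 1, Ω z = κ * σ := by
    have hsub : Set.uIcc (1/2 : ℝ) xP ⊆ Set.Icc (0:ℝ) 1 :=
      Set.uIcc_subset_Icc (by norm_num) hxP_mem
    have hmem : κ * σ ∈ Set.uIcc (Ω (1/2)) (Ω xP) := by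
      rw [hΩhalf, hΩxP, Set.uIcc_of_le zero_le_one]
      exact ⟨mul_nonneg (le_of_lt hκ0) hσ0, hκσ⟩
    obtain ⟨z, hz1, hz2⟩ := intermediate_value_uIcc (hΩ_cont.mono hsub) hmem
    exact ⟨z, hsub hz1, hz2⟩
  obtain ⟨z, hz_mem, hΩz⟩ := hz
  have hψz : Real.sin (ustar z) = σ := by
    rw [hψ_eq z hz_mem, hΩz, mul_comm, mul_div_assoc, div_self (ne_of_gt hκ0), mul_one]
  have hφz : Real.cos (ustar z) = t := by
    have h1 : Ω z / κ = σ := by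
      rw [hΩz, mul_comm, mul_div_assoc, div_self (ne_of_gt hκ0), mul_one]
    rw [hustar, h1, Real.cos_arcsin, hσsq]
    simp only [sub_sub_cancel]
    exact Real.sqrt_sq ht0
  by_cases hcase : ∀ δ : ℝ, 0 < δ → ∃ x, x ∈ Set.Icc (0:ℝ) 1 ∧ |x - z| < δ ∧ Real.cos (ustar x) ≠ t
  · -- z is a limit of points where cos (ustar x) ≠ t : contradiction with surjectivity
    set G : ℝ → ℝ := fun x => Real.sqrt (Real.sqrt |K * p * C * (Real.cos (ustar x) - t)|)
      with hG_def
    have hG_nonneg : ∀ x, 0 ≤ G x := fun x => Real.sqrt_nonneg _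
    have hG_cont : ContinuousOn G (Set.Icc (0:ℝ) 1) := by
      apply Real.continuous_sqrt.comp_continuousOn
      apply Real.continuous_sqrt.comp_continuousOn
      apply continuous_abs.comp_continuousOn
      exact continuousOn_const.mul (hφ_cont.sub continuousOn_const)
    have hG4 : ∀ x, G x ^ 4 = |K * p * C * (Real.cos (ustar x) - t)| := by
      intro x
      have h1 : G x ^ 4 = (G x ^ 2) ^ 2 := by ring
      rw [h1]
      simp only [hG_def]
      rw [Real.sq_sqrt (Real.sqrt_nonneg _), Real.sq_sqrt (abs_nonneg _)]
    have hGz : G z = 0 := by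
      simp only [hG_def]
      rw [hφz, sub_self, mul_zero, abs_zero, Real.sqrt_zero, Real.sqrt_zero]
    set cbar : ℝ := ∫ x in (0:ℝ)..1, G x with hcbar
    set g : ℝ → ℂ := fun x => ((G x - cbar : ℝ) : ℂ) with hg_def
    have hg_mem : memXC g := by
      constructor
      · exact Complex.continuous_ofReal.comp_continuousOn (hG_cont.sub continuousOn_const)
      · have hGI : IntervalIntegrable G volume 0 1 := by
          apply ContinuousOn.intervalIntegrable
          rwa [Set.uIcc_of_le zero_le_one]
        simp only [hg_def]
        rw [intervalIntegral.integral_ofReal,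
          intervalIntegral.integral_sub hGI intervalIntegrable_const,
          intervalIntegral.integral_const, ← hcbar]
        norm_num
    obtain ⟨v, hv_mem, hveq⟩ := hsurj g hg_mem
    obtain ⟨hv_cont, -⟩ := hv_mem
    obtain ⟨M, hM⟩ := isCompact_Icc.exists_bound_of_continuousOn hv_cont
    have hM0 : 0 ≤ M := le_trans (norm_nonneg _) (hM 0 ⟨le_rfl, zero_le_one⟩)
    set A : ℂ := ∫ y in (0:ℝ)..1, ((Real.cos (ustar y) : ℝ) : ℂ) * v y with hA
    set B : ℂ := ∫ y in (0:ℝ)..1, ((Real.sin (ustar y) : ℝ) : ℂ) * v y with hB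
    have key : ∀ x ∈ Set.Icc (0:ℝ) 1,
        ((K*p : ℝ):ℂ) * (((Real.cos (ustar x) : ℝ):ℂ) * (A - ((C : ℝ):ℂ) * v x)
          + ((Real.sin (ustar x) : ℝ):ℂ) * B) + ((K*p*C*t : ℝ):ℂ) * v x
          = ((G x : ℝ):ℂ) - ((cbar : ℝ):ℂ) := by
      intro x hx
      have h0 := hveq x hx
      rw [LER_expand K p ustar hu_cont v hv_cont x, ← hC, hS] at h0
      rw [← hA, ← hB] at h0
      simp only [hg_def] at h0
      rw [hlam_eq] at h0
      push_cast at h0 ⊢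
      linear_combination h0
    have keyz := key z hz_mem
    rw [hφz, hψz, hGz] at keyz
    have hid : ∀ x ∈ Set.Icc (0:ℝ) 1,
        ((G x : ℝ):ℂ) = ((K*p : ℝ):ℂ) * (((Real.cos (ustar x) : ℝ):ℂ) - ((t:ℝ):ℂ)) * A
          + ((K*p : ℝ):ℂ) * (((Real.sin (ustar x) : ℝ):ℂ) - ((σ:ℝ):ℂ)) * B
          - ((K*p : ℝ):ℂ) * ((C:ℝ):ℂ) * (((Real.cos (ustar x) : ℝ):ℂ) - ((t:ℝ):ℂ)) * v x := by
      intro x hx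
      have h1 := key x hx
      push_cast at h1 keyz ⊢
      linear_combination keyz - h1
    have habs : ∀ x, |Real.cos (ustar x) - t| = G x ^ 4 / (K * p * C) := by
      intro x
      rw [hG4 x, abs_mul, abs_of_pos hKpC]
      field_simp
    have hnorm : ∀ x ∈ Set.Icc (0:ℝ) 1,
        G x ≤ K*p*‖A‖*|Real.cos (ustar x) - t| + K*p*‖B‖*|Real.sin (ustar x) - σ|
          + K*p*C*|Real.cos (ustar x) - t| *M := by
      intro x hx
      have h1 : G x = ‖((G x : ℝ):ℂ)‖ := by
        rw [Complex.norm_real, Real.norm_eq_abs, abs_of_nonneg (hG_nonneg x)]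
      rw [h1, hid x hx]
      have tri : ∀ a b c : ℂ, ‖a + b - c‖ ≤ ‖a‖ + ‖b‖ + ‖c‖ := by
        intro a b c
        calc ‖a + b - c‖ ≤ ‖a + b‖ + ‖c‖ := norm_sub_le _ _
          _ ≤ ‖a‖ + ‖b‖ + ‖c‖ := by linarith [norm_add_le a b]
      refine le_trans (tri _ _ _) ?_
      have n1 : ‖((K*p : ℝ):ℂ) * (((Real.cos (ustar x) : ℝ):ℂ) - ((t:ℝ):ℂ)) * A‖
          = K*p*|Real.cos (ustar x) - t| *‖A‖ := by
        rw [norm_mul, norm_mul]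
        rw [show (((Real.cos (ustar x) : ℝ):ℂ) - ((t:ℝ):ℂ)) = ((Real.cos (ustar x) - t : ℝ):ℂ)
          by push_cast; ring]
        rw [Complex.norm_real, Complex.norm_real, Real.norm_eq_abs, Real.norm_eq_abs,
          abs_of_pos hKp]
      have n2 : ‖((K*p : ℝ):ℂ) * (((Real.sin (ustar x) : ℝ):ℂ) - ((σ:ℝ):ℂ)) * B‖
          = K*p*|Real.sin (ustar x) - σ| *‖B‖ := by
        rw [norm_mul, norm_mul]
        rw [show (((Real.sin (ustar x) : ℝ):ℂ) - ((σ:ℝ):ℂ)) = ((Real.sin (ustar x) - σ : ℝ):ℂ)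
          by push_cast; ring]
        rw [Complex.norm_real, Complex.norm_real, Real.norm_eq_abs, Real.norm_eq_abs,
          abs_of_pos hKp]
      have n3 : ‖((K*p : ℝ):ℂ) * ((C:ℝ):ℂ) * (((Real.cos (ustar x) : ℝ):ℂ) - ((t:ℝ):ℂ)) * v x‖
          ≤ K*p*C*|Real.cos (ustar x) - t| *M := by
        rw [norm_mul, norm_mul, norm_mul]
        rw [show (((Real.cos (ustar x) : ℝ):ℂ) - ((t:ℝ):ℂ)) = ((Real.cos (ustar x) - t : ℝ):ℂ)
          by push_cast; ring]
        rw [Complex.norm_real, Complex.norm_real, Complex.norm_real, Real.norm_eq_abs,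
          Real.norm_eq_abs, Real.norm_eq_abs, abs_of_pos hKp, abs_of_pos hC_pos]
        have := hM x hx
        have hnn : (0:ℝ) ≤ K*p*C*|Real.cos (ustar x) - t| := by positivity
        calc K*p*C*|Real.cos (ustar x) - t| *‖v x‖
            ≤ K*p*C*|Real.cos (ustar x) - t| *M := by
              exact mul_le_mul_of_nonneg_left this hnn
          _ = K*p*C*|Real.cos (ustar x) - t| *M := rfl
      rw [n1, n2]
      have hRe : K*p*|Real.cos (ustar x) - t| *‖A‖ = K*p*‖A‖*|Real.cos (ustar x) - t| := by ring
      have hRe2 : K*p*|Real.sin (ustar x) - σ| *‖B‖ = K*p*‖B‖*|Real.sin (ustar x) - σ| := by ring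
      linarith [n3]
    -- the sin-difference bound
    obtain ⟨A3, hA30, δψ, hδψ0, hψb⟩ : ∃ A3 : ℝ, 0 ≤ A3 ∧ ∃ δψ : ℝ, 0 < δψ ∧
        ∀ x ∈ Set.Icc (0:ℝ) 1, |x - z| < δψ → G x ≤ 1 →
          |Real.sin (ustar x) - σ| ≤ A3 * G x ^ 2 := by
      by_cases hσz : σ = 0
      · refine ⟨Real.sqrt (2/(K*p*C)), Real.sqrt_nonneg _, 1, one_pos, ?_⟩
        intro x hx _ _
        have hteq : t = 1 := by
          rw [hσz] at hσsq
          have h2 : (t - 1) * (t + 1) = 0 := by linear_combination hσsq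
          rcases mul_eq_zero.mp h2 with h3 | h3
          · linarith
          · linarith
        have hcos1 : Real.cos (ustar x) ≤ 1 := Real.cos_le_one _
        have hsinsq : Real.sin (ustar x) ^ 2 ≤ 2 * |Real.cos (ustar x) - t| := by
          have e2 := Real.sin_sq_add_cos_sq (ustar x)
          have habs2 : |Real.cos (ustar x) - t| = 1 - Real.cos (ustar x) := by
            rw [hteq, abs_of_nonpos (by linarith)]
            ring
          rw [habs2]
          have e4 : Real.sin (ustar x)^2
              = (1 - Real.cos (ustar x)) * (1 + Real.cos (ustar x)) := by
            linear_combination e2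
          have e5 : (1 - Real.cos (ustar x)) * (1 + Real.cos (ustar x))
              ≤ (1 - Real.cos (ustar x)) * 2 := by
            apply mul_le_mul_of_nonneg_left (by linarith [hφ_nonneg x]) (by linarith)
          calc Real.sin (ustar x)^2
              = (1 - Real.cos (ustar x)) * (1 + Real.cos (ustar x)) := e4
            _ ≤ (1 - Real.cos (ustar x)) * 2 := e5
            _ = 2 * (1 - Real.cos (ustar x)) := by ring
        rw [hσz, sub_zero]
        have h5 : |Real.sin (ustar x)| = Real.sqrt (Real.sin (ustar x) ^ 2) :=
          (Real.sqrt_sq_eq_abs _).symm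
        rw [h5]
        have h6 : Real.sin (ustar x) ^ 2 ≤ 2/(K*p*C) * (G x ^ 2) ^ 2 := by
          have h7 : (G x ^ 2) ^ 2 = G x ^ 4 := by ring
          rw [h7]
          calc Real.sin (ustar x) ^ 2 ≤ 2 * |Real.cos (ustar x) - t| := hsinsq
            _ = 2 * (G x ^ 4 / (K*p*C)) := by rw [habs x]
            _ = 2/(K*p*C) * G x ^ 4 := by ring
        calc Real.sqrt (Real.sin (ustar x) ^ 2) ≤ Real.sqrt (2/(K*p*C) * (G x ^ 2) ^ 2) :=
              Real.sqrt_le_sqrt h6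
          _ = Real.sqrt (2/(K*p*C)) * Real.sqrt ((G x ^ 2) ^ 2) := by
              rw [Real.sqrt_mul (by positivity)]
          _ = Real.sqrt (2/(K*p*C)) * G x ^ 2 := by
              rw [Real.sqrt_sq (sq_nonneg _)]
      · have hσpos : 0 < σ := lt_of_le_of_ne hσ0 (Ne.symm hσz)
        have hψcw : ContinuousWithinAt (fun y => Real.sin (ustar y)) (Set.Icc (0:ℝ) 1) z :=
          hψ_cont z hz_mem
        rw [Metric.continuousWithinAt_iff] at hψcw
        obtain ⟨δψ, hδψ0, hδψ⟩ := hψcw (σ/2) (by linarith)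
        refine ⟨2/(K*p*C*σ), by positivity, δψ, hδψ0, ?_⟩
        intro x hx hnear hG1
        have hd1 : dist x z < δψ := by rwa [Real.dist_eq]
        have hd2 := hδψ hx hd1
        rw [Real.dist_eq, hψz] at hd2
        have hsin_lb : σ/2 < Real.sin (ustar x) := by
          have := abs_lt.mp hd2
          linarith [this.1]
        have e2 := Real.sin_sq_add_cos_sq (ustar x)
        have e3 : (Real.sin (ustar x) - σ) * (Real.sin (ustar x) + σ)
            = (t - Real.cos (ustar x)) * (t + Real.cos (ustar x)) := by
          linear_combination e2 - hσsq
        have hcos_abs : |Real.cos (ustar x)| ≤ 1 := Real.abs_cos_le_one _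
        have h8 : |Real.sin (ustar x) - σ| * σ
            ≤ |Real.sin (ustar x) - σ| * (Real.sin (ustar x) + σ) := by
          apply mul_le_mul_of_nonneg_left (by linarith) (abs_nonneg _)
        have h9 : |Real.sin (ustar x) - σ| * (Real.sin (ustar x) + σ)
            = |Real.cos (ustar x) - t| * |t + Real.cos (ustar x)| := by
          rw [← abs_of_nonneg (show (0:ℝ) ≤ Real.sin (ustar x) + σ by linarith),
            ← abs_mul, e3, abs_mul, abs_sub_comm]
        have h10 : |t + Real.cos (ustar x)| ≤ 2 := by
          rw [abs_le]
          constructor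
          · have := abs_le.mp hcos_abs
            linarith [this.1]
          · have := abs_le.mp hcos_abs
            linarith [this.2]
        have h11 : |Real.sin (ustar x) - σ| * σ ≤ 2 * |Real.cos (ustar x) - t| := by
          calc |Real.sin (ustar x) - σ| * σ
              ≤ |Real.cos (ustar x) - t| * |t + Real.cos (ustar x)| := by
                rw [← h9]; exact h8
            _ ≤ |Real.cos (ustar x) - t| * 2 :=
                mul_le_mul_of_nonneg_left h10 (abs_nonneg _)
            _ = 2 * |Real.cos (ustar x) - t| := by ring
        have h12 : |Real.sin (ustar x) - σ| ≤ 2 * |Real.cos (ustar x) - t| / σ := by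
          rw [le_div_iff₀ hσpos]
          exact h11
        have hx4 : G x ^ 4 ≤ G x ^ 2 := by
          have hsq1 : G x ^ 2 ≤ 1 := pow_le_one₀ (hG_nonneg x) hG1
          calc G x ^ 4 = G x ^ 2 * G x ^ 2 := by ring
            _ ≤ 1 * G x ^ 2 := mul_le_mul_of_nonneg_right hsq1 (sq_nonneg _)
            _ = G x ^ 2 := one_mul _
        calc |Real.sin (ustar x) - σ| ≤ 2 * |Real.cos (ustar x) - t| / σ := h12
          _ = 2 * (G x ^ 4 / (K*p*C)) / σ := by rw [habs x]
          _ = 2/(K*p*C*σ) * G x ^ 4 := by field_simp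
          _ ≤ 2/(K*p*C*σ) * G x ^ 2 := by
              apply mul_le_mul_of_nonneg_left hx4 (by positivity)
    -- assemble the contradiction
    set c1 : ℝ := (K*p*‖A‖ + K*p*C*M)/(K*p*C) with hc1
    have hc10 : 0 ≤ c1 := by positivity
    set c2 : ℝ := K*p*‖B‖ with hc2
    have hc20 : 0 ≤ c2 := by positivity
    set B0 : ℝ := c1 + c2*A3 with hB0
    have hB00 : 0 ≤ B0 := by positivity
    set ε : ℝ := min 1 (1/(B0+1)) with hε
    have hε0 : 0 < ε := lt_min one_pos (by positivity)
    have hGcw : ContinuousWithinAt G (Set.Icc (0:ℝ) 1) z := hG_cont z hz_mem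
    rw [Metric.continuousWithinAt_iff] at hGcw
    obtain ⟨δG, hδG0, hδG⟩ := hGcw ε hε0
    obtain ⟨x, hx_mem, hx_near, hx_ne⟩ := hcase (min δψ δG) (lt_min hδψ0 hδG0)
    have hGx_lt : G x < ε := by
      have hd1 : dist x z < δG := by
        rw [Real.dist_eq]
        exact lt_of_lt_of_le hx_near (min_le_right _ _)
      have := hδG hx_mem hd1
      rw [Real.dist_eq, hGz, sub_zero, abs_of_nonneg (hG_nonneg x)] at this
      exact this
    have hGx1 : G x ≤ 1 := le_of_lt (lt_of_lt_of_le hGx_lt (min_le_left _ _))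
    have hGx_inv : G x < 1/(B0+1) := lt_of_lt_of_le hGx_lt (min_le_right _ _)
    have hGx_pos : 0 < G x := by
      rcases lt_or_eq_of_le (hG_nonneg x) with h | h
      · exact h
      · exfalso
        have h4 := hG4 x
        rw [← h] at h4
        have h5 : |K*p*C*(Real.cos (ustar x) - t)| = 0 := by
          rw [← h4]; norm_num
        rw [abs_eq_zero] at h5
        rcases mul_eq_zero.mp h5 with h6 | h6
        · exact (ne_of_gt hKpC) h6
        · exact hx_ne (sub_eq_zero.mp h6)
    have hψx := hψb x hx_mem (lt_of_lt_of_le hx_near (min_le_left _ _)) hGx1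
    have hx4 : G x ^ 4 ≤ G x ^ 2 := by
      have hsq1 : G x ^ 2 ≤ 1 := pow_le_one₀ (hG_nonneg x) hGx1
      calc G x ^ 4 = G x ^ 2 * G x ^ 2 := by ring
        _ ≤ 1 * G x ^ 2 := mul_le_mul_of_nonneg_right hsq1 (sq_nonneg _)
        _ = G x ^ 2 := one_mul _
    have hmain : G x ≤ B0 * G x ^ 2 := by
      have h1 := hnorm x hx_mem
      rw [habs x] at h1
      have h2 : K*p*‖A‖*(G x ^ 4/(K*p*C)) + K*p*C*(G x ^ 4/(K*p*C))*M = c1 * G x ^ 4 := by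
        rw [hc1]; field_simp
      have h3 : c2 * |Real.sin (ustar x) - σ| ≤ c2 * (A3 * G x ^ 2) :=
        mul_le_mul_of_nonneg_left hψx hc20
      have h4 : c1 * G x ^ 4 ≤ c1 * G x ^ 2 := mul_le_mul_of_nonneg_left hx4 hc10
      have h5 : G x ≤ c1 * G x ^ 4 + c2 * (A3 * G x ^ 2) := by linarith
      calc G x ≤ c1 * G x ^ 4 + c2 * (A3 * G x ^ 2) := h5
        _ ≤ c1 * G x ^ 2 + c2 * A3 * G x ^ 2 := by linarith [h4]
        _ = B0 * G x ^ 2 := by rw [hB0]; ring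
    have hone : 1 ≤ B0 * G x := by
      have h6 : 1 * G x ≤ (B0 * G x) * G x := by
        calc 1 * G x = G x := one_mul _
          _ ≤ B0 * G x ^ 2 := hmain
          _ = (B0 * G x) * G x := by ring
      exact le_of_mul_le_mul_right h6 hGx_pos
    have hlast : B0 * G x < 1 := by
      have h7 : B0 * G x ≤ B0 * (1/(B0+1)) := mul_le_mul_of_nonneg_left hGx_inv.le hB00
      have h8 : B0 * (1/(B0+1)) < 1 := by
        rw [mul_one_div, div_lt_one (by positivity)]
        linarith
      exact lt_of_le_of_lt h7 h8
    exact absurd hone (not_le.mpr hlast)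
  · push_neg at hcase
    obtain ⟨δ, hδ0, hall⟩ := hcase
    set d : ℝ := min (δ/2) (1/2) with hd
    have hd0 : 0 < d := lt_min (by linarith) (by norm_num)
    have hd2 : d ≤ 1/2 := min_le_right _ _
    have hdδ : d < δ := lt_of_le_of_lt (min_le_left _ _) (by linarith)
    set α : ℝ := max 0 (z - d) with hα
    set β : ℝ := min 1 (z + d) with hβ
    have h0α : 0 ≤ α := le_max_left _ _
    have hβ1 : β ≤ 1 := min_le_left _ _
    have hαz : α ≤ z := max_le hz_mem.1 (by linarith)
    have hzβ : z ≤ β := le_min hz_mem.2 (by linarith)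
    have hαd : z - d ≤ α := le_max_right _ _
    have hβd : β ≤ z + d := min_le_right _ _
    have hβα : α + d ≤ β := by
      rcases le_or_gt (z + d) 1 with h | h
      · have hβ' : β = z + d := min_eq_right h
        rw [hβ']; linarith
      · have hβ' : β = 1 := min_eq_left h.le
        have hα' : α = z - d := max_eq_right (by linarith [hz_mem.2])
        rw [hβ', hα']; linarith [hz_mem.2]
    have hαβ : α < β := by linarith
    have hsub : Set.Icc α β ⊆ Set.Icc (0:ℝ) 1 := Set.Icc_subset_Icc h0α hβ1
    have hnear : ∀ x ∈ Set.Icc α β, |x - z| < δ := by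
      intro x hx
      rw [abs_lt]
      exact ⟨by linarith [hx.1], by linarith [hx.2]⟩
    have hφconst : ∀ x ∈ Set.Icc α β, Real.cos (ustar x) = t :=
      fun x hx => hall x (hsub hx) (hnear x hx)
    have hu_const : ∀ x ∈ Set.Icc α β, Ω x / κ = σ := by
      intro x hx
      have e1 : Real.sin (ustar x) = Ω x / κ := hψ_eq x (hsub hx)
      have e2 := Real.sin_sq_add_cos_sq (ustar x)
      rw [e1, hφconst x hx] at e2
      have hsq : (Ω x / κ - σ) * (Ω x / κ + σ) = 0 := by linear_combination e2 - hσsq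
      rcases mul_eq_zero.mp hsq with h2 | h2
      · linarith
      · -- Ω x / κ = -σ
        by_cases hσz : σ = 0
        · rw [hσz]; linarith [hσz ▸ h2]
        · exfalso
          have hσpos : 0 < σ := lt_of_le_of_ne hσ0 (Ne.symm hσz)
          have htlt : t < 1 := by
            refine lt_of_le_of_ne ht1 (fun hteq => ?_)
            rw [hteq] at hσsq
            norm_num at hσsq
            exact hσz hσsq
          have hsubx : Set.uIcc x z ⊆ Set.Icc α β := Set.uIcc_subset_Icc hx ⟨hαz, hzβ⟩
          have hmem0 : (0:ℝ) ∈ Set.uIcc (Ω x) (Ω z) := by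
            rw [Set.mem_uIcc]
            left
            constructor
            · have hx2 : Ω x = -(σ * κ) := by
                have h2' := h2
                field_simp at h2'
                linarith
              rw [hx2]
              linarith [mul_nonneg hσ0 hκ0.le]
            · rw [hΩz]; positivity
          obtain ⟨x₂, hx₂, hΩx₂⟩ :=
            intermediate_value_uIcc (hΩ_cont.mono ((hsubx.trans hsub))) hmem0
          have hcos1 : Real.cos (ustar x₂) = 1 := by
            rw [hustar, hΩx₂, zero_div, Real.arcsin_zero, Real.cos_zero]
          have := hφconst x₂ (hsubx hx₂)
          linarith
    -- the wiggle function
    set c : ℝ := 2 * Real.pi / (β - α) with hc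
    have hβα0 : β - α ≠ 0 := by linarith
    set w : ℝ → ℝ := fun x => Real.sin (c * (min β (max α x) - α)) with hw_def
    set v : ℝ → ℂ := fun x => ((w x : ℝ) : ℂ) with hv_def
    have hw_cont : Continuous w := by
      apply Real.continuous_sin.comp
      exact continuous_const.mul ((continuous_const.min (continuous_const.max continuous_id)).sub continuous_const)
    have hv_cont : ContinuousOn v (Set.Icc (0:ℝ) 1) :=
      (Complex.continuous_ofReal.comp hw_cont).continuousOn
    have hw_left : ∀ x, x ≤ α → w x = 0 := by
      intro x hx
      simp only [hw_def]
      rw [max_eq_left hx, min_eq_right hαβ.le, sub_self, mul_zero, Real.sin_zero]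
    have hw_right : ∀ x, β ≤ x → w x = 0 := by
      intro x hx
      simp only [hw_def]
      rw [max_eq_right (le_trans hαβ.le hx), min_eq_left hx]
      have : c * (β - α) = 2 * Real.pi := by
        rw [hc]; field_simp
      rw [this, Real.sin_two_pi]
    have hw_in : ∀ x ∈ Set.Icc α β, w x = Real.sin (c * (x - α)) := by
      intro x hx
      simp only [hw_def]
      rw [max_eq_right hx.1, min_eq_right hx.2]
    have hc0 : c ≠ 0 := by
      rw [hc]
      positivity
    have hwint : (∫ y in α..β, w y) = 0 := by
      rw [intervalIntegral.integral_congr (g := fun y => Real.sin (c * (y - α)))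
        (fun y hy => hw_in y (by rwa [Set.uIcc_of_le hαβ.le] at hy))]
      have h2 : (∫ y in α..β, Real.sin (c * (y - α)))
          = ∫ y in (0:ℝ)..(β - α), Real.sin (c * y) := by
        have := intervalIntegral.integral_comp_sub_right (fun u => Real.sin (c * u)) α
          (a := α) (b := β)
        rw [this, sub_self]
      rw [h2, intervalIntegral.integral_comp_mul_left Real.sin hc0, mul_zero]
      have : c * (β - α) = 2 * Real.pi := by rw [hc]; field_simp
      rw [this, integral_sin, Real.cos_zero, Real.cos_two_pi, sub_self, smul_zero]
    have hvαβ : (∫ y in α..β, v y) = 0 := by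
      simp only [hv_def]
      rw [intervalIntegral.integral_ofReal, hwint, Complex.ofReal_zero]
    have key_int : ∀ (q : ℝ → ℂ) (qc : ℂ), ContinuousOn q (Set.Icc (0:ℝ) 1) →
        (∀ y ∈ Set.Icc α β, q y = qc) → (∫ y in (0:ℝ)..1, q y * v y) = 0 := by
      intro q qc hqcont hq
      rw [split3 (fun y => q y * v y) (hqcont.mul hv_cont) h0α hαβ.le hβ1]
      have p1 : (∫ y in (0:ℝ)..α, q y * v y) = 0 := by
        rw [intervalIntegral.integral_congr (g := fun _ => (0:ℂ)) ?_,
          intervalIntegral.integral_zero]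
        intro y hy
        rw [Set.uIcc_of_le h0α] at hy
        have hv0 : v y = 0 := by
          simp only [hv_def]; rw [hw_left y hy.2, Complex.ofReal_zero]
        simp [hv0]
      have p3 : (∫ y in β..(1:ℝ), q y * v y) = 0 := by
        rw [intervalIntegral.integral_congr (g := fun _ => (0:ℂ)) ?_,
          intervalIntegral.integral_zero]
        intro y hy
        rw [Set.uIcc_of_le hβ1] at hy
        have hv0 : v y = 0 := by
          simp only [hv_def]; rw [hw_right y hy.1, Complex.ofReal_zero]
        simp [hv0]
      have p2 : (∫ y in α..β, q y * v y) = 0 := by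
        rw [intervalIntegral.integral_congr (g := fun y => qc * v y) ?_,
          intervalIntegral.integral_const_mul, hvαβ, mul_zero]
        intro y hy
        rw [Set.uIcc_of_le hαβ.le] at hy
        simp only []
        rw [hq y hy]
      rw [p1, p2, p3]
      ring
    have hv_mem : memXC v := by
      refine ⟨hv_cont, ?_⟩
      have := key_int (fun _ => (1:ℂ)) 1 continuousOn_const (fun y _ => rfl)
      simpa using this
    have hA : (∫ y in (0:ℝ)..1, ((Real.cos (ustar y) : ℝ) : ℂ) * v y) = 0 := by
      refine key_int (fun y => ((Real.cos (ustar y) : ℝ) : ℂ)) ((t:ℝ):ℂ) ?_ ?_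
      · exact Complex.continuous_ofReal.comp_continuousOn hφ_cont
      · intro y hy
        rw [hφconst y hy]
    have hB : (∫ y in (0:ℝ)..1, ((Real.sin (ustar y) : ℝ) : ℂ) * v y) = 0 := by
      refine key_int (fun y => ((Real.sin (ustar y) : ℝ) : ℂ)) ((σ:ℝ):ℂ) ?_ ?_
      · exact Complex.continuous_ofReal.comp_continuousOn hψ_cont
      · intro y hy
        rw [hψ_eq y (hsub hy), hu_const y hy]
    have heq : ∀ x ∈ Set.Icc (0:ℝ) 1, LER K p ustar v x - (lam:ℂ) * v x = 0 := by
      intro x hx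
      rw [LER_expand K p ustar hu_cont v hv_cont x, hA, hB, hS, ← hC]
      by_cases hxin : x ∈ Set.Icc α β
      · rw [hφconst x hxin, hlam_eq]
        push_cast
        ring
      · have hvx : v x = 0 := by
          simp only [hv_def]
          rcases lt_or_ge x α with h | h
          · rw [hw_left x h.le, Complex.ofReal_zero]
          · have hβx : β ≤ x := by
              by_contra hcon
              push_neg at hcon
              exact hxin ⟨h, hcon.le⟩
            rw [hw_right x hβx, Complex.ofReal_zero]
        rw [hvx]
        push_cast
        ring
    -- contradiction at the quarter point
    have hq_in : α + (β - α)/4 ∈ Set.Icc α β := ⟨by linarith, by linarith⟩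
    have hvq := hinj v hv_mem heq (α + (β - α)/4) (hsub hq_in)
    have hwq : w (α + (β - α)/4) = 1 := by
      rw [hw_in _ hq_in]
      have : c * (α + (β - α)/4 - α) = Real.pi / 2 := by
        rw [hc]; field_simp; ring
      rw [this, Real.sin_pi_div_two]
    have hvq' : ((w (α + (β - α)/4) : ℝ) : ℂ) = 0 := hvq
    rw [hwq] at hvq'
    exact one_ne_zero (show (1:ℝ) = 0 by exact_mod_cast hvq')
end

section
/- Suppose in addition that κ > 1 and that (1/(κC)) ∫₀¹ Ω(y)² / √(κ² − Ω(y)²) dy = 1. Then the function v(x) = Ω(x)/√(1 − Ω(x)²/κ²) is a nonzero element of X (it is continuous with ∫₀¹ v(x) dx = 0) and satisfies Lv = 0; in particular 0 is an eigenvalue of L : X → X. -/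
open MeasureTheory intervalIntegral

lemma odd_half_integral (f : ℝ → ℝ) (h : ∀ x ∈ Set.Icc (0:ℝ) 1, f (1 - x) = - f x) :
    (∫ x in (0:ℝ)..1, f x) = 0 := by
  have h1 : (∫ x in (0:ℝ)..1, f (1 - x)) = ∫ x in (0:ℝ)..1, f x := by
    simpa using intervalIntegral.integral_comp_sub_left f 1
  have h2 : (∫ x in (0:ℝ)..1, f (1 - x)) = ∫ x in (0:ℝ)..1, - f x := by
    apply intervalIntegral.integral_congr
    intro x hx
    rw [Set.uIcc_of_le zero_le_one] at hx
    exact h x hx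
  rw [h2, intervalIntegral.integral_neg] at h1
  linarith

/-- In the Erdős–Rényi Kuramoto setting (`Ω : [0,1] → [−1,1]` continuous and
odd about `x = 1/2`, `K > 0`, `p ∈ (0,1]`, `κ > 1`, `u*(x) = arcsin(Ω(x)/κ)`,
`C = ∫₀¹ cos(u*(y)) dy`, `(Lv)(x) = Kp ∫₀¹ cos(u*(y) − u*(x))(v(y) − v(x)) dy`), if
`(1/(κC)) ∫₀¹ Ω(y)²/√(κ² − Ω(y)²) dy = 1`, then `v(x) = Ω(x)/√(1 − Ω(x)²/κ²)` is a nonzero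
element of `X` (continuous on `[0,1]` with `∫₀¹ v = 0`) satisfying `Lv = 0` on `[0,1]`;
in particular `0` is an eigenvalue of `L : X → X`. -/
theorem stmt_5 (K p : ℝ) (hK : 0 < K) (hp : p ∈ Set.Ioc (0:ℝ) 1)
    (Ω : ℝ → ℝ)
    (hΩ_cont : ContinuousOn Ω (Set.Icc (0:ℝ) 1))
    (hΩ_range : ∀ x ∈ Set.Icc (0:ℝ) 1, Ω x ∈ Set.Icc (-1:ℝ) 1)
    (hΩ_odd : ∀ x ∈ Set.Icc (0:ℝ) 1, Ω (1 - x) = -Ω x)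
    (κ : ℝ) (hκ : 1 < κ)
    (ustar : ℝ → ℝ) (hustar : ∀ x, ustar x = Real.arcsin (Ω x / κ))
    (C : ℝ) (hC : C = ∫ y in (0:ℝ)..1, Real.cos (ustar y))
    (hzero : (1 / (κ * C)) *
        ∫ y in (0:ℝ)..1, (Ω y)^2 / Real.sqrt (κ^2 - (Ω y)^2) = 1)
    (v : ℝ → ℝ) (hv : ∀ x, v x = Ω x / Real.sqrt (1 - (Ω x)^2 / κ^2)) :
    ContinuousOn v (Set.Icc (0:ℝ) 1)
    ∧ (∫ x in (0:ℝ)..1, v x) = 0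
    ∧ (∃ x ∈ Set.Icc (0:ℝ) 1, v x ≠ 0)
    ∧ ∀ x ∈ Set.Icc (0:ℝ) 1,
        K * p * ∫ y in (0:ℝ)..1, Real.cos (ustar y - ustar x) * (v y - v x) = 0 := by
  have hκ0 : (0:ℝ) < κ := by linarith
  -- basic positivity facts
  have hsq : ∀ x ∈ Set.Icc (0:ℝ) 1, (Ω x)^2 ≤ 1 := by
    intro x hx
    have h := hΩ_range x hx
    nlinarith [h.1, h.2]
  have hd : ∀ x ∈ Set.Icc (0:ℝ) 1, 0 < 1 - (Ω x)^2 / κ^2 := by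
    intro x hx
    have h1 := hsq x hx
    have h2 : (1:ℝ) < κ^2 := by nlinarith
    rw [sub_pos, div_lt_one (by positivity)]
    linarith
  have hd2 : ∀ x ∈ Set.Icc (0:ℝ) 1, 0 < κ^2 - (Ω x)^2 := by
    intro x hx
    have h1 := hsq x hx
    nlinarith
  have hsd : ∀ x ∈ Set.Icc (0:ℝ) 1, 0 < Real.sqrt (1 - (Ω x)^2 / κ^2) := by
    intro x hx; exact Real.sqrt_pos.2 (hd x hx)
  -- cos, sin of ustar
  have hcos : ∀ x ∈ Set.Icc (0:ℝ) 1,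
      Real.cos (ustar x) = Real.sqrt (1 - (Ω x)^2 / κ^2) := by
    intro x hx
    rw [hustar, Real.cos_arcsin, div_pow]
  have hsin : ∀ x ∈ Set.Icc (0:ℝ) 1, Real.sin (ustar x) = Ω x / κ := by
    intro x hx
    have h := hΩ_range x hx
    rw [hustar, Real.sin_arcsin]
    · rw [le_div_iff₀ hκ0]; nlinarith [h.1]
    · rw [div_le_one hκ0]; nlinarith [h.2]
  -- product identities
  have hcosv : ∀ x ∈ Set.Icc (0:ℝ) 1, Real.cos (ustar x) * v x = Ω x := by
    intro x hx
    rw [hcos x hx, hv, mul_comm, div_mul_cancel₀ _ (hsd x hx).ne']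
  have hsqrtκ : ∀ x ∈ Set.Icc (0:ℝ) 1,
      Real.sqrt (κ^2 - (Ω x)^2) = κ * Real.sqrt (1 - (Ω x)^2 / κ^2) := by
    intro x hx
    have : κ^2 - (Ω x)^2 = κ^2 * (1 - (Ω x)^2 / κ^2) := by
      field_simp
    rw [this, Real.sqrt_mul (sq_nonneg κ), Real.sqrt_sq hκ0.le]
  have hsinv : ∀ x ∈ Set.Icc (0:ℝ) 1,
      (Ω x / κ) * v x = (Ω x)^2 / Real.sqrt (κ^2 - (Ω x)^2) := by
    intro x hx
    rw [hv, hsqrtκ x hx, div_mul_div_comm]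
    ring
  -- continuity of v
  have hv' : v = fun x => Ω x / Real.sqrt (1 - (Ω x)^2 / κ^2) := funext hv
  have hcont_v : ContinuousOn v (Set.Icc (0:ℝ) 1) := by
    rw [hv']
    apply hΩ_cont.div
    · exact Real.continuous_sqrt.comp_continuousOn
        (continuousOn_const.sub ((hΩ_cont.pow 2).div_const _))
    · intro x hx; exact (hsd x hx).ne'
  -- v odd about 1/2
  have hv_odd : ∀ x ∈ Set.Icc (0:ℝ) 1, v (1 - x) = - v x := by
    intro x hx
    rw [hv, hv, hΩ_odd x hx]
    rw [neg_pow, neg_div]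
    ring_nf
  -- integral of v is 0
  have hint_v : (∫ x in (0:ℝ)..1, v x) = 0 := odd_half_integral v hv_odd
  -- integral of Ω is 0
  have hint_Ω : (∫ x in (0:ℝ)..1, Ω x) = 0 := odd_half_integral Ω hΩ_odd
  -- κC ≠ 0 and the key integral value
  have hκC : κ * C ≠ 0 := by
    intro h
    rw [h] at hzero
    simp at hzero
  have hI : (∫ y in (0:ℝ)..1, (Ω y)^2 / Real.sqrt (κ^2 - (Ω y)^2)) = κ * C := by
    field_simp at hzero
    rw [div_eq_iff (right_ne_zero_of_mul hκC)] at hzero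
    linarith [hzero]
  refine ⟨hcont_v, hint_v, ?_, ?_⟩
  · -- nonzero
    by_contra h
    push_neg at h
    have hΩ0 : ∀ x ∈ Set.Icc (0:ℝ) 1, Ω x = 0 := by
      intro x hx
      have := h x hx
      rw [hv] at this
      exact (div_eq_zero_iff.1 this).resolve_right (hsd x hx).ne'
    have : (∫ y in (0:ℝ)..1, (Ω y)^2 / Real.sqrt (κ^2 - (Ω y)^2)) = 0 := by
      rw [intervalIntegral.integral_congr (g := fun _ => (0:ℝ))]
      · simp
      · intro y hy
        rw [Set.uIcc_of_le zero_le_one] at hy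
        simp [hΩ0 y hy]
    rw [this, mul_zero] at hzero
    exact zero_ne_one hzero
  · -- Lv = 0
    intro x hx
    have ha := hcos x hx
    have hb := hsin x hx
    -- pointwise rewrite of integrand
    have key : ∀ y ∈ Set.Icc (0:ℝ) 1,
        Real.cos (ustar y - ustar x) * (v y - v x) =
          (Real.cos (ustar x) - v x * (Ω x / κ) / κ) * Ω y
          + (Ω x / κ) * ((Ω y)^2 / Real.sqrt (κ^2 - (Ω y)^2))
          - Ω x * Real.cos (ustar y) := by
      intro y hy
      rw [Real.cos_sub, hsin y hy, hb]
      linear_combination (Real.cos (ustar x)) * hcosv y hy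
        - (Real.cos (ustar y)) * hcosv x hx + (Ω x / κ) * hsinv y hy
    have hcongr : (∫ y in (0:ℝ)..1, Real.cos (ustar y - ustar x) * (v y - v x))
        = ∫ y in (0:ℝ)..1,
          ((Real.cos (ustar x) - v x * (Ω x / κ) / κ) * Ω y
          + (Ω x / κ) * ((Ω y)^2 / Real.sqrt (κ^2 - (Ω y)^2))
          - Ω x * Real.cos (ustar y)) := by
      apply intervalIntegral.integral_congr
      intro y hy
      rw [Set.uIcc_of_le zero_le_one] at hy
      exact key y hy
    -- integrability
    have huIcc : Set.uIcc (0:ℝ) 1 = Set.Icc 0 1 := Set.uIcc_of_le zero_le_one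
    have hint1 : IntervalIntegrable Ω volume 0 1 := by
      apply ContinuousOn.intervalIntegrable; rw [huIcc]; exact hΩ_cont
    have hcontg2 : ContinuousOn (fun y => (Ω y)^2 / Real.sqrt (κ^2 - (Ω y)^2))
        (Set.Icc (0:ℝ) 1) := by
      apply (hΩ_cont.pow 2).div
      · exact Real.continuous_sqrt.comp_continuousOn
          (continuousOn_const.sub (hΩ_cont.pow 2))
      · intro y hy
        exact (Real.sqrt_pos.2 (hd2 y hy)).ne'
    have hint2 : IntervalIntegrable (fun y => (Ω y)^2 / Real.sqrt (κ^2 - (Ω y)^2))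
        volume 0 1 := by
      apply ContinuousOn.intervalIntegrable; rw [huIcc]; exact hcontg2
    have hcontu : ContinuousOn (fun y => Real.cos (ustar y)) (Set.Icc (0:ℝ) 1) := by
      have : (fun y => Real.cos (ustar y))
          = fun y => Real.cos (Real.arcsin (Ω y / κ)) := by
        funext y; rw [hustar]
      rw [this]
      exact Real.continuous_cos.comp_continuousOn
        (Real.continuous_arcsin.comp_continuousOn (hΩ_cont.div_const _))
    have hint3 : IntervalIntegrable (fun y => Real.cos (ustar y)) volume 0 1 := by
      apply ContinuousOn.intervalIntegrable; rw [huIcc]; exact hcontu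
    rw [hcongr, intervalIntegral.integral_sub
        (((hint1.const_mul _).add (hint2.const_mul _))) (hint3.const_mul _),
      intervalIntegral.integral_add (hint1.const_mul _) (hint2.const_mul _),
      intervalIntegral.integral_const_mul, intervalIntegral.integral_const_mul,
      intervalIntegral.integral_const_mul, hint_Ω, hI, ← hC]
    have hq : Ω x / κ * (κ * C) = Ω x * C := by
      field_simp
    rw [hq]
    ring
end

section
/- Suppose in addition that κ > 1. Then the spectrum of L on X_ℂ is contained in the real line, and if moreover (1/(κC)) ∫₀¹ Ω(y)² / √(κ² − Ω(y)²) dy < 1, then the spectrum of L on X_ℂ is contained in {z ∈ ℂ : Re z < 0} (i.e. the synchronous solution u* is spectrally stable). -/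
open MeasureTheory intervalIntegral

private lemma IIc {f : ℝ → ℂ} (hf : ContinuousOn f (Set.Icc (0:ℝ) 1)) :
    IntervalIntegrable f MeasureTheory.volume 0 1 :=
  ContinuousOn.intervalIntegrable (by rwa [Set.uIcc_of_le zero_le_one])

private lemma IIr {f : ℝ → ℝ} (hf : ContinuousOn f (Set.Icc (0:ℝ) 1)) :
    IntervalIntegrable f MeasureTheory.volume 0 1 :=
  ContinuousOn.intervalIntegrable (by rwa [Set.uIcc_of_le zero_le_one])

private lemma odd_integral_zero (f : ℝ → ℂ)
    (hf : ∀ x ∈ Set.Icc (0:ℝ) 1, f (1 - x) = - f x) :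
    (∫ x in (0:ℝ)..1, f x) = 0 := by
  have h1 : (∫ x in (0:ℝ)..1, f (1 - x)) = ∫ x in (0:ℝ)..1, f x := by
    simpa using intervalIntegral.integral_comp_sub_left f 1
  have h2 : (∫ x in (0:ℝ)..1, f (1 - x)) = ∫ x in (0:ℝ)..1, - f x :=
    intervalIntegral.integral_congr fun x hx =>
      hf x (by rwa [Set.uIcc_of_le zero_le_one] at hx)
  rw [intervalIntegral.integral_neg] at h2
  have h3 := h1.symm.trans h2
  linear_combination h3 / 2

private lemma real_integral_vanish {w : ℝ → ℝ} {μf : ℝ → ℂ} {t : ℝ}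
    (hw : ContinuousOn w (Set.Icc (0:ℝ) 1)) (hw0 : ∀ x ∈ Set.Icc (0:ℝ) 1, 0 ≤ w x)
    (hμc : ContinuousOn μf (Set.Icc (0:ℝ) 1)) (hμ0 : ∀ x ∈ Set.Icc (0:ℝ) 1, μf x ≠ 0)
    (ht : t ≠ 0) (hμim : ∀ x ∈ Set.Icc (0:ℝ) 1, (μf x).im = t)
    (him : (∫ x in (0:ℝ)..1, (w x : ℂ) / μf x).im = 0) :
    (∫ x in (0:ℝ)..1, (w x : ℂ) / μf x) = 0 ∧ (∫ x in (0:ℝ)..1, w x) = 0 := by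
  have hwc : ContinuousOn (fun x => ((w x : ℝ) : ℂ)) (Set.Icc (0:ℝ) 1) :=
    Complex.continuous_ofReal.comp_continuousOn hw
  have hII : IntervalIntegrable (fun x => (w x : ℂ) / μf x) MeasureTheory.volume 0 1 :=
    IIc (hwc.div hμc hμ0)
  have him2 : (∫ x in (0:ℝ)..1, ((w x : ℂ) / μf x).im) = 0 := by
    have h : (∫ x in (0:ℝ)..1, ((w x : ℂ) / μf x).im)
        = (∫ x in (0:ℝ)..1, (w x : ℂ) / μf x).im := by
      simpa using Complex.imCLM.intervalIntegral_comp_comm hII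
    rw [h, him]
  have hpt : ∀ x ∈ Set.Icc (0:ℝ) 1,
      ((w x : ℂ) / μf x).im = (-t) * (w x / Complex.normSq (μf x)) := by
    intro x hx
    rw [Complex.div_im, hμim x hx]
    simp [div_eq_mul_inv]
    ring
  have hkey : (∫ x in (0:ℝ)..1, w x / Complex.normSq (μf x)) = 0 := by
    have h4 : (∫ x in (0:ℝ)..1, ((w x : ℂ) / μf x).im)
        = (-t) * ∫ x in (0:ℝ)..1, w x / Complex.normSq (μf x) := by
      rw [intervalIntegral.integral_congr (g := fun x => (-t) * (w x / Complex.normSq (μf x)))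
        (fun x hx => hpt x (by rwa [Set.uIcc_of_le zero_le_one] at hx)),
        intervalIntegral.integral_const_mul]
    rw [him2] at h4
    have := h4.symm
    rcases mul_eq_zero.mp this with h | h
    · exact absurd (neg_eq_zero.mp h) ht
    · exact h
  have hnsq : ContinuousOn (fun x => Complex.normSq (μf x)) (Set.Icc (0:ℝ) 1) :=
    Complex.continuous_normSq.comp_continuousOn hμc
  have hnsq0 : ∀ x ∈ Set.Icc (0:ℝ) 1, Complex.normSq (μf x) ≠ 0 := fun x hx =>
    fun h => hμ0 x hx (Complex.normSq_eq_zero.mp h)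
  have hIIq : IntervalIntegrable (fun x => w x / Complex.normSq (μf x))
      MeasureTheory.volume 0 1 := IIr (hw.div hnsq hnsq0)
  have hnn : (0:ℝ → ℝ) ≤ᵐ[MeasureTheory.volume.restrict (Set.Ioc (0:ℝ) 1)]
      fun x => w x / Complex.normSq (μf x) := by
    rw [Filter.EventuallyLE]
    rw [ae_restrict_iff' measurableSet_Ioc]
    exact Filter.Eventually.of_forall fun x hx =>
      div_nonneg (hw0 x (Set.Ioc_subset_Icc_self hx)) (Complex.normSq_nonneg _)
  have hae := (intervalIntegral.integral_eq_zero_iff_of_le_of_nonneg_ae zero_le_one hnn hIIq).mp hkey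
  have hae' : ∀ᵐ x ∂(MeasureTheory.volume : Measure ℝ), x ∈ Set.Ioc (0:ℝ) 1 → w x = 0 := by
    have := (ae_restrict_iff' measurableSet_Ioc).mp hae
    filter_upwards [this] with x hx hx2
    have h5 := hx hx2
    simp only [Pi.zero_apply] at h5
    rcases div_eq_zero_iff.mp h5 with h | h
    · exact h
    · exact absurd h (hnsq0 x (Set.Ioc_subset_Icc_self hx2))
  constructor
  · rw [intervalIntegral.integral_congr_ae' (g := fun _ => (0:ℂ))
      (by filter_upwards [hae'] with x hx hx2; rw [hx hx2]; simp)
      (by filter_upwards with x hx2; simp at hx2)]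
    simp
  · rw [intervalIntegral.integral_congr_ae' (g := fun _ => (0:ℝ))
      (by filter_upwards [hae'] with x hx hx2; rw [hx hx2])
      (by filter_upwards with x hx2; simp at hx2)]
    simp

private lemma master (K p : ℝ) (hKp : 0 < K * p) (ustar : ℝ → ℝ)
    (hu : ContinuousOn ustar (Set.Icc (0:ℝ) 1))
    (hsym : ∀ x ∈ Set.Icc (0:ℝ) 1, ustar (1 - x) = - ustar x)
    (C : ℝ) (hCdef : C = ∫ y in (0:ℝ)..1, Real.cos (ustar y)) (hC0 : C ≠ 0)
    (z : ℂ) (μf : ℝ → ℂ)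
    (hμdef : ∀ y, μf y = ((K * p * C * Real.cos (ustar y) : ℝ) : ℂ) + z)
    (hμ0 : ∀ x ∈ Set.Icc (0:ℝ) 1, μf x ≠ 0)
    (hJc : (∫ y in (0:ℝ)..1, ((Real.cos (ustar y) : ℝ) : ℂ) / μf y) ≠ 0)
    (hDs : ((K * p : ℝ) : ℂ) * (∫ y in (0:ℝ)..1, ((Real.sin (ustar y) : ℝ) : ℂ) * ((Real.sin (ustar y) : ℝ) : ℂ) / μf y) ≠ 1) :
    IsInResolventER K p ustar z := by
  have hIccU : Set.uIcc (0:ℝ) 1 = Set.Icc (0:ℝ) 1 := Set.uIcc_of_le zero_le_one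
  have hKP0 : ((K * p : ℝ) : ℂ) ≠ 0 := Complex.ofReal_ne_zero.mpr hKp.ne'
  have hCC0 : ((C : ℝ) : ℂ) ≠ 0 := Complex.ofReal_ne_zero.mpr hC0
  have hden : ((K * p : ℝ) : ℂ) * (∫ y in (0:ℝ)..1, ((Real.cos (ustar y) : ℝ) : ℂ) / μf y) ≠ 0 := mul_ne_zero hKP0 hJc
  have hden2 : ((K * p : ℝ) : ℂ) * (∫ y in (0:ℝ)..1, ((Real.sin (ustar y) : ℝ) : ℂ) * ((Real.sin (ustar y) : ℝ) : ℂ) / μf y) - 1 ≠ 0 := sub_ne_zero_of_ne hDs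
  have hcR : ContinuousOn (fun y => Real.cos (ustar y)) (Set.Icc (0:ℝ) 1) :=
    Real.continuous_cos.comp_continuousOn hu
  have hsR : ContinuousOn (fun y => Real.sin (ustar y)) (Set.Icc (0:ℝ) 1) :=
    Real.continuous_sin.comp_continuousOn hu
  have hcC : ContinuousOn (fun y => ((Real.cos (ustar y) : ℝ) : ℂ)) (Set.Icc (0:ℝ) 1) :=
    Complex.continuous_ofReal.comp_continuousOn hcR
  have hsC : ContinuousOn (fun y => ((Real.sin (ustar y) : ℝ) : ℂ)) (Set.Icc (0:ℝ) 1) :=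
    Complex.continuous_ofReal.comp_continuousOn hsR
  have hμC : ContinuousOn μf (Set.Icc (0:ℝ) 1) := by
    apply ContinuousOn.congr
      ((Complex.continuous_ofReal.comp_continuousOn (continuousOn_const.mul hcR)).add
        continuousOn_const)
    exact fun y _ => hμdef y
  have hce : ∀ x ∈ Set.Icc (0:ℝ) 1, Real.cos (ustar (1 - x)) = Real.cos (ustar x) :=
    fun x hx => by rw [hsym x hx, Real.cos_neg]
  have hse : ∀ x ∈ Set.Icc (0:ℝ) 1, Real.sin (ustar (1 - x)) = - Real.sin (ustar x) :=
    fun x hx => by rw [hsym x hx, Real.sin_neg]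
  have hμe : ∀ x ∈ Set.Icc (0:ℝ) 1, μf (1 - x) = μf x :=
    fun x hx => by rw [hμdef, hμdef, hce x hx]
  have hs0 : (∫ y in (0:ℝ)..1, ((Real.sin (ustar y) : ℝ) : ℂ)) = 0 :=
    odd_integral_zero _ fun x hx => by rw [hse x hx]; push_cast; ring
  have hsμ0 : (∫ y in (0:ℝ)..1, ((Real.sin (ustar y) : ℝ) : ℂ) / μf y) = 0 :=
    odd_integral_zero _ fun x hx => by rw [hse x hx, hμe x hx]; push_cast; ring
  have hcsμ0 : (∫ y in (0:ℝ)..1, ((Real.cos (ustar y) : ℝ) : ℂ) * ((Real.sin (ustar y) : ℝ) : ℂ) / μf y) = 0 :=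
    odd_integral_zero _ fun x hx => by rw [hse x hx, hce x hx, hμe x hx]; push_cast; ring
  have hscμ0 : (∫ y in (0:ℝ)..1, ((Real.sin (ustar y) : ℝ) : ℂ) * ((Real.cos (ustar y) : ℝ) : ℂ) / μf y) = 0 :=
    odd_integral_zero _ fun x hx => by rw [hse x hx, hce x hx, hμe x hx]; push_cast; ring
  have hCint : (∫ y in (0:ℝ)..1, ((Real.cos (ustar y) : ℝ) : ℂ)) = ((C : ℝ) : ℂ) := by
    rw [intervalIntegral.integral_ofReal, ← hCdef]
  have hII_c : IntervalIntegrable (fun y => ((Real.cos (ustar y) : ℝ) : ℂ)) MeasureTheory.volume 0 1 := IIc hcC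
  have hII_s : IntervalIntegrable (fun y => ((Real.sin (ustar y) : ℝ) : ℂ)) MeasureTheory.volume 0 1 := IIc hsC
  have hLER : ∀ v : ℝ → ℂ, ContinuousOn v (Set.Icc (0:ℝ) 1) → ∀ x ∈ Set.Icc (0:ℝ) 1,
      LER K p ustar v x - z * v x
        = ((K * p : ℝ) : ℂ) * (((Real.cos (ustar x) : ℝ) : ℂ) * (∫ y in (0:ℝ)..1, ((Real.cos (ustar y) : ℝ) : ℂ) * v y) + ((Real.sin (ustar x) : ℝ) : ℂ) * (∫ y in (0:ℝ)..1, ((Real.sin (ustar y) : ℝ) : ℂ) * v y)) - μf x * v x := by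
    intro v hv x hx
    have hIIcv : IntervalIntegrable (fun y => ((Real.cos (ustar y) : ℝ) : ℂ) * v y) MeasureTheory.volume 0 1 := IIc (hcC.mul hv)
    have hIIsv : IntervalIntegrable (fun y => ((Real.sin (ustar y) : ℝ) : ℂ) * v y) MeasureTheory.volume 0 1 := IIc (hsC.mul hv)
    have hsplit : (∫ y in (0:ℝ)..1, ((Real.cos (ustar y - ustar x) : ℝ) : ℂ) * (v y - v x))
        = (∫ y in (0:ℝ)..1, (((Real.cos (ustar x) : ℝ) : ℂ) * (((Real.cos (ustar y) : ℝ) : ℂ) * v y)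
            + ((Real.sin (ustar x) : ℝ) : ℂ) * (((Real.sin (ustar y) : ℝ) : ℂ) * v y)
            - (((Real.cos (ustar y) : ℝ) : ℂ) * ((Real.cos (ustar x) : ℝ) : ℂ) + ((Real.sin (ustar y) : ℝ) : ℂ) * ((Real.sin (ustar x) : ℝ) : ℂ)) * v x)) :=
      intervalIntegral.integral_congr fun y _ => by rw [Real.cos_sub]; push_cast; ring
    unfold LER
    rw [hsplit, intervalIntegral.integral_sub
        ((hIIcv.const_mul _).add (hIIsv.const_mul _))
        (((hII_c.mul_const _).add (hII_s.mul_const _)).mul_const _),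
      intervalIntegral.integral_add (hIIcv.const_mul _) (hIIsv.const_mul _),
      intervalIntegral.integral_const_mul, intervalIntegral.integral_const_mul,
      intervalIntegral.integral_mul_const,
      intervalIntegral.integral_add (hII_c.mul_const _) (hII_s.mul_const _),
      intervalIntegral.integral_mul_const, intervalIntegral.integral_mul_const,
      hs0, hCint, hμdef x]
    push_cast
    ring
  have hwint : ∀ (a b : ℂ) (g : ℝ → ℂ), ContinuousOn g (Set.Icc (0:ℝ) 1) →
      ∀ (φ : ℝ → ℂ), ContinuousOn φ (Set.Icc (0:ℝ) 1) →
      (∫ y in (0:ℝ)..1, φ y * ((((K * p : ℝ) : ℂ) * (a * ((Real.cos (ustar y) : ℝ) : ℂ) + b * ((Real.sin (ustar y) : ℝ) : ℂ)) - g y) / μf y))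
        = a * (((K * p : ℝ) : ℂ) * ∫ y in (0:ℝ)..1, φ y * ((Real.cos (ustar y) : ℝ) : ℂ) / μf y)
          + b * (((K * p : ℝ) : ℂ) * ∫ y in (0:ℝ)..1, φ y * ((Real.sin (ustar y) : ℝ) : ℂ) / μf y)
          - ∫ y in (0:ℝ)..1, φ y * g y / μf y := by
    intro a b g hg φ hφ
    have h1 : IntervalIntegrable (fun y => φ y * ((Real.cos (ustar y) : ℝ) : ℂ) / μf y) MeasureTheory.volume 0 1 :=
      IIc ((hφ.mul hcC).div hμC hμ0)
    have h2 : IntervalIntegrable (fun y => φ y * ((Real.sin (ustar y) : ℝ) : ℂ) / μf y) MeasureTheory.volume 0 1 :=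
      IIc ((hφ.mul hsC).div hμC hμ0)
    have h3 : IntervalIntegrable (fun y => φ y * g y / μf y) MeasureTheory.volume 0 1 :=
      IIc ((hφ.mul hg).div hμC hμ0)
    have hpt : Set.EqOn
        (fun y => φ y * ((((K * p : ℝ) : ℂ) * (a * ((Real.cos (ustar y) : ℝ) : ℂ) + b * ((Real.sin (ustar y) : ℝ) : ℂ)) - g y) / μf y))
        (fun y => (a * ((K * p : ℝ) : ℂ)) * (φ y * ((Real.cos (ustar y) : ℝ) : ℂ) / μf y)
          + (b * ((K * p : ℝ) : ℂ)) * (φ y * ((Real.sin (ustar y) : ℝ) : ℂ) / μf y)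
          - φ y * g y / μf y) (Set.uIcc (0:ℝ) 1) := by
      intro y hy
      have h0 := hμ0 y (by rwa [hIccU] at hy)
      field_simp
    rw [intervalIntegral.integral_congr hpt,
      intervalIntegral.integral_sub ((h1.const_mul _).add (h2.const_mul _)) h3,
      intervalIntegral.integral_add (h1.const_mul _) (h2.const_mul _),
      intervalIntegral.integral_const_mul, intervalIntegral.integral_const_mul]
    ring
  have hDcId : ((C : ℝ) : ℂ) * (((K * p : ℝ) : ℂ) * (∫ y in (0:ℝ)..1, ((Real.cos (ustar y) : ℝ) : ℂ) * ((Real.cos (ustar y) : ℝ) : ℂ) / μf y)) = ((C : ℝ) : ℂ) - z * (∫ y in (0:ℝ)..1, ((Real.cos (ustar y) : ℝ) : ℂ) / μf y) := by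
    have h1 : IntervalIntegrable (fun y => ((Real.cos (ustar y) : ℝ) : ℂ) / μf y) MeasureTheory.volume 0 1 :=
      IIc (hcC.div hμC hμ0)
    have hpt : Set.EqOn (fun y => (((C : ℝ) : ℂ) * ((K * p : ℝ) : ℂ)) * (((Real.cos (ustar y) : ℝ) : ℂ) * ((Real.cos (ustar y) : ℝ) : ℂ) / μf y))
        (fun y => ((Real.cos (ustar y) : ℝ) : ℂ) - z * (((Real.cos (ustar y) : ℝ) : ℂ) / μf y)) (Set.uIcc (0:ℝ) 1) := by
      intro y hy
      have h0 := hμ0 y (by rwa [hIccU] at hy)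
      have he : μf y = ((K * p : ℝ) : ℂ) * (((C : ℝ) : ℂ) * ((Real.cos (ustar y) : ℝ) : ℂ)) + z := by rw [hμdef y]; push_cast; ring
      rw [he] at h0
      have hinv := mul_inv_cancel₀ h0
      simp only [he]
      linear_combination ((Real.cos (ustar y) : ℝ) : ℂ) * hinv
    rw [← mul_assoc, ← intervalIntegral.integral_const_mul,
      intervalIntegral.integral_congr hpt,
      intervalIntegral.integral_sub (IIc hcC) (h1.const_mul z),
      intervalIntegral.integral_const_mul, hCint]
  constructor
  · -- injectivity
    intro v hv hv0 x hx
    obtain ⟨hvc, hvm⟩ := hv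
    have hform : ∀ x' ∈ Set.Icc (0:ℝ) 1, v x'
        = ((K * p : ℝ) : ℂ) * ((∫ y in (0:ℝ)..1, ((Real.cos (ustar y) : ℝ) : ℂ) * v y) * ((Real.cos (ustar x') : ℝ) : ℂ) + (∫ y in (0:ℝ)..1, ((Real.sin (ustar y) : ℝ) : ℂ) * v y) * ((Real.sin (ustar x') : ℝ) : ℂ)) / μf x' := by
      intro x' hx'
      have he := hv0 x' hx'
      rw [hLER v hvc x' hx'] at he
      rw [eq_div_iff (hμ0 x' hx')]
      linear_combination - he
    have h4 := hwint (∫ y in (0:ℝ)..1, ((Real.cos (ustar y) : ℝ) : ℂ) * v y) (∫ y in (0:ℝ)..1, ((Real.sin (ustar y) : ℝ) : ℂ) * v y) (fun _ => (0:ℂ)) continuousOn_const (fun _ => (1:ℂ))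
      continuousOn_const
    have h3 : (∫ y in (0:ℝ)..1, (fun _ => (1:ℂ)) y
          * ((((K * p : ℝ) : ℂ) * ((∫ y in (0:ℝ)..1, ((Real.cos (ustar y) : ℝ) : ℂ) * v y) * ((Real.cos (ustar y) : ℝ) : ℂ) + (∫ y in (0:ℝ)..1, ((Real.sin (ustar y) : ℝ) : ℂ) * v y) * ((Real.sin (ustar y) : ℝ) : ℂ)) - (fun _ => (0:ℂ)) y) / μf y))
        = ∫ y in (0:ℝ)..1, v y :=
      intervalIntegral.integral_congr fun y hy => by
        simp only [one_mul, sub_zero]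
        exact (hform y (by rwa [hIccU] at hy)).symm
    rw [h3, hvm] at h4
    simp only [one_mul, mul_zero, zero_div, intervalIntegral.integral_zero, sub_zero] at h4
    rw [hsμ0] at h4
    simp only [mul_zero, add_zero] at h4
    have hA0 : (∫ y in (0:ℝ)..1, ((Real.cos (ustar y) : ℝ) : ℂ) * v y) = 0 := by
      rcases mul_eq_zero.mp h4.symm with h | h
      · exact h
      · exact absurd h hden
    have h5 := hwint (∫ y in (0:ℝ)..1, ((Real.cos (ustar y) : ℝ) : ℂ) * v y) (∫ y in (0:ℝ)..1, ((Real.sin (ustar y) : ℝ) : ℂ) * v y) (fun _ => (0:ℂ)) continuousOn_const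
      (fun y => ((Real.sin (ustar y) : ℝ) : ℂ)) hsC
    have h6 : (∫ y in (0:ℝ)..1, (fun y => ((Real.sin (ustar y) : ℝ) : ℂ)) y
          * ((((K * p : ℝ) : ℂ) * ((∫ y in (0:ℝ)..1, ((Real.cos (ustar y) : ℝ) : ℂ) * v y) * ((Real.cos (ustar y) : ℝ) : ℂ) + (∫ y in (0:ℝ)..1, ((Real.sin (ustar y) : ℝ) : ℂ) * v y) * ((Real.sin (ustar y) : ℝ) : ℂ)) - (fun _ => (0:ℂ)) y) / μf y))
        = ∫ y in (0:ℝ)..1, ((Real.sin (ustar y) : ℝ) : ℂ) * v y :=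
      intervalIntegral.integral_congr fun y hy => by
        simp only [sub_zero]
        rw [hform y (by rwa [hIccU] at hy)]
    rw [h6] at h5
    simp only [mul_zero, zero_div, intervalIntegral.integral_zero, sub_zero] at h5
    rw [hA0, hscμ0] at h5
    simp only [zero_mul, mul_zero, zero_add] at h5
    have hB0 : (∫ y in (0:ℝ)..1, ((Real.sin (ustar y) : ℝ) : ℂ) * v y) = 0 := by
      have h7 : (∫ y in (0:ℝ)..1, ((Real.sin (ustar y) : ℝ) : ℂ) * v y) * (((K * p : ℝ) : ℂ) * (∫ y in (0:ℝ)..1, ((Real.sin (ustar y) : ℝ) : ℂ) * ((Real.sin (ustar y) : ℝ) : ℂ) / μf y) - 1) = 0 := by linear_combination - h5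
      rcases mul_eq_zero.mp h7 with h | h
      · exact h
      · exact absurd h hden2
    rw [hform x hx, hA0, hB0]
    simp
  · -- surjectivity
    intro g hg
    obtain ⟨hgc, hgm⟩ := hg
    have hGcId : ((C : ℝ) : ℂ) * (((K * p : ℝ) : ℂ) * (∫ y in (0:ℝ)..1, ((Real.cos (ustar y) : ℝ) : ℂ) * g y / μf y)) = -(z * (∫ y in (0:ℝ)..1, g y / μf y)) := by
      have h1 : IntervalIntegrable (fun y => g y / μf y) MeasureTheory.volume 0 1 :=
        IIc (hgc.div hμC hμ0)
      have hpt : Set.EqOn (fun y => (((C : ℝ) : ℂ) * ((K * p : ℝ) : ℂ)) * (((Real.cos (ustar y) : ℝ) : ℂ) * g y / μf y))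
          (fun y => g y - z * (g y / μf y)) (Set.uIcc (0:ℝ) 1) := by
        intro y hy
        have h0 := hμ0 y (by rwa [hIccU] at hy)
        have he : μf y = ((K * p : ℝ) : ℂ) * (((C : ℝ) : ℂ) * ((Real.cos (ustar y) : ℝ) : ℂ)) + z := by rw [hμdef y]; push_cast; ring
        rw [he] at h0
        have hinv := mul_inv_cancel₀ h0
        simp only [he]
        linear_combination g y * hinv
      rw [← mul_assoc, ← intervalIntegral.integral_const_mul,
        intervalIntegral.integral_congr hpt,
        intervalIntegral.integral_sub (IIc hgc) (h1.const_mul z),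
        intervalIntegral.integral_const_mul, hgm]
      ring
    obtain ⟨a, ha_def⟩ : ∃ a : ℂ, a = (∫ y in (0:ℝ)..1, g y / μf y) / (((K * p : ℝ) : ℂ) * (∫ y in (0:ℝ)..1, ((Real.cos (ustar y) : ℝ) : ℂ) / μf y)) := ⟨_, rfl⟩
    obtain ⟨b, hb_def⟩ : ∃ b : ℂ, b = (∫ y in (0:ℝ)..1, ((Real.sin (ustar y) : ℝ) : ℂ) * g y / μf y) / (((K * p : ℝ) : ℂ) * (∫ y in (0:ℝ)..1, ((Real.sin (ustar y) : ℝ) : ℂ) * ((Real.sin (ustar y) : ℝ) : ℂ) / μf y) - 1) := ⟨_, rfl⟩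
    have ha : a * (((K * p : ℝ) : ℂ) * (∫ y in (0:ℝ)..1, ((Real.cos (ustar y) : ℝ) : ℂ) / μf y)) = (∫ y in (0:ℝ)..1, g y / μf y) := by rw [ha_def]; exact div_mul_cancel₀ _ hden
    have hb : b * (((K * p : ℝ) : ℂ) * (∫ y in (0:ℝ)..1, ((Real.sin (ustar y) : ℝ) : ℂ) * ((Real.sin (ustar y) : ℝ) : ℂ) / μf y) - 1) = (∫ y in (0:ℝ)..1, ((Real.sin (ustar y) : ℝ) : ℂ) * g y / μf y) := by rw [hb_def]; exact div_mul_cancel₀ _ hden2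
    have hvc : ContinuousOn (fun x' => (((K * p : ℝ) : ℂ) * (a * ((Real.cos (ustar x') : ℝ) : ℂ) + b * ((Real.sin (ustar x') : ℝ) : ℂ)) - g x') / μf x') (Set.Icc (0:ℝ) 1) :=
      ((continuousOn_const.mul ((continuousOn_const.mul hcC).add
        (continuousOn_const.mul hsC))).sub hgc).div hμC hμ0
    have hIcv : (∫ y in (0:ℝ)..1, ((Real.cos (ustar y) : ℝ) : ℂ) * (fun x' => (((K * p : ℝ) : ℂ) * (a * ((Real.cos (ustar x') : ℝ) : ℂ) + b * ((Real.sin (ustar x') : ℝ) : ℂ)) - g x') / μf x') y) = a := by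
      have h1 := hwint a b g hgc (fun y => ((Real.cos (ustar y) : ℝ) : ℂ)) hcC
      simp only [] at h1 ⊢
      rw [h1, hcsμ0]
      simp only [mul_zero, add_zero]
      refine mul_left_cancel₀ (mul_ne_zero hKP0 hCC0) ?_
      linear_combination ((K * p : ℝ) : ℂ) * a * hDcId - hGcId - z * ha
    have hIsv : (∫ y in (0:ℝ)..1, ((Real.sin (ustar y) : ℝ) : ℂ) * (fun x' => (((K * p : ℝ) : ℂ) * (a * ((Real.cos (ustar x') : ℝ) : ℂ) + b * ((Real.sin (ustar x') : ℝ) : ℂ)) - g x') / μf x') y) = b := by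
      have h1 := hwint a b g hgc (fun y => ((Real.sin (ustar y) : ℝ) : ℂ)) hsC
      simp only [] at h1 ⊢
      rw [h1, hscμ0]
      simp only [mul_zero, zero_add]
      linear_combination hb
    have hmean : (∫ x' in (0:ℝ)..1, (fun x' => (((K * p : ℝ) : ℂ) * (a * ((Real.cos (ustar x') : ℝ) : ℂ) + b * ((Real.sin (ustar x') : ℝ) : ℂ)) - g x') / μf x') x') = 0 := by
      have h1 := hwint a b g hgc (fun _ => (1:ℂ)) continuousOn_const
      simp only [one_mul] at h1 ⊢
      rw [h1, hsμ0]
      linear_combination ha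
    refine ⟨_, ⟨hvc, hmean⟩, ?_⟩
    intro x hx
    rw [hLER _ hvc x hx, hIcv, hIsv]
    field_simp [hμ0 x hx]
    ring

/-- In the Erdős–Rényi Kuramoto setting (`Ω : [0,1] → [−1,1]` continuous and
odd about `x = 1/2`, `K > 0`, `p ∈ (0,1]`, `u*(x) = arcsin(Ω(x)/κ)`, `C = ∫₀¹ cos(u*(y)) dy`),
if `κ > 1` then the spectrum of `L` on `X_ℂ` is real (every non-real `z` lies in the
resolvent set), and if moreover `(1/(κC)) ∫₀¹ Ω(y)²/√(κ² − Ω(y)²) dy < 1`, then the spectrum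
is contained in `{Re z < 0}` (every `z` with `Re z ≥ 0` lies in the resolvent set), i.e. the
synchronous solution `u*` is spectrally stable. -/
theorem stmt_6 (K p : ℝ) (hK : 0 < K) (hp : p ∈ Set.Ioc (0:ℝ) 1)
    (Ω : ℝ → ℝ)
    (hΩ_cont : ContinuousOn Ω (Set.Icc (0:ℝ) 1))
    (hΩ_range : ∀ x ∈ Set.Icc (0:ℝ) 1, Ω x ∈ Set.Icc (-1:ℝ) 1)
    (hΩ_odd : ∀ x ∈ Set.Icc (0:ℝ) 1, Ω (1 - x) = -Ω x)
    (κ : ℝ) (hκ : 1 < κ)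
    (ustar : ℝ → ℝ) (hustar : ∀ x, ustar x = Real.arcsin (Ω x / κ))
    (C : ℝ) (hC : C = ∫ y in (0:ℝ)..1, Real.cos (ustar y)) :
    (∀ z : ℂ, z.im ≠ 0 → IsInResolventER K p ustar z)
    ∧ ((1 / (κ * C)) * (∫ y in (0:ℝ)..1, (Ω y)^2 / Real.sqrt (κ^2 - (Ω y)^2)) < 1 →
        ∀ z : ℂ, 0 ≤ z.re → IsInResolventER K p ustar z) := by
  obtain ⟨hp0, hp1⟩ := hp
  have hκ0 : (0:ℝ) < κ := lt_trans one_pos hκ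
  have hKp : 0 < K * p := mul_pos hK hp0
  have hu_cont : ContinuousOn ustar (Set.Icc (0:ℝ) 1) :=
    (Real.continuous_arcsin.comp_continuousOn (hΩ_cont.div_const κ)).congr fun x _ => hustar x
  have hbnd : ∀ x ∈ Set.Icc (0:ℝ) 1, -1 < Ω x / κ ∧ Ω x / κ < 1 := by
    intro x hx
    obtain ⟨h1, h2⟩ := hΩ_range x hx
    constructor
    · rw [lt_div_iff₀ hκ0]; nlinarith
    · rw [div_lt_one hκ0]; linarith
  have hsin : ∀ x ∈ Set.Icc (0:ℝ) 1, Real.sin (ustar x) = Ω x / κ := by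
    intro x hx
    rw [hustar x, Real.sin_arcsin (le_of_lt (hbnd x hx).1) (le_of_lt (hbnd x hx).2)]
  have hcos : ∀ x ∈ Set.Icc (0:ℝ) 1, Real.cos (ustar x) = Real.sqrt (1 - (Ω x / κ)^2) := by
    intro x hx; rw [hustar x, Real.cos_arcsin]
  have hc_pos : ∀ x ∈ Set.Icc (0:ℝ) 1, 0 < Real.cos (ustar x) := by
    intro x hx
    rw [hcos x hx]
    apply Real.sqrt_pos.mpr
    nlinarith [(hbnd x hx).1, (hbnd x hx).2]
  have hc_cont : ContinuousOn (fun y => Real.cos (ustar y)) (Set.Icc (0:ℝ) 1) :=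
    Real.continuous_cos.comp_continuousOn hu_cont
  have hs_cont : ContinuousOn (fun y => Real.sin (ustar y)) (Set.Icc (0:ℝ) 1) :=
    Real.continuous_sin.comp_continuousOn hu_cont
  have hC_pos : (0:ℝ) < C := by
    rw [hC]
    exact intervalIntegral.intervalIntegral_pos_of_pos_on (IIr hc_cont)
      (fun x hx => hc_pos x (Set.Ioo_subset_Icc_self hx)) one_pos
  have hsym : ∀ x ∈ Set.Icc (0:ℝ) 1, ustar (1 - x) = - ustar x := by
    intro x hx
    rw [hustar, hustar, hΩ_odd x hx, neg_div, Real.arcsin_neg]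
  have part1 : ∀ z : ℂ, z.im ≠ 0 → IsInResolventER K p ustar z := by
    intro z hz
    have hμ0 : ∀ x ∈ Set.Icc (0:ℝ) 1, (fun y => ((K * p * C * Real.cos (ustar y) : ℝ) : ℂ) + z) x ≠ 0 := by
      intro x hx h
      apply hz
      have h2 := congrArg Complex.im h
      simpa using h2
    have hμC : ContinuousOn (fun y => ((K * p * C * Real.cos (ustar y) : ℝ) : ℂ) + z) (Set.Icc (0:ℝ) 1) :=
      (Complex.continuous_ofReal.comp_continuousOn (continuousOn_const.mul hc_cont)).add
        continuousOn_const
    have hμim : ∀ x ∈ Set.Icc (0:ℝ) 1, ((fun y => ((K * p * C * Real.cos (ustar y) : ℝ) : ℂ) + z) x).im = z.im := by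
      intro x hx; simp
    apply master K p hKp ustar hu_cont hsym C hC hC_pos.ne' z (fun y => ((K * p * C * Real.cos (ustar y) : ℝ) : ℂ) + z) (fun y => rfl) hμ0 ?_ ?_
    · -- hJc
      intro h0
      have him : (∫ y in (0:ℝ)..1, ((Real.cos (ustar y) : ℝ) : ℂ) / (fun y => ((K * p * C * Real.cos (ustar y) : ℝ) : ℂ) + z) y).im = 0 := by
        rw [h0]; simp
      have hv := real_integral_vanish hc_cont (fun x hx => le_of_lt (hc_pos x hx)) hμC hμ0 hz
        hμim him
      have h2 : (∫ y in (0:ℝ)..1, Real.cos (ustar y)) = 0 := hv.2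
      rw [← hC] at h2
      exact hC_pos.ne' h2
    · -- hDs
      intro h1
      have hconv : (∫ y in (0:ℝ)..1, ((Real.sin (ustar y) : ℝ) : ℂ) * ((Real.sin (ustar y) : ℝ) : ℂ) / (fun y => ((K * p * C * Real.cos (ustar y) : ℝ) : ℂ) + z) y)
          = ∫ y in (0:ℝ)..1, ((Real.sin (ustar y) ^ 2 : ℝ) : ℂ) / (fun y => ((K * p * C * Real.cos (ustar y) : ℝ) : ℂ) + z) y :=
        intervalIntegral.integral_congr fun y _ => by push_cast; ring
      rw [hconv] at h1
      have him : (∫ y in (0:ℝ)..1, ((Real.sin (ustar y) ^ 2 : ℝ) : ℂ) / (fun y => ((K * p * C * Real.cos (ustar y) : ℝ) : ℂ) + z) y).im = 0 := by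
        have h2 := congrArg Complex.im h1
        simp only [Complex.mul_im, Complex.ofReal_re, Complex.ofReal_im, Complex.one_im,
          zero_mul, add_zero] at h2
        rcases mul_eq_zero.mp h2 with h | h
        · exact absurd h hKp.ne'
        · exact h
      have hv := real_integral_vanish (w := fun y => Real.sin (ustar y) ^ 2) (hs_cont.pow 2)
        (fun x hx => sq_nonneg _) hμC hμ0 hz hμim him
      rw [hv.1] at h1
      simp at h1
  refine ⟨part1, ?_⟩
  intro hstab z hzre
  by_cases hzim : z.im = 0
  swap
  · exact part1 z hzim
  obtain ⟨ρ, hρ⟩ : ∃ r : ℝ, z = ((r : ℝ) : ℂ) := ⟨z.re, by apply Complex.ext <;> simp [hzim]⟩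
  subst hρ
  have hρ0 : (0:ℝ) ≤ ρ := by simpa using hzre
  have hm_pos : ∀ x ∈ Set.Icc (0:ℝ) 1, 0 < K * p * C * Real.cos (ustar x) + ρ := by
    intro x hx
    have h1 := hc_pos x hx
    have h2 : 0 < K * p * C := mul_pos hKp hC_pos
    nlinarith
  have hm_cont : ContinuousOn (fun y => K * p * C * Real.cos (ustar y) + ρ) (Set.Icc (0:ℝ) 1) :=
    (continuousOn_const.mul hc_cont).add continuousOn_const
  have hm_ne : ∀ x ∈ Set.Icc (0:ℝ) 1, K * p * C * Real.cos (ustar x) + ρ ≠ 0 :=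
    fun x hx => (hm_pos x hx).ne'
  apply master K p hKp ustar hu_cont hsym C hC hC_pos.ne' ((ρ : ℝ) : ℂ) (fun y => ((K * p * C * Real.cos (ustar y) + ρ : ℝ) : ℂ))
    (fun y => by push_cast; ring) ?_ ?_ ?_
  · -- hμ0
    intro x hx
    exact Complex.ofReal_ne_zero.mpr (hm_ne x hx)
  · -- hJc
    have h1 : (∫ y in (0:ℝ)..1, ((Real.cos (ustar y) : ℝ) : ℂ) / (fun y => ((K * p * C * Real.cos (ustar y) + ρ : ℝ) : ℂ)) y)
        = (((∫ y in (0:ℝ)..1, Real.cos (ustar y) / (K * p * C * Real.cos (ustar y) + ρ)) : ℝ) : ℂ) := by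
      rw [← intervalIntegral.integral_ofReal]
      exact intervalIntegral.integral_congr fun y _ => by push_cast; ring
    rw [h1]
    apply Complex.ofReal_ne_zero.mpr
    apply ne_of_gt
    apply intervalIntegral.intervalIntegral_pos_of_pos_on
      (IIr (hc_cont.div hm_cont hm_ne))
      (fun x hx => div_pos (hc_pos x (Set.Ioo_subset_Icc_self hx))
        (hm_pos x (Set.Ioo_subset_Icc_self hx))) one_pos
  · -- hDs
    have h2 : ((K * p : ℝ) : ℂ) * (∫ y in (0:ℝ)..1,
          ((Real.sin (ustar y) : ℝ) : ℂ) * ((Real.sin (ustar y) : ℝ) : ℂ) / (fun y => ((K * p * C * Real.cos (ustar y) + ρ : ℝ) : ℂ)) y)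
        = (((K * p * ∫ y in (0:ℝ)..1,
            Real.sin (ustar y) ^ 2 / (K * p * C * Real.cos (ustar y) + ρ)) : ℝ) : ℂ) := by
      rw [intervalIntegral.integral_congr (g := fun y =>
          ((Real.sin (ustar y) ^ 2 / (K * p * C * Real.cos (ustar y) + ρ) : ℝ) : ℂ))
          (fun y _ => by push_cast; ring),
        intervalIntegral.integral_ofReal, ← Complex.ofReal_mul]
    rw [h2]
    have hlt : K * p * (∫ y in (0:ℝ)..1,
        Real.sin (ustar y) ^ 2 / (K * p * C * Real.cos (ustar y) + ρ)) < 1 := by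
      have hII1 : IntervalIntegrable (fun y => K * p * (Real.sin (ustar y) ^ 2
          / (K * p * C * Real.cos (ustar y) + ρ))) MeasureTheory.volume 0 1 :=
        IIr (continuousOn_const.mul ((hs_cont.pow 2).div hm_cont hm_ne))
      have hII2 : IntervalIntegrable (fun y => Real.sin (ustar y) ^ 2
          / (C * Real.cos (ustar y))) MeasureTheory.volume 0 1 :=
        IIr ((hs_cont.pow 2).div (continuousOn_const.mul hc_cont)
          (fun x hx => (mul_pos hC_pos (hc_pos x hx)).ne'))
      have hpt2 : ∀ y ∈ Set.Icc (0:ℝ) 1, K * p * (Real.sin (ustar y) ^ 2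
          / (K * p * C * Real.cos (ustar y) + ρ))
          ≤ Real.sin (ustar y) ^ 2 / (C * Real.cos (ustar y)) := by
        intro y hy
        have h1 := hc_pos y hy
        have hmp := hm_pos y hy
        have hle : K * p * C * Real.cos (ustar y) ≤ K * p * C * Real.cos (ustar y) + ρ :=
          le_add_of_nonneg_right hρ0
        have hd : 0 < K * p * C * Real.cos (ustar y) := by positivity
        calc K * p * (Real.sin (ustar y) ^ 2 / (K * p * C * Real.cos (ustar y) + ρ))
            = (K * p * Real.sin (ustar y) ^ 2) / (K * p * C * Real.cos (ustar y) + ρ) := by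
              ring
          _ ≤ (K * p * Real.sin (ustar y) ^ 2) / (K * p * C * Real.cos (ustar y)) := by
              gcongr
          _ = Real.sin (ustar y) ^ 2 / (C * Real.cos (ustar y)) := by
              rw [div_eq_div_iff hd.ne' (by positivity)]
              ring
      have hpt3 : ∀ y ∈ Set.Icc (0:ℝ) 1, Real.sin (ustar y) ^ 2 / (C * Real.cos (ustar y))
          = (1 / (κ * C)) * ((Ω y)^2 / Real.sqrt (κ^2 - (Ω y)^2)) := by
        intro y hy
        rw [hsin y hy, hcos y hy]
        have h1 : κ^2 - Ω y^2 = κ^2 * (1 - (Ω y / κ)^2) := by field_simp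
        rw [h1, Real.sqrt_mul (sq_nonneg κ), Real.sqrt_sq hκ0.le]
        have h2 : 0 < Real.sqrt (1 - (Ω y / κ)^2) :=
          Real.sqrt_pos.mpr (by nlinarith [(hbnd y hy).1, (hbnd y hy).2])
        field_simp [h2.ne', hκ0.ne', hC_pos.ne']
      have heqR : (∫ y in (0:ℝ)..1, Real.sin (ustar y) ^ 2 / (C * Real.cos (ustar y)))
          = (1 / (κ * C)) * (∫ y in (0:ℝ)..1, (Ω y)^2 / Real.sqrt (κ^2 - (Ω y)^2)) := by
        rw [← intervalIntegral.integral_const_mul]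
        exact intervalIntegral.integral_congr fun y hy =>
          hpt3 y (by rwa [Set.uIcc_of_le zero_le_one] at hy)
      calc K * p * (∫ y in (0:ℝ)..1, Real.sin (ustar y) ^ 2
              / (K * p * C * Real.cos (ustar y) + ρ))
          = ∫ y in (0:ℝ)..1, K * p * (Real.sin (ustar y) ^ 2
              / (K * p * C * Real.cos (ustar y) + ρ)) := by
            rw [intervalIntegral.integral_const_mul]
        _ ≤ ∫ y in (0:ℝ)..1, Real.sin (ustar y) ^ 2 / (C * Real.cos (ustar y)) :=
            intervalIntegral.integral_mono_on zero_le_one hII1 hII2 hpt2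
        _ = (1 / (κ * C)) * (∫ y in (0:ℝ)..1, (Ω y)^2 / Real.sqrt (κ^2 - (Ω y)^2)) := heqR
        _ < 1 := hstab
    intro h
    have h3 : K * p * (∫ y in (0:ℝ)..1,
        Real.sin (ustar y) ^ 2 / (K * p * C * Real.cos (ustar y) + ρ)) = 1 := by
      exact_mod_cast h
    linarith
end

section
/- Let n ≥ 1, K ≠ 0 and ω ∈ ℝ, let Ω_n : [0,1) → ℝ be a step function on {I_j^n} and W_n a step graphon on {I_j^n × I_k^n}. Let u : [0,1) → ℝ be bounded, continuous on each interval I_j^n, and satisfy Ω_n(x) − ω + K ∫₀¹ W_n(x,y) sin(u(y) − u(x)) dy = 0 for every x ∈ [0,1). If ∫₀¹ W_n(x,y) cos(u(y) − u(x)) dy ≠ 0 for every x ∈ [0,1), then u is constant on each interval I_j^n. -/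
open MeasureTheory intervalIntegral

/-- `f` is a step function on the intervals `I_j^n = [(j−1)/n, j/n)`, `j = 1, …, n`
(zero-based: constant on `[j/n, (j+1)/n)` for `j = 0, …, n−1`). -/
def IsStepFn (n : ℕ) (f : ℝ → ℝ) : Prop :=
  ∀ j < n, ∀ x ∈ Set.Ico ((j : ℝ) / n) ((j + 1 : ℝ) / n), f x = f ((j : ℝ) / n)

/-- `V` is a step graphon on the rectangles `I_j^n × I_k^n`. -/
def IsStepGraphon (n : ℕ) (V : ℝ → ℝ → ℝ) : Prop :=
  ∀ j < n, ∀ k < n, ∀ x ∈ Set.Ico ((j : ℝ) / n) ((j + 1 : ℝ) / n),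
    ∀ y ∈ Set.Ico ((k : ℝ) / n) ((k + 1 : ℝ) / n),
      V x y = V ((j : ℝ) / n) ((k : ℝ) / n)

/-- Let `n ≥ 1`, `K ≠ 0`, `ω ∈ ℝ`, let `Ω_n` be a step function on
`{I_j^n}` and `W_n` a step graphon (symmetric, measurable, `[0,1]`-valued) on
`{I_j^n × I_k^n}`. Let `u : [0,1) → ℝ` be bounded, continuous on each `I_j^n`, and satisfy
`Ω_n(x) − ω + K ∫₀¹ W_n(x,y) sin(u(y) − u(x)) dy = 0` for every `x ∈ [0,1)`. If
`∫₀¹ W_n(x,y) cos(u(y) − u(x)) dy ≠ 0` for every `x ∈ [0,1)`, then `u` is constant on each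
interval `I_j^n`. -/
theorem stmt_11 (n : ℕ) (hn : 1 ≤ n) (K : ℝ) (hK : K ≠ 0) (ω : ℝ)
    (Ωn : ℝ → ℝ) (hΩn_step : IsStepFn n Ωn)
    (Wn : ℝ → ℝ → ℝ)
    (hWn_meas : Measurable (Function.uncurry Wn))
    (hWn_symm : ∀ x y, Wn x y = Wn y x)
    (hWn_range : ∀ x y, Wn x y ∈ Set.Icc (0:ℝ) 1)
    (hWn_step : IsStepGraphon n Wn)
    (u : ℝ → ℝ)
    (hu_bdd : ∃ B : ℝ, ∀ x ∈ Set.Ico (0:ℝ) 1, |u x| ≤ B)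
    (hu_cont : ∀ j < n, ContinuousOn u (Set.Ico ((j : ℝ) / n) ((j + 1 : ℝ) / n)))
    (heq : ∀ x ∈ Set.Ico (0:ℝ) 1,
      Ωn x - ω + K * ∫ y in (0:ℝ)..1, Wn x y * Real.sin (u y - u x) = 0)
    (hcos : ∀ x ∈ Set.Ico (0:ℝ) 1,
      (∫ y in (0:ℝ)..1, Wn x y * Real.cos (u y - u x)) ≠ 0) :
    ∀ j < n, ∀ x ∈ Set.Ico ((j : ℝ) / n) ((j + 1 : ℝ) / n), u x = u ((j : ℝ) / n) := by
  have hn0 : (0:ℝ) < n := by exact_mod_cast hn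
  -- every point of [0,1) lies in some subinterval
  have cover : ∀ y ∈ Set.Ico (0:ℝ) 1,
      ∃ k, k < n ∧ y ∈ Set.Ico ((k:ℝ)/n) (((k:ℝ)+1)/n) := by
    intro y hy
    refine ⟨⌊y * n⌋₊, ?_, ?_, ?_⟩
    · have h1 : y * n < (n:ℝ) := by nlinarith [hy.2, hy.1]
      exact (Nat.floor_lt (mul_nonneg hy.1 hn0.le)).mpr h1
    · rw [div_le_iff₀ hn0]; exact Nat.floor_le (mul_nonneg hy.1 hn0.le)
    · rw [lt_div_iff₀ hn0]
      have := Nat.lt_floor_add_one (y * n)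
      push_cast at this ⊢
      linarith
  have hIcoUnion : Set.Ico (0:ℝ) 1
      = ⋃ k : Fin n, Set.Ico (((k:ℕ):ℝ)/n) ((((k:ℕ):ℝ)+1)/n) := by
    ext y
    simp only [Set.mem_iUnion]
    constructor
    · intro hy
      obtain ⟨k, hk, hmem⟩ := cover y hy
      exact ⟨⟨k, hk⟩, hmem⟩
    · rintro ⟨⟨k, hk⟩, hmem⟩
      refine ⟨le_trans (by positivity) hmem.1, lt_of_lt_of_le hmem.2 ?_⟩
      rw [div_le_one hn0]
      have : (k:ℝ) + 1 ≤ n := by exact_mod_cast Nat.succ_le_of_lt hk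
      exact this
  have hu_ae : AEMeasurable u (volume.restrict (Set.Ioc (0:ℝ) 1)) := by
    have h1 : (volume.restrict (Set.Ioc (0:ℝ) 1)) = volume.restrict (Set.Ico (0:ℝ) 1) :=
      Measure.restrict_congr_set Ico_ae_eq_Ioc.symm
    rw [h1, hIcoUnion, aemeasurable_iUnion_iff]
    intro k
    exact (hu_cont k k.isLt).aemeasurable measurableSet_Ico
  have hne1 : ∀ᵐ y : ℝ, y ≠ (1:ℝ) := by
    filter_upwards [compl_mem_ae_iff.mpr (measure_singleton (1:ℝ))] with y hy
    simpa using hy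
  intro j hj x hx
  have hab : ((j:ℝ))/n < ((j:ℝ)+1)/n := by
    rw [div_lt_div_iff₀ hn0 hn0]; nlinarith
  have ha_mem : ((j:ℝ))/n ∈ Set.Ico ((j:ℝ)/n) (((j:ℝ)+1)/n) := ⟨le_refl _, hab⟩
  have hsub : Set.Ico ((j:ℝ)/n) (((j:ℝ)+1)/n) ⊆ Set.Ico (0:ℝ) 1 := by
    intro z hz
    refine ⟨le_trans (by positivity) hz.1, lt_of_lt_of_le hz.2 ?_⟩
    rw [div_le_one hn0]
    exact_mod_cast Nat.succ_le_of_lt hj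
  -- the row of Wn is constant on the interval
  have hWrow : ∀ z ∈ Set.Ico ((j:ℝ)/n) (((j:ℝ)+1)/n), ∀ y ∈ Set.Ico (0:ℝ) 1,
      Wn z y = Wn ((j:ℝ)/n) y := by
    intro z hz y hy
    obtain ⟨k, hk, hky⟩ := cover y hy
    rw [hWn_step j hj k hk z hz y hky, hWn_step j hj k hk _ ha_mem y hky]
  -- integrability
  have hint : ∀ v : ℝ → ℝ, Measurable v → (∀ t, |v t| ≤ 1) →
      IntervalIntegrable (fun y => Wn ((j:ℝ)/n) y * v (u y)) volume 0 1 := by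
    intro v hv hvb
    rw [intervalIntegrable_iff_integrableOn_Ioc_of_le zero_le_one]
    have hmWa : Measurable (Wn ((j:ℝ)/n)) := hWn_meas.of_uncurry_left
    have hsm : AEStronglyMeasurable (fun y => Wn ((j:ℝ)/n) y * v (u y))
        (volume.restrict (Set.Ioc (0:ℝ) 1)) :=
      (hmWa.aemeasurable.mul (hv.comp_aemeasurable hu_ae)).aestronglyMeasurable
    have hone : IntegrableOn (fun _ : ℝ => (1:ℝ)) (Set.Ioc (0:ℝ) 1) volume :=
      integrableOn_const measure_Ioc_lt_top.ne
    refine hone.mono' hsm (ae_of_all _ fun y => ?_)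
    have h1 := hWn_range ((j:ℝ)/n) y
    have h2 := hvb (u y)
    have h3 : |Wn ((j:ℝ)/n) y| = Wn ((j:ℝ)/n) y := abs_of_nonneg h1.1
    rw [Real.norm_eq_abs, abs_mul, h3]
    nlinarith [abs_nonneg (v (u y)), h1.2]
  have hintS : IntervalIntegrable (fun y => Wn ((j:ℝ)/n) y * Real.sin (u y)) volume 0 1 :=
    hint _ Real.measurable_sin (fun t => Real.abs_sin_le_one t)
  have hintC : IntervalIntegrable (fun y => Wn ((j:ℝ)/n) y * Real.cos (u y)) volume 0 1 :=
    hint _ Real.measurable_cos (fun t => Real.abs_cos_le_one t)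
  set S : ℝ := ∫ y in (0:ℝ)..1, Wn ((j:ℝ)/n) y * Real.sin (u y) with hS_def
  set C : ℝ := ∫ y in (0:ℝ)..1, Wn ((j:ℝ)/n) y * Real.cos (u y) with hC_def
  -- the sine integral identity
  have sin_eq : ∀ z ∈ Set.Ico ((j:ℝ)/n) (((j:ℝ)+1)/n),
      (∫ y in (0:ℝ)..1, Wn z y * Real.sin (u y - u z))
        = S * Real.cos (u z) - C * Real.sin (u z) := by
    intro z hz
    have h1 : (∫ y in (0:ℝ)..1, Wn z y * Real.sin (u y - u z))
        = ∫ y in (0:ℝ)..1, ((Wn ((j:ℝ)/n) y * Real.sin (u y)) * Real.cos (u z)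
            - (Wn ((j:ℝ)/n) y * Real.cos (u y)) * Real.sin (u z)) := by
      apply intervalIntegral.integral_congr_ae
      filter_upwards [hne1] with y hy1 hy
      rw [Set.uIoc_of_le zero_le_one] at hy
      have hy' : y ∈ Set.Ico (0:ℝ) 1 := ⟨hy.1.le, lt_of_le_of_ne hy.2 hy1⟩
      rw [hWrow z hz y hy', Real.sin_sub]; ring
    rw [h1, intervalIntegral.integral_sub (hintS.mul_const _) (hintC.mul_const _),
        intervalIntegral.integral_mul_const, intervalIntegral.integral_mul_const]
  -- the cosine integral identity
  have cos_eq : ∀ z ∈ Set.Ico ((j:ℝ)/n) (((j:ℝ)+1)/n),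
      (∫ y in (0:ℝ)..1, Wn z y * Real.cos (u y - u z))
        = C * Real.cos (u z) + S * Real.sin (u z) := by
    intro z hz
    have h1 : (∫ y in (0:ℝ)..1, Wn z y * Real.cos (u y - u z))
        = ∫ y in (0:ℝ)..1, ((Wn ((j:ℝ)/n) y * Real.cos (u y)) * Real.cos (u z)
            + (Wn ((j:ℝ)/n) y * Real.sin (u y)) * Real.sin (u z)) := by
      apply intervalIntegral.integral_congr_ae
      filter_upwards [hne1] with y hy1 hy
      rw [Set.uIoc_of_le zero_le_one] at hy
      have hy' : y ∈ Set.Ico (0:ℝ) 1 := ⟨hy.1.le, lt_of_le_of_ne hy.2 hy1⟩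
      rw [hWrow z hz y hy', Real.cos_sub]; ring
    rw [h1, intervalIntegral.integral_add (hintC.mul_const _) (hintS.mul_const _),
        intervalIntegral.integral_mul_const, intervalIntegral.integral_mul_const]
  -- the steady-state equation forces S cos(u z) - C sin(u z) to be constant
  have hgconst : ∀ z ∈ Set.Ico ((j:ℝ)/n) (((j:ℝ)+1)/n),
      S * Real.cos (u z) - C * Real.sin (u z) = (ω - Ωn ((j:ℝ)/n)) / K := by
    intro z hz
    have h0 := heq z (hsub hz)
    rw [sin_eq z hz, hΩn_step j hj z hz] at h0
    field_simp
    linarith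
  have hcos' : ∀ z ∈ Set.Ico ((j:ℝ)/n) (((j:ℝ)+1)/n),
      C * Real.cos (u z) + S * Real.sin (u z) ≠ 0 := by
    intro z hz
    rw [← cos_eq z hz]
    exact hcos z (hsub hz)
  -- conclude by Rolle + IVT
  by_contra hne
  have hxa : (j:ℝ)/n ≤ x := hx.1
  have hIccsub : Set.Icc ((j:ℝ)/n) x ⊆ Set.Ico ((j:ℝ)/n) (((j:ℝ)+1)/n) :=
    fun t ht => ⟨ht.1, lt_of_le_of_lt ht.2 hx.2⟩
  have hcont : ContinuousOn u (Set.Icc ((j:ℝ)/n) x) := (hu_cont j hj).mono hIccsub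
  have hiv : Set.uIcc (u ((j:ℝ)/n)) (u x) ⊆ u '' Set.Icc ((j:ℝ)/n) x := by
    have h := intermediate_value_uIcc
      (by rwa [Set.uIcc_of_le hxa] : ContinuousOn u (Set.uIcc ((j:ℝ)/n) x))
    rwa [Set.uIcc_of_le hxa] at h
  set g : ℝ → ℝ := fun t => S * Real.cos t - C * Real.sin t with hg_def
  have hg : ∀ t : ℝ, HasDerivAt g (-(C * Real.cos t + S * Real.sin t)) t := by
    intro t
    have h := ((Real.hasDerivAt_cos t).const_mul S).sub ((Real.hasDerivAt_sin t).const_mul C)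
    exact h.congr_deriv (by ring)
  have hga : g (u ((j:ℝ)/n)) = (ω - Ωn ((j:ℝ)/n)) / K := hgconst _ ha_mem
  have hgx : g (u x) = (ω - Ωn ((j:ℝ)/n)) / K := hgconst _ hx
  have hmM : min (u ((j:ℝ)/n)) (u x) < max (u ((j:ℝ)/n)) (u x) :=
    min_lt_max.mpr fun h => hne h.symm
  have hgmM : g (min (u ((j:ℝ)/n)) (u x)) = g (max (u ((j:ℝ)/n)) (u x)) := by
    rcases le_total (u ((j:ℝ)/n)) (u x) with h | h
    · rw [min_eq_left h, max_eq_right h, hga, hgx]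
    · rw [min_eq_right h, max_eq_left h, hga, hgx]
  obtain ⟨t, ht, hderiv⟩ := exists_deriv_eq_zero hmM
    (((continuous_const.mul Real.continuous_cos).sub
      (continuous_const.mul Real.continuous_sin)).continuousOn) hgmM
  have ht' : t ∈ Set.uIcc (u ((j:ℝ)/n)) (u x) := by
    rw [Set.uIcc]
    exact Set.Ioo_subset_Icc_self ht
  obtain ⟨x', hx'mem, hux'⟩ := hiv ht'
  have hx'I : x' ∈ Set.Ico ((j:ℝ)/n) (((j:ℝ)+1)/n) := hIccsub hx'mem
  have : deriv g t = -(C * Real.cos t + S * Real.sin t) := (hg t).deriv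
  change deriv g t = 0 at hderiv
  rw [this] at hderiv
  exact hcos' x' hx'I (by rw [hux']; linarith)
end

section
/- Let 𝒳 be a complex Banach space and A : 𝒳 → 𝒳 a bounded linear operator. Suppose there are ξ > 0, α > 0 and r ∈ (0, ξ − α) such that the spectrum of A is contained in {z ∈ ℂ : |z + ξ| ≤ r}. Then there exists C ≥ 1 such that ‖exp(tA)‖ ≤ C e^{−αt} for all t ≥ 0, where exp denotes the exponential in the Banach algebra of bounded operators on 𝒳. -/
open Complex

open scoped Pointwise Nat

/-- If the spectral radius of `B` is `< s`, then `‖B ^ n‖ ≤ M * s ^ n` for some `M ≥ 1`. -/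
lemma aux_pow_bound {𝔸 : Type*} [NormedRing 𝔸] [NormedAlgebra ℂ 𝔸] [CompleteSpace 𝔸]
    (B : 𝔸) {s : ℝ} (hs : 0 < s) (h : spectralRadius ℂ B < ENNReal.ofReal s) :
    ∃ M : ℝ, 1 ≤ M ∧ ∀ n : ℕ, ‖B ^ n‖ ≤ M * s ^ n := by
  have htend := spectrum.pow_norm_pow_one_div_tendsto_nhds_spectralRadius B
  have hev : ∀ᶠ n : ℕ in Filter.atTop,
      ENNReal.ofReal (‖B ^ n‖ ^ (1 / (n : ℝ))) < ENNReal.ofReal s :=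
    htend.eventually_lt_const h
  obtain ⟨N, hN⟩ := Filter.eventually_atTop.mp hev
  have key : ∀ n : ℕ, N + 1 ≤ n → ‖B ^ n‖ ≤ s ^ n := by
    intro n hn
    have hn1 : 1 ≤ n := le_trans (Nat.le_add_left 1 N) hn
    have hnne : (n : ℝ) ≠ 0 := by
      exact_mod_cast Nat.one_le_iff_ne_zero.mp hn1
    have h1 := hN n (le_trans (Nat.le_succ N) hn)
    rw [ENNReal.ofReal_lt_ofReal_iff hs] at h1
    have hx : (‖B ^ n‖ ^ (1 / (n : ℝ))) ^ n = ‖B ^ n‖ := by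
      rw [← Real.rpow_natCast (‖B ^ n‖ ^ (1 / (n : ℝ))) n, ← Real.rpow_mul (norm_nonneg _),
        one_div, inv_mul_cancel₀ hnne, Real.rpow_one]
    calc ‖B ^ n‖ = (‖B ^ n‖ ^ (1 / (n : ℝ))) ^ n := hx.symm
      _ ≤ s ^ n := pow_le_pow_left₀ (Real.rpow_nonneg (norm_nonneg _) _) h1.le n
  refine ⟨1 + ∑ k ∈ Finset.range (N + 1), ‖B ^ k‖ / s ^ k, ?_, ?_⟩
  · have : (0 : ℝ) ≤ ∑ k ∈ Finset.range (N + 1), ‖B ^ k‖ / s ^ k :=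
      Finset.sum_nonneg fun k _ => div_nonneg (norm_nonneg _) (pow_pos hs k).le
    linarith
  · intro n
    by_cases hn : N + 1 ≤ n
    · have h1 : (1 : ℝ) ≤ 1 + ∑ k ∈ Finset.range (N + 1), ‖B ^ k‖ / s ^ k := by
        have : (0 : ℝ) ≤ ∑ k ∈ Finset.range (N + 1), ‖B ^ k‖ / s ^ k :=
          Finset.sum_nonneg fun k _ => div_nonneg (norm_nonneg _) (pow_pos hs k).le
        linarith
      calc ‖B ^ n‖ ≤ s ^ n := key n hn
        _ ≤ (1 + ∑ k ∈ Finset.range (N + 1), ‖B ^ k‖ / s ^ k) * s ^ n := by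
            nlinarith [pow_pos hs n]
    · push_neg at hn
      have hmem : n ∈ Finset.range (N + 1) := Finset.mem_range.mpr hn
      have hle : ‖B ^ n‖ / s ^ n ≤ ∑ k ∈ Finset.range (N + 1), ‖B ^ k‖ / s ^ k :=
        Finset.single_le_sum (f := fun k => ‖B ^ k‖ / s ^ k)
          (fun k _ => div_nonneg (norm_nonneg _) (pow_pos hs k).le) hmem
      have hspos := pow_pos hs n
      rw [div_le_iff₀ hspos] at hle
      nlinarith [pow_pos hs n]

/-- If `‖x ^ n‖ ≤ M * c ^ n` for all `n`, then `‖exp x‖ ≤ M * exp c`. -/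
lemma aux_norm_exp {𝔸 : Type*} [NormedRing 𝔸] [NormedAlgebra ℂ 𝔸] [CompleteSpace 𝔸]
    (x : 𝔸) {M c : ℝ} (hM : 0 ≤ M) (h : ∀ n : ℕ, ‖x ^ n‖ ≤ M * c ^ n) :
    ‖NormedSpace.exp x‖ ≤ M * Real.exp c := by
  have hsum : HasSum (fun n : ℕ => M * (c ^ n / n !)) (M * Real.exp c) := by
    have := NormedSpace.expSeries_div_hasSum_exp c
    rw [← Real.exp_eq_exp_ℝ] at this
    exact this.mul_left M
  rw [NormedSpace.exp_eq_tsum ℂ]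
  refine tsum_of_norm_bounded hsum fun n => ?_
  have hns : ‖((n ! : ℂ))⁻¹ • x ^ n‖ = ((n ! : ℝ))⁻¹ * ‖x ^ n‖ := by
    rw [norm_smul, norm_inv]
    norm_num
  rw [hns]
  have hfac : (0 : ℝ) < (n ! : ℝ)⁻¹ := by positivity
  calc ((n : ℕ)! : ℝ)⁻¹ * ‖x ^ n‖ ≤ (n ! : ℝ)⁻¹ * (M * c ^ n) := by
        exact mul_le_mul_of_nonneg_left (h n) hfac.le
    _ = M * (c ^ n / n !) := by ring

/-- Let `𝒳` be a complex Banach space and `A : 𝒳 → 𝒳` bounded linear.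
If there are `ξ > 0`, `α > 0` and `r ∈ (0, ξ − α)` with `spectrum(A) ⊆ {z : |z + ξ| ≤ r}`,
then there is `C ≥ 1` with `‖exp(tA)‖ ≤ C e^{−αt}` for all `t ≥ 0`. -/
theorem stmt_12 {𝒳 : Type*} [NormedAddCommGroup 𝒳] [NormedSpace ℂ 𝒳] [CompleteSpace 𝒳]
    (A : 𝒳 →L[ℂ] 𝒳) (ξ α r : ℝ) (hξ : 0 < ξ) (hα : 0 < α) (hr : r ∈ Set.Ioo 0 (ξ - α))
    (hspec : spectrum ℂ A ⊆ {z : ℂ | ‖z + (ξ : ℂ)‖ ≤ r}) :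
    ∃ C : ℝ, 1 ≤ C ∧ ∀ t : ℝ, 0 ≤ t →
      ‖NormedSpace.exp ((t : ℂ) • A)‖ ≤ C * Real.exp (-α * t) := by
  obtain ⟨hr0, hrξα⟩ := hr
  set B : 𝒳 →L[ℂ] 𝒳 := A + algebraMap ℂ (𝒳 →L[ℂ] 𝒳) (ξ : ℂ) with hB
  -- spectrum of B
  have hspecB : spectrum ℂ B = spectrum ℂ A + {(ξ : ℂ)} := (spectrum.add_singleton_eq A _).symm
  -- spectral radius of B
  have hrad : spectralRadius ℂ B ≤ ENNReal.ofReal r := by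
    rw [spectralRadius]
    refine iSup₂_le fun z hz => ?_
    rw [hspecB, Set.add_singleton] at hz
    obtain ⟨w, hw, rfl⟩ := hz
    have : ‖w + (ξ : ℂ)‖ ≤ r := hspec hw
    calc (‖w + (ξ : ℂ)‖₊ : ENNReal) = ENNReal.ofReal ‖w + (ξ : ℂ)‖ :=
        (ofReal_norm (w + (ξ : ℂ))).symm
      _ ≤ ENNReal.ofReal r := ENNReal.ofReal_le_ofReal this
  set s : ℝ := ξ - α with hsdef
  have hs : 0 < s := lt_trans hr0 hrξα
  have hrad' : spectralRadius ℂ B < ENNReal.ofReal s :=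
    lt_of_le_of_lt hrad (by exact_mod_cast ENNReal.ofReal_lt_ofReal_iff hs |>.mpr hrξα)
  obtain ⟨M, hM1, hM⟩ := aux_pow_bound B hs hrad'
  refine ⟨M, hM1, fun t ht => ?_⟩
  -- decompose exp(tA)
  have hcomm : Commute ((t : ℂ) • B) (algebraMap ℂ (𝒳 →L[ℂ] 𝒳) (-(t * ξ : ℂ))) :=
    (Algebra.commutes (-(t * ξ : ℂ)) ((t : ℂ) • B)).symm
  have hsmul : (t : ℂ) • algebraMap ℂ (𝒳 →L[ℂ] 𝒳) (ξ : ℂ) = algebraMap ℂ (𝒳 →L[ℂ] 𝒳) ((t : ℂ) * ξ) := by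
    rw [Algebra.smul_def, ← map_mul]
  have hdecomp : (t : ℂ) • A = (t : ℂ) • B + algebraMap ℂ (𝒳 →L[ℂ] 𝒳) (-(t * ξ : ℂ)) := by
    rw [hB, smul_add, hsmul, map_neg]
    abel
  have hexp : NormedSpace.exp ((t : ℂ) • A)
      = NormedSpace.exp ((t : ℂ) • B) * algebraMap ℂ (𝒳 →L[ℂ] 𝒳) (Complex.exp (-(t * ξ : ℂ))) := by
    rw [hdecomp, NormedSpace.exp_add_of_commute_of_mem_ball (𝕂 := ℂ) hcomm
        ((NormedSpace.expSeries_radius_eq_top ℂ (𝒳 →L[ℂ] 𝒳)).symm ▸ edist_lt_top _ _)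
        ((NormedSpace.expSeries_radius_eq_top ℂ (𝒳 →L[ℂ] 𝒳)).symm ▸ edist_lt_top _ _),
      ← NormedSpace.algebraMap_exp_comm, Complex.exp_eq_exp_ℂ]
  -- bound on exp(tB)
  have hpow : ∀ n : ℕ, ‖((t : ℂ) • B) ^ n‖ ≤ M * (t * s) ^ n := by
    intro n
    rw [smul_pow]
    have hnc : ‖((t : ℂ)) ^ n‖ = t ^ n := by
      rw [norm_pow, Complex.norm_real, Real.norm_of_nonneg ht]
    calc ‖((t : ℂ)) ^ n • B ^ n‖ ≤ ‖((t : ℂ)) ^ n‖ * ‖B ^ n‖ :=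
        ContinuousLinearMap.opNorm_smul_le _ _
      _ = t ^ n * ‖B ^ n‖ := by rw [hnc]
      _ ≤ t ^ n * (M * s ^ n) := mul_le_mul_of_nonneg_left (hM n) (pow_nonneg ht n)
      _ = M * (t * s) ^ n := by rw [mul_pow]; ring
  have hexpB : ‖NormedSpace.exp ((t : ℂ) • B)‖ ≤ M * Real.exp (t * s) :=
    aux_norm_exp _ (le_trans zero_le_one hM1) hpow
  -- norm of scalar part
  have hscal : ‖algebraMap ℂ (𝒳 →L[ℂ] 𝒳) (Complex.exp (-(t * ξ : ℂ)))‖ ≤ Real.exp (-(t * ξ)) := by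
    calc ‖algebraMap ℂ (𝒳 →L[ℂ] 𝒳) (Complex.exp (-(t * ξ : ℂ)))‖
        ≤ ‖Complex.exp (-(t * ξ : ℂ))‖ * ‖(1 : 𝒳 →L[ℂ] 𝒳)‖ := by
          rw [Algebra.algebraMap_eq_smul_one]
          exact ContinuousLinearMap.opNorm_smul_le _ _
      _ ≤ ‖Complex.exp (-(t * ξ : ℂ))‖ * 1 := by
          refine mul_le_mul_of_nonneg_left ?_ (norm_nonneg _)
          exact ContinuousLinearMap.norm_id_le
      _ = Real.exp (-(t * ξ)) := by
          rw [mul_one]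
          have : (-(t * ξ : ℂ)) = ((-(t * ξ) : ℝ) : ℂ) := by push_cast; ring
          rw [this, Complex.norm_exp, Complex.ofReal_re]
  calc ‖NormedSpace.exp ((t : ℂ) • A)‖
      ≤ ‖NormedSpace.exp ((t : ℂ) • B)‖ * ‖algebraMap ℂ (𝒳 →L[ℂ] 𝒳) (Complex.exp (-(t * ξ : ℂ)))‖ := by
        rw [hexp]; exact norm_mul_le _ _
    _ ≤ (M * Real.exp (t * s)) * Real.exp (-(t * ξ)) := by
        refine mul_le_mul hexpB hscal (norm_nonneg _) ?_
        positivity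
    _ = M * Real.exp (-α * t) := by
        rw [mul_assoc, ← Real.exp_add, hsdef]
        ring_nf
end

section
/- Let 𝒳 be a complex Banach space and A : 𝒳 → 𝒳 a bounded linear operator. Suppose there are ξ > 0, α > 0 and r ∈ (0, ξ − α) such that the spectrum of A is contained in {z ∈ ℂ : |z + ξ| ≤ r}. Then there exist φ ∈ (π/2, π) and Ξ > 0 such that every λ ∈ ℂ with λ ≠ −α and |arg(λ + α)| < φ belongs to the resolvent set of A and ‖(A − λ·Id)^{−1}‖ ≤ Ξ / |λ + α|. -/
open Complex

lemma ringInverse_neg' {R : Type*} [Ring R] (x : R) :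
    Ring.inverse (-x) = -(Ring.inverse x) := by
  by_cases h : IsUnit x
  · obtain ⟨u, rfl⟩ := h
    rw [← Units.val_neg, Ring.inverse_unit, Ring.inverse_unit, inv_neg, Units.val_neg]
  · rw [Ring.inverse_non_unit _ h, Ring.inverse_non_unit, neg_zero]
    exact fun h' => h (by simpa using h'.neg)

set_option maxHeartbeats 2000000 in
/-- Let `𝒳` be a complex Banach space and `A : 𝒳 → 𝒳` bounded linear.
If there are `ξ > 0`, `α > 0` and `r ∈ (0, ξ − α)` with `spectrum(A) ⊆ {z : |z + ξ| ≤ r}`,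
then there exist `φ ∈ (π/2, π)` and `Ξ > 0` such that every `λ ≠ −α` with
`|arg(λ + α)| < φ` belongs to the resolvent set of `A` and
`‖(A − λ·Id)⁻¹‖ ≤ Ξ / |λ + α|`. -/
theorem stmt_13 {𝒳 : Type*} [NormedAddCommGroup 𝒳] [NormedSpace ℂ 𝒳] [CompleteSpace 𝒳]
    (A : 𝒳 →L[ℂ] 𝒳) (ξ α r : ℝ) (hξ : 0 < ξ) (hα : 0 < α) (hr : r ∈ Set.Ioo 0 (ξ - α))
    (hspec : spectrum ℂ A ⊆ {z : ℂ | ‖z + (ξ : ℂ)‖ ≤ r}) :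
    ∃ φ ∈ Set.Ioo (Real.pi / 2) Real.pi, ∃ Ξ : ℝ, 0 < Ξ ∧
      ∀ lam : ℂ, lam ≠ (-α : ℂ) → |Complex.arg (lam + (α : ℂ))| < φ →
        lam ∉ spectrum ℂ A ∧
        ‖Ring.inverse (A - lam • (1 : 𝒳 →L[ℂ] 𝒳))‖ ≤ Ξ / ‖lam + (α : ℂ)‖ := by
  obtain ⟨hr0, hrD⟩ := hr
  set D : ℝ := ξ - α with hDdef
  have hD : 0 < D := lt_trans hr0 hrD
  set t : ℝ := (r / D + 1) / 2 with htdef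
  have ht0 : 0 < t := by positivity
  have ht1 : t < 1 := by
    have : r / D < 1 := (div_lt_one hD).mpr hrD
    rw [htdef]; linarith
  have hrt : r < D * t := by
    have h1 : r / D < t := by rw [htdef]; have : r / D < 1 := (div_lt_one hD).mpr hrD; linarith
    calc r = D * (r / D) := by field_simp
    _ < D * t := by exact mul_lt_mul_of_pos_left h1 hD
  set β : ℝ := Real.arcsin t with hβdef
  have hβ0 : 0 < β := Real.arcsin_pos.mpr ht0
  have hβπ : β < Real.pi / 2 := Real.arcsin_lt_pi_div_two.mpr ht1
  set c : ℝ := Real.cos β with hcdef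
  have hsinβ : Real.sin β = t := Real.sin_arcsin (by linarith) ht1.le
  have hc0 : 0 < c := Real.cos_pos_of_mem_Ioo ⟨by linarith [Real.pi_pos], hβπ⟩
  have hc2 : c ^ 2 = 1 - t ^ 2 := by
    rw [hcdef, Real.cos_sq', hsinβ]
  set φ : ℝ := Real.pi - β with hφdef
  have hφmem : φ ∈ Set.Ioo (Real.pi / 2) Real.pi := ⟨by rw [hφdef]; linarith, by rw [hφdef]; linarith⟩
  -- the closed sector
  set S : Set ℂ := {z : ℂ | 0 ≤ (z + (α : ℂ)).re + ‖z + (α : ℂ)‖ * c} with hSdef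
  have hSclosed : IsClosed S := by
    apply isClosed_le continuous_const
    exact (Complex.continuous_re.comp (continuous_id.add continuous_const)).add
      ((continuous_norm.comp (continuous_id.add continuous_const)).mul continuous_const)
  -- points of the sector are away from the ball, hence in the resolvent set
  have hSdist : ∀ lam ∈ S, r < ‖lam + (ξ : ℂ)‖ := by
    intro lam hlam
    set w : ℂ := lam + (α : ℂ) with hwdef
    have hkey : lam + (ξ : ℂ) = w + (D : ℂ) := by rw [hwdef, hDdef]; push_cast; ring
    have hsq : r ^ 2 < ‖lam + (ξ : ℂ)‖ ^ 2 := by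
      rw [hkey, Complex.sq_norm, Complex.normSq_apply]
      have ha2 : ‖w‖ ^ 2 = w.re ^ 2 + w.im ^ 2 := by
        rw [Complex.sq_norm, Complex.normSq_apply]; ring
      have ha0 : 0 ≤ ‖w‖ := norm_nonneg w
      have hre : 0 ≤ w.re + ‖w‖ * c := hlam
      have him : (w + (D : ℂ)).re = w.re + D := by simp
      have him2 : (w + (D : ℂ)).im = w.im := by simp
      rw [him, him2]
      have hr2 : r ^ 2 < (D * t) ^ 2 := by nlinarith
      have h2D : 0 ≤ 2 * D * (w.re + ‖w‖ * c) :=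
        mul_nonneg (by linarith) hre
      have hDc : D ^ 2 * c ^ 2 = D ^ 2 * (1 - t ^ 2) := by rw [hc2]
      nlinarith [sq_nonneg (‖w‖ - D * c), h2D, hr2, ha2, hDc]
    have habs0 : 0 ≤ ‖lam + (ξ : ℂ)‖ := norm_nonneg _
    nlinarith
  have hSres : ∀ lam ∈ S, lam ∈ resolventSet ℂ A := by
    intro lam hlam
    by_contra h
    have : lam ∈ spectrum ℂ A := h
    exact absurd (hspec this) (not_le.mpr (hSdist lam hlam))
  -- continuity of the resolvent on the sector
  have hrescont : ContinuousOn (resolvent A) S := by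
    intro z hz
    have hz' := hSres z hz
    have hu : IsUnit (algebraMap ℂ (𝒳 →L[ℂ] 𝒳) z - A) := hz'
    have h1 : ContinuousAt Ring.inverse (algebraMap ℂ (𝒳 →L[ℂ] 𝒳) z - A) :=
      hu.unit_spec ▸ NormedRing.inverse_continuousAt hu.unit
    have h2 : Continuous fun z : ℂ => algebraMap ℂ (𝒳 →L[ℂ] 𝒳) z - A :=
      (continuous_algebraMap ℂ _).sub continuous_const
    exact ContinuousAt.continuousWithinAt (ContinuousAt.comp (x := z) h1 h2.continuousAt)
  -- the bound at infinity
  obtain ⟨C, hC, hbig⟩ := (spectrum.resolvent_isBigO_inv (𝕜 := ℂ) A).exists_pos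
  rw [Asymptotics.isBigOWith_iff, Filter.atTop_basis_Ioi.cobounded_of_norm.eventually_iff] at hbig
  obtain ⟨R₀, -, hR₀⟩ := hbig
  set R : ℝ := max R₀ 1 + 1 with hRdef
  have hR1 : 1 < R := by rw [hRdef]; have := le_max_right R₀ 1; linarith
  have hRR₀ : R₀ < R := by rw [hRdef]; have := le_max_left R₀ 1; linarith
  -- the bound on the compact part
  have hK : IsCompact (S ∩ Metric.closedBall (0 : ℂ) R) :=
    (isCompact_closedBall (0 : ℂ) R).inter_left hSclosed
  have hgcont : ContinuousOn (fun z : ℂ => ‖resolvent A z‖ * ‖z + (α : ℂ)‖)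
      (S ∩ Metric.closedBall (0 : ℂ) R) :=
    ((hrescont.mono Set.inter_subset_left).norm).mul
      ((continuous_norm.comp (continuous_id.add continuous_const)).continuousOn)
  obtain ⟨C₁, hC₁⟩ := hK.exists_bound_of_continuousOn hgcont
  -- the global bound on the sector
  set Ξ : ℝ := max C₁ (C * (1 + α)) + 1 with hΞdef
  have hΞpos : 0 < Ξ := by
    have h1 : 0 < C * (1 + α) := by positivity
    have := le_max_right C₁ (C * (1 + α))
    rw [hΞdef]; linarith
  have hbound : ∀ lam ∈ S, ‖resolvent A lam‖ * ‖lam + (α : ℂ)‖ ≤ Ξ := by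
    intro lam hlam
    rcases le_or_gt ‖lam‖ R with hle | hgt
    · have hmem : lam ∈ S ∩ Metric.closedBall (0 : ℂ) R := ⟨hlam, by simpa using hle⟩
      have := hC₁ lam hmem
      rw [Real.norm_eq_abs] at this
      have h2 := le_abs_self (‖resolvent A lam‖ * ‖lam + (α : ℂ)‖)
      have := le_trans h2 this
      have h3 := le_max_left C₁ (C * (1 + α))
      rw [hΞdef]; linarith
    · have hlamnorm : R₀ < ‖lam‖ := lt_trans hRR₀ hgt
      have h1 : ‖resolvent A lam‖ ≤ C * ‖lam⁻¹‖ := hR₀ (Set.mem_preimage.mpr (Set.mem_Ioi.mpr hlamnorm))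
      rw [norm_inv] at h1
      have hlampos : (0 : ℝ) < ‖lam‖ := lt_trans (by linarith) hgt
      have habsle : ‖lam + (α : ℂ)‖ ≤ ‖lam‖ + α := by
        calc ‖lam + (α : ℂ)‖ ≤ ‖lam‖ + ‖(α : ℂ)‖ :=
          norm_add_le lam (α : ℂ)
        _ = ‖lam‖ + α := by rw [Complex.norm_of_nonneg hα.le]
      have hres0 : 0 ≤ ‖resolvent A lam‖ := norm_nonneg _
      calc ‖resolvent A lam‖ * ‖lam + (α : ℂ)‖
          ≤ (C * ‖lam‖⁻¹) * (‖lam‖ + α) := by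
            apply mul_le_mul h1 habsle (norm_nonneg _)
            positivity
        _ ≤ (C * ‖lam‖⁻¹) * ((1 + α) * ‖lam‖) := by
            apply mul_le_mul_of_nonneg_left _ (by positivity)
            nlinarith
        _ = C * (1 + α) * (‖lam‖⁻¹ * ‖lam‖) := by ring
        _ = C * (1 + α) := by rw [inv_mul_cancel₀ (ne_of_gt hlampos), mul_one]
        _ ≤ Ξ := by rw [hΞdef]; have := le_max_right C₁ (C * (1 + α)); linarith
  refine ⟨φ, hφmem, Ξ, hΞpos, fun lam hne harg => ?_⟩
  -- lam lies in the sector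
  have hw : lam + (α : ℂ) ≠ 0 := by
    intro h
    apply hne
    have := eq_neg_of_add_eq_zero_left h
    simpa using this
  have hlamS : lam ∈ S := by
    have habspos : 0 < ‖lam + (α : ℂ)‖ := norm_pos_iff.mpr hw
    have h1 : Real.cos φ ≤ Real.cos |Complex.arg (lam + (α : ℂ))| :=
      Real.cos_le_cos_of_nonneg_of_le_pi (abs_nonneg _) hφmem.2.le harg.le
    rw [Real.cos_abs, Complex.cos_arg hw, hφdef, Real.cos_pi_sub] at h1
    have h2 : -c * ‖lam + (α : ℂ)‖ ≤ (lam + (α : ℂ)).re := by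
      rw [← hcdef] at h1
      exact (le_div_iff₀ habspos).mp h1
    show 0 ≤ (lam + (α : ℂ)).re + ‖lam + (α : ℂ)‖ * c
    nlinarith
  have hres : lam ∈ resolventSet ℂ A := hSres lam hlamS
  refine ⟨fun h => h hres, ?_⟩
  -- identify the operator with the resolvent
  have hop : (A - lam • (1 : 𝒳 →L[ℂ] 𝒳)) = -(algebraMap ℂ (𝒳 →L[ℂ] 𝒳) lam - A) := by
    rw [Algebra.algebraMap_eq_smul_one, neg_sub]
  have hnorm : ‖Ring.inverse (A - lam • (1 : 𝒳 →L[ℂ] 𝒳))‖ = ‖resolvent A lam‖ := by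
    rw [hop, ringInverse_neg', norm_neg, resolvent]
  rw [hnorm, le_div_iff₀ (norm_pos_iff.mpr hw)]
  exact hbound lam hlamS
end

section
/- For every real κ > 1, writing C(κ) = ∫₀¹ √(1 − ((2x − 1)/κ)²) dx, one has (1/κ) ∫₀¹ (2x − 1)² / √(κ² − (2x − 1)²) dx = C(κ) − √(κ² − 1)/κ; in particular (1/(κ C(κ))) ∫₀¹ (2x − 1)² / √(κ² − (2x − 1)²) dx = 1 − √(κ² − 1)/(κ C(κ)) < 1. -/
open MeasureTheory intervalIntegral Real

/-- For every real `κ > 1`, writing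
`C(κ) = ∫₀¹ √(1 − ((2x − 1)/κ)²) dx`, one has
`(1/κ) ∫₀¹ (2x − 1)² / √(κ² − (2x − 1)²) dx = C(κ) − √(κ² − 1)/κ`; in particular
`(1/(κ C(κ))) ∫₀¹ (2x − 1)² / √(κ² − (2x − 1)²) dx = 1 − √(κ² − 1)/(κ C(κ)) < 1`. -/
theorem stmt_17 (κ : ℝ) (hκ : 1 < κ) (C : ℝ)
    (hC : C = ∫ x in (0:ℝ)..1, Real.sqrt (1 - ((2*x - 1)/κ)^2)) :
    ((1/κ) * ∫ x in (0:ℝ)..1, (2*x - 1)^2 / Real.sqrt (κ^2 - (2*x - 1)^2)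
        = C - Real.sqrt (κ^2 - 1) / κ)
    ∧ ((1/(κ*C)) * ∫ x in (0:ℝ)..1, (2*x - 1)^2 / Real.sqrt (κ^2 - (2*x - 1)^2)
        = 1 - Real.sqrt (κ^2 - 1) / (κ*C))
    ∧ 1 - Real.sqrt (κ^2 - 1) / (κ*C) < 1 := by
  have hκ0 : 0 < κ := lt_trans one_pos hκ
  have hpos : ∀ x ∈ Set.uIcc (0:ℝ) 1, 0 < κ^2 - (2*x-1)^2 := by
    intro x hx
    rw [Set.uIcc_of_le zero_le_one] at hx
    nlinarith [hx.1, hx.2]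
  have hcont_s : Continuous (fun x : ℝ => Real.sqrt (κ^2 - (2*x-1)^2)) := by
    continuity
  have hcont_f : ContinuousOn (fun x : ℝ => (2*x-1)^2 / Real.sqrt (κ^2 - (2*x-1)^2))
      (Set.uIcc (0:ℝ) 1) := by
    apply ContinuousOn.div (by fun_prop) hcont_s.continuousOn
    intro x hx
    exact ne_of_gt (Real.sqrt_pos.mpr (hpos x hx))
  have hint_f : IntervalIntegrable (fun x : ℝ => (2*x-1)^2 / Real.sqrt (κ^2 - (2*x-1)^2))
      volume 0 1 := hcont_f.intervalIntegrable
  have hint_s : IntervalIntegrable (fun x : ℝ => Real.sqrt (κ^2 - (2*x-1)^2)) volume 0 1 :=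
    hcont_s.intervalIntegrable _ _
  have hderiv : ∀ x ∈ Set.uIcc (0:ℝ) 1,
      HasDerivAt (fun x : ℝ => (x - 1/2) * Real.sqrt (κ^2 - (2*x-1)^2))
        (Real.sqrt (κ^2 - (2*x-1)^2) - (2*x-1)^2 / Real.sqrt (κ^2 - (2*x-1)^2)) x := by
    intro x hx
    have h := hpos x hx
    have hs : 0 < Real.sqrt (κ^2 - (2*x-1)^2) := Real.sqrt_pos.mpr h
    have hinner : HasDerivAt (fun x : ℝ => κ^2 - (2*x-1)^2) (-4*(2*x-1)) x := by
      have h' := (((hasDerivAt_id x).const_mul 2).sub_const 1).pow 2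
      have h'' := (hasDerivAt_const x (κ^2)).sub h'
      refine h''.congr_deriv ?_
      simp only [id_eq]
      push_cast
      ring
    have hsq : HasDerivAt (fun x : ℝ => Real.sqrt (κ^2 - (2*x-1)^2))
        ((-4*(2*x-1)) / (2 * Real.sqrt (κ^2 - (2*x-1)^2))) x := by
      have h2 := (Real.hasDerivAt_sqrt (ne_of_gt h)).comp x hinner
      refine h2.congr_deriv ?_
      field_simp
    have hmul := ((hasDerivAt_id x).sub_const (1/2)).mul hsq
    refine hmul.congr_deriv ?_
    have hss := Real.sq_sqrt (le_of_lt h)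
    field_simp
    simp only [id_eq]
    nlinarith [hss, hs]
  have key := intervalIntegral.integral_eq_sub_of_hasDerivAt hderiv
    ((hint_s.sub hint_f))
  have h1 : ((1:ℝ) - 1/2) * Real.sqrt (κ^2 - (2*1-1)^2)
      - ((0:ℝ) - 1/2) * Real.sqrt (κ^2 - (2*0-1)^2) = Real.sqrt (κ^2 - 1) := by
    norm_num; ring
  rw [h1] at key
  rw [intervalIntegral.integral_sub hint_s hint_f] at key
  have hCeq : C = (∫ x in (0:ℝ)..1, Real.sqrt (κ^2 - (2*x-1)^2)) / κ := by
    rw [hC, ← intervalIntegral.integral_div]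
    apply intervalIntegral.integral_congr
    intro x hx
    show Real.sqrt (1 - ((2*x - 1)/κ)^2) = Real.sqrt (κ^2 - (2*x-1)^2) / κ
    have h2 : 1 - ((2*x - 1)/κ)^2 = (κ^2 - (2*x-1)^2) / κ^2 := by
      field_simp
    rw [h2, Real.sqrt_div (le_of_lt (hpos x hx)), Real.sqrt_sq (le_of_lt hκ0)]
  set I := ∫ x in (0:ℝ)..1, (2*x - 1)^2 / Real.sqrt (κ^2 - (2*x - 1)^2) with hI
  have hIeq : I = κ * C - Real.sqrt (κ^2 - 1) := by
    rw [hCeq]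
    field_simp
    linarith [key]
  have hInn : 0 ≤ I := by
    rw [hI]
    apply intervalIntegral.integral_nonneg zero_le_one
    intro x _
    positivity
  have hsqpos : 0 < Real.sqrt (κ^2 - 1) := Real.sqrt_pos.mpr (by nlinarith)
  have hCpos : 0 < C := by nlinarith
  refine ⟨by rw [hIeq]; field_simp, ?_, ?_⟩
  · rw [hIeq]
    field_simp
  · have : 0 < Real.sqrt (κ^2 - 1) / (κ*C) := by positivity
    linarith
end

section
/- For each n ≥ 1 define the empirical quantile function G_n(x) = U_{(j)}^n for x ∈ I_j^n, j = 1,…,n. Then almost surely sup_{x ∈ [0,1)} |G_n(x) − x| → 0 as n → ∞. -/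
open MeasureTheory ProbabilityTheory Filter

/-- The number of indices `i < n` with `U i ω ≤ q`. -/
noncomputable def cntLE {α : Type*} (U : ℕ → α → ℝ) (n : ℕ) (q : ℝ) (ω : α) : ℕ :=
  ((Finset.range n).filter (fun i => U i ω ≤ q)).card

lemma sorted_get_le_iff (q : ℝ) :
    ∀ (L : List ℝ), L.Pairwise (· ≤ ·) → ∀ (j : ℕ) (h : j < L.length),
      (L.get ⟨j, h⟩ ≤ q ↔ j < L.countP (fun x => decide (x ≤ q))) := by
  intro L
  induction L with
  | nil => intro _ j h; simp at h
  | cons a t ih =>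
    intro hs j h
    have hat : ∀ x ∈ t, a ≤ x := fun x hx => (List.pairwise_cons.1 hs).1 x hx
    have hst : t.Pairwise (· ≤ ·) := (List.pairwise_cons.1 hs).2
    cases j with
    | zero =>
      rw [show (a :: t).get ⟨0, h⟩ = a from rfl, List.countP_cons]
      constructor
      · intro haq; simp [haq]
      · intro hpos
        by_contra haq
        push_neg at haq
        have h0 : t.countP (fun x => decide (x ≤ q)) = 0 :=
          List.countP_eq_zero.2 (fun x hx => by
            simp only [decide_eq_true_eq]; push_neg; linarith [hat x hx])
        simp [h0, not_le.2 haq] at hpos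
    | succ j =>
      have h' : j < t.length := by simpa using h
      rw [show (a :: t).get ⟨j+1, h⟩ = t.get ⟨j, h'⟩ from rfl, List.countP_cons]
      by_cases haq : a ≤ q
      · simp only [haq, decide_eq_true_eq, if_pos]
        rw [ih hst j h']
        simp
      · have h0 : t.countP (fun x => decide (x ≤ q)) = 0 :=
          List.countP_eq_zero.2 (fun x hx => by
            simp only [decide_eq_true_eq]; push_neg; linarith [hat x hx])
        have hg : ¬ t.get ⟨j, h'⟩ ≤ q := by
          have := hat _ (t.get_mem ⟨j, h'⟩)
          push_neg at haq ⊢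
          linarith
        simp only [List.get_eq_getElem] at hg
        simp [haq, h0, hg]

lemma cnt_eq {α : Type*} (U : ℕ → α → ℝ) (n : ℕ) (ω : α) (q : ℝ) :
    (((Multiset.range n).map (fun i => U i ω)).sort (· ≤ ·)).countP
        (fun x => decide (x ≤ q)) = cntLE U n q ω := by
  have h1 : (((Multiset.range n).map (fun i => U i ω)).sort (· ≤ ·)).countP
      (fun x => decide (x ≤ q))
      = Multiset.countP (fun x => x ≤ q)
          (((Multiset.range n).map (fun i => U i ω)).sort (· ≤ ·) : Multiset ℝ) :=
    (Multiset.coe_countP _ _).symm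
  rw [h1, Multiset.sort_eq, Multiset.countP_map]
  rfl

lemma orderStat_le_iff {α : Type*} (U : ℕ → α → ℝ) (n : ℕ) (j : Fin n) (ω : α) (q : ℝ) :
    orderStat U n j ω ≤ q ↔ (j : ℕ) < cntLE U n q ω := by
  rw [orderStat, sorted_get_le_iff q _ (Multiset.pairwise_sort _ _) j (by simp), cnt_eq]

lemma orderStat_mem {α : Type*} (U : ℕ → α → ℝ) (n : ℕ) (j : Fin n) (ω : α)
    (hb : ∀ i, U i ω ∈ Set.Icc (0:ℝ) 1) : orderStat U n j ω ∈ Set.Icc (0:ℝ) 1 := by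
  have hmem : orderStat U n j ω ∈
      ((Multiset.range n).map (fun i => U i ω)).sort (· ≤ ·) := List.get_mem _ _
  rw [Multiset.mem_sort, Multiset.mem_map] at hmem
  obtain ⟨i, -, hi⟩ := hmem
  rw [← hi]; exact hb i

lemma cnt_tendsto {α : Type*} [MeasureSpace α] [IsProbabilityMeasure (ℙ : Measure α)]
    (U : ℕ → α → ℝ) (h_meas : ∀ i, Measurable (U i))
    (h_indep : iIndepFun U ℙ)
    (h_unif : ∀ i, Measure.map (U i) ℙ = volume.restrict (Set.Icc (0:ℝ) 1))
    (q : ℝ) (hq : q ∈ Set.Icc (0:ℝ) 1) :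
    ∀ᵐ ω ∂(ℙ : Measure α),
      Tendsto (fun n => (cntLE U n q ω : ℝ) / n) atTop (nhds q) := by
  set φ : ℝ → ℝ := fun x => if x ≤ q then 1 else 0 with hφdef
  have hφ : Measurable φ := Measurable.ite measurableSet_Iic measurable_const measurable_const
  set X : ℕ → α → ℝ := fun i ω => φ (U i ω) with hXdef
  have hX0 : X 0 = Set.indicator (U 0 ⁻¹' Set.Iic q) (fun _ => (1:ℝ)) := by
    ext ω
    classical
    rw [Set.indicator_apply]
    simp [hXdef, hφdef, Set.mem_preimage, Set.mem_Iic]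
  have hint : Integrable (X 0) ℙ := by
    rw [hX0]
    exact (integrable_const (1:ℝ)).indicator ((h_meas 0) measurableSet_Iic)
  have hindep : Pairwise (Function.onFun (IndepFun · · ℙ) X) := fun i j hij =>
    (h_indep.indepFun hij).comp hφ hφ
  have hident : ∀ i, IdentDistrib (X i) (X 0) ℙ ℙ := fun i =>
    IdentDistrib.comp
      ⟨(h_meas i).aemeasurable, (h_meas 0).aemeasurable, by rw [h_unif i, h_unif 0]⟩ hφ
  have hPq : (ℙ : Measure α) (U 0 ⁻¹' Set.Iic q) = ENNReal.ofReal q := by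
    rw [← Measure.map_apply (h_meas 0) measurableSet_Iic, h_unif 0,
      Measure.restrict_apply measurableSet_Iic]
    have hset : Set.Iic q ∩ Set.Icc (0:ℝ) 1 = Set.Icc 0 q := by
      ext x
      simp only [Set.mem_inter_iff, Set.mem_Iic, Set.mem_Icc]
      exact ⟨fun ⟨h1, h2, _⟩ => ⟨h2, h1⟩, fun ⟨h1, h2⟩ => ⟨h2, h1, h2.trans hq.2⟩⟩
    rw [hset, Real.volume_Icc, sub_zero]
  have hmean : (ℙ : Measure α)[X 0] = q := by
    rw [hX0, integral_indicator_const (1:ℝ) ((h_meas 0) measurableSet_Iic), measureReal_def, hPq,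
      ENNReal.toReal_ofReal hq.1, smul_eq_mul, mul_one]
  have hslln := strong_law_ae_real X hint hindep hident
  rw [hmean] at hslln
  filter_upwards [hslln] with ω hω
  have hsum : ∀ n : ℕ, (cntLE U n q ω : ℝ) = ∑ i ∈ Finset.range n, X i ω := by
    intro n
    rw [hXdef]
    simp only [hφdef]
    rw [Finset.sum_boole]
    rfl
  simpa only [hsum] using hω

/-- Let `(U_i)` be i.i.d. uniform on `[0,1]`. For each `n` define the
empirical quantile function `G_n(x) = U_{(j)}^n` for `x ∈ I_j^n = [(j−1)/n, j/n)`. Then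
almost surely `sup_{x ∈ [0,1)} |G_n(x) − x| → 0` as `n → ∞` (stated as uniform convergence:
for every `ε > 0` there is `N` such that for all `n ≥ N`, all `j` and all `x ∈ I_j^n`,
`|U_{(j)}^n − x| < ε`). -/
theorem stmt_18 {α : Type*} [MeasureSpace α] [IsProbabilityMeasure (ℙ : Measure α)]
    (U : ℕ → α → ℝ) (h_meas : ∀ i, Measurable (U i))
    (h_indep : iIndepFun U ℙ)
    (h_unif : ∀ i, Measure.map (U i) ℙ = volume.restrict (Set.Icc (0:ℝ) 1)) :
    ∀ᵐ ω ∂(ℙ : Measure α), ∀ ε > (0:ℝ), ∃ N : ℕ, ∀ n ≥ N, ∀ j : Fin n,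
      ∀ x ∈ Set.Ico ((j : ℝ) / n) (((j : ℕ) + 1 : ℝ) / n),
        |orderStat U n j ω - x| < ε := by
  have hmem : ∀ᵐ ω ∂(ℙ : Measure α), ∀ i, U i ω ∈ Set.Icc (0:ℝ) 1 := by
    rw [ae_all_iff]
    intro i
    have h0 : (ℙ : Measure α) (U i ⁻¹' (Set.Icc (0:ℝ) 1)ᶜ) = 0 := by
      rw [← Measure.map_apply (h_meas i) measurableSet_Icc.compl, h_unif i,
        Measure.restrict_apply measurableSet_Icc.compl]
      simp
    rw [ae_iff]
    exact h0
  have hconv : ∀ᵐ ω ∂(ℙ : Measure α), ∀ p : ℕ × ℕ, p.1 ≤ p.2 → p.2 ≠ 0 →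
      Tendsto (fun n => (cntLE U n ((p.1 : ℝ)/p.2) ω : ℝ) / n) atTop
        (nhds ((p.1 : ℝ)/p.2)) := by
    rw [ae_all_iff]
    intro p
    by_cases hp : p.1 ≤ p.2 ∧ p.2 ≠ 0
    · have hM0 : (0:ℝ) < p.2 := by
        have := hp.2; positivity
      have hq : (p.1 : ℝ)/p.2 ∈ Set.Icc (0:ℝ) 1 :=
        ⟨by positivity, (div_le_one hM0).2 (by exact_mod_cast hp.1)⟩
      filter_upwards [cnt_tendsto U h_meas h_indep h_unif _ hq] with ω h _ _
      exact h
    · filter_upwards with ω h1 h2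
      exact absurd ⟨h1, h2⟩ hp
  filter_upwards [hmem, hconv] with ω hb hc
  intro ε hε
  obtain ⟨m, hm⟩ := exists_nat_one_div_lt (show (0:ℝ) < ε/4 by linarith)
  set M : ℕ := m + 1 with hMdef
  have hM0 : (0:ℝ) < M := by positivity
  have hMε : (1:ℝ)/M < ε/4 := by exact_mod_cast hm
  have hev : ∀ᶠ n : ℕ in atTop,
      (∀ k ∈ Finset.range (M+1), |(cntLE U n ((k:ℝ)/M) ω : ℝ)/n - (k:ℝ)/M| < ε/4)
      ∧ 4 ≤ (n:ℝ) * ε := by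
    refine Filter.Eventually.and ?_ ?_
    · rw [eventually_all_finset]
      intro k hk
      have hkM : k ≤ M := Nat.lt_succ_iff.1 (Finset.mem_range.1 hk)
      have := hc (k, M) hkM (by simp [hMdef])
      have h2 := Metric.tendsto_atTop.1 this (ε/4) (by linarith)
      obtain ⟨N, hN⟩ := h2
      rw [eventually_atTop]
      exact ⟨N, fun n hn => by simpa [Real.dist_eq] using hN n hn⟩
    · rw [eventually_atTop]
      refine ⟨⌈4/ε⌉₊, fun n hn => ?_⟩
      have h1 : (4:ℝ)/ε ≤ n := le_trans (Nat.le_ceil _) (by exact_mod_cast hn)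
      calc (4:ℝ) = (4/ε) * ε := by field_simp
      _ ≤ n * ε := by nlinarith
  obtain ⟨N, hN⟩ := eventually_atTop.1 hev
  refine ⟨N, fun n hn j x hx => ?_⟩
  obtain ⟨hgrid, hnε⟩ := hN n hn
  have hn0 : (0:ℝ) < n := by exact_mod_cast j.pos
  have hj1n : ((j:ℕ):ℝ) + 1 ≤ n := by exact_mod_cast j.isLt
  obtain ⟨hx1, hx2⟩ := hx
  obtain ⟨hO0, hO1⟩ := orderStat_mem U n j ω hb
  -- upper bound
  have hup : orderStat U n j ω < ((j:ℕ):ℝ)/n + ε := by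
    by_cases h1 : ((j:ℕ):ℝ)/n + ε ≤ 1
    · set c : ℝ := ((j:ℕ):ℝ)/n + ε/2 with hcdef
      have hc0 : 0 ≤ c := by positivity
      have hc1 : c ≤ 1 := by rw [hcdef]; linarith
      have hcm : c * M ≤ M := by
        calc c * M ≤ 1 * M := mul_le_mul_of_nonneg_right hc1 hM0.le
        _ = M := one_mul _
      set k : ℕ := ⌈c * M⌉₊ with hkdef
      have hkM : k ≤ M := Nat.ceil_le.2 hcm
      have hq1 : c ≤ (k:ℝ)/M := (le_div_iff₀ hM0).2 (Nat.le_ceil _)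
      have hq2 : (k:ℝ)/M < c + 1/M := by
        rw [div_lt_iff₀ hM0]
        have h9 : (c + 1/M) * M = c*M + 1 := by field_simp
        rw [h9]
        exact Nat.ceil_lt_add_one (by positivity)
      have hg := hgrid k (Finset.mem_range.2 (Nat.lt_succ_of_le hkM))
      have habs := abs_lt.1 hg
      have h5 : ((j:ℕ):ℝ)/n + ε/4 < (cntLE U n ((k:ℝ)/M) ω : ℝ)/n := by linarith
      have h6 : (((j:ℕ):ℝ)/n + ε/4) * n < cntLE U n ((k:ℝ)/M) ω :=
        (lt_div_iff₀ hn0).1 h5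
      have h7 : (((j:ℕ):ℝ)/n + ε/4) * n = ((j:ℕ):ℝ) + ε*n/4 := by
        field_simp
      have h8 : ((j:ℕ):ℝ) + 1 ≤ (cntLE U n ((k:ℝ)/M) ω : ℝ) := by
        rw [h7] at h6; linarith
      have h9 : (j:ℕ) < cntLE U n ((k:ℝ)/M) ω := by exact_mod_cast
        (by linarith : ((j:ℕ):ℝ) < (cntLE U n ((k:ℝ)/M) ω : ℝ))
      have hle := (orderStat_le_iff U n j ω _).2 h9
      calc orderStat U n j ω ≤ (k:ℝ)/M := hle
      _ < c + 1/M := hq2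
      _ < ((j:ℕ):ℝ)/n + ε := by rw [hcdef]; linarith
    · push_neg at h1
      linarith
  -- lower bound
  have hlow : (((j:ℕ):ℝ) + 1)/n ≤ orderStat U n j ω + ε := by
    by_cases h2 : ε < (((j:ℕ):ℝ) + 1)/n
    · set c : ℝ := (((j:ℕ):ℝ) + 1)/n - ε/2 with hcdef
      have hc0 : 0 ≤ c := by rw [hcdef]; linarith
      have hcle1 : c ≤ 1 := by
        have : (((j:ℕ):ℝ) + 1)/n ≤ 1 := (div_le_one hn0).2 hj1n
        rw [hcdef]; linarith
      have hcm : c * M ≤ M := by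
        calc c * M ≤ 1 * M := mul_le_mul_of_nonneg_right hcle1 hM0.le
        _ = M := one_mul _
      set k : ℕ := ⌊c * M⌋₊ with hkdef
      have hfl : (k:ℝ) ≤ c * M := Nat.floor_le (by positivity)
      have hkM : k ≤ M := by exact_mod_cast le_trans hfl hcm
      have hq1 : (k:ℝ)/M ≤ c := (div_le_iff₀ hM0).2 hfl
      have hq2 : c - 1/M < (k:ℝ)/M := by
        rw [lt_div_iff₀ hM0]
        have h9 : (c - 1/M) * M = c*M - 1 := by field_simp
        rw [h9]
        linarith [Nat.lt_floor_add_one (c*M)]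
      have hg := hgrid k (Finset.mem_range.2 (Nat.lt_succ_of_le hkM))
      have habs := abs_lt.1 hg
      have h5 : (cntLE U n ((k:ℝ)/M) ω : ℝ)/n < (((j:ℕ):ℝ) + 1)/n - ε/4 := by
        rw [hcdef] at hq1; linarith
      have h6 : (cntLE U n ((k:ℝ)/M) ω : ℝ) < ((((j:ℕ):ℝ) + 1)/n - ε/4) * n :=
        (div_lt_iff₀ hn0).1 h5
      have h7 : ((((j:ℕ):ℝ) + 1)/n - ε/4) * n = ((j:ℕ):ℝ) + 1 - ε*n/4 := by
        field_simp
      have h8 : (cntLE U n ((k:ℝ)/M) ω : ℝ) < ((j:ℕ):ℝ) := by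
        rw [h7] at h6; linarith
      have h9 : ¬ ((j:ℕ) < cntLE U n ((k:ℝ)/M) ω) := by
        intro hcon
        have : ((j:ℕ):ℝ) < (cntLE U n ((k:ℝ)/M) ω : ℝ) := by exact_mod_cast hcon
        linarith
      have h10 : ¬ orderStat U n j ω ≤ (k:ℝ)/M :=
        fun hcon => h9 ((orderStat_le_iff U n j ω _).1 hcon)
      push_neg at h10
      rw [hcdef] at hq2
      linarith
    · push_neg at h2
      linarith
  rw [abs_lt]
  constructor
  · linarith
  · linarith
end
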